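/- arXiv:2110.07397 — 7 statements merged into one kernel-verified Lean document; each statement's English description precedes it below -/
import Mathlib

section
/- Let R be a polynomial ring over ℂ in finitely or countably many variables, let A ⊂ R be a subalgebra homogeneous with respect to an ℕ₀^l-grading grad on R (all variables grad-homogeneous) with finite-dimensional graded components. Then for any monomial order < on R, the subalgebras A and in_<(A) have the same multivariate Hilbert series with respect to grad, i.e. for every multidegree d ∈ ℕ₀^l the graded components A_d and (in_<(A))_d have equal dimension. -/
open scoped Classical

noncomputable section

open MvPolynomial

/-- The initial (leading) term of `f` with respect to the strict monomial order `lt`: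
the term of `f` whose monomial is `lt`-maximal in the support (or `0` if none exists). -/
def initTerm {σ : Type*} (lt : (σ →₀ ℕ) → (σ →₀ ℕ) → Prop)
    (f : MvPolynomial σ ℂ) : MvPolynomial σ ℂ :=
  if h : ∃ m, m ∈ f.support ∧ ∀ m' ∈ f.support, m' ≠ m → lt m' m
  then monomial h.choose (coeff h.choose f)
  else 0

/-- The initial subalgebra of `A` (as a ℂ-submodule): the span of the
initial terms of elements of `A`. -/
def initSpan {σ : Type*} (lt : (σ →₀ ℕ) → (σ →₀ ℕ) → Prop)
    (A : Subalgebra ℂ (MvPolynomial σ ℂ)) : Submodule ℂ (MvPolynomial σ ℂ) :=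
  Submodule.span ℂ (initTerm lt '' (A : Set (MvPolynomial σ ℂ)))

/-- The degree reverse lexicographic order on monomials, where the variables are
enumerated according to `rank`: `a < b` iff `deg a < deg b`, or the degrees agree and
at the last (highest-rank) variable where `a` and `b` differ, `a` has the larger exponent. -/
def degRevLex {σ : Type*} (rank : σ → ℕ) (a b : σ →₀ ℕ) : Prop :=
  (a.sum fun _ e => e) < (b.sum fun _ e => e) ∨
    ((a.sum fun _ e => e) = (b.sum fun _ e => e) ∧
      ∃ i, b i < a i ∧ ∀ j, rank i < rank j → a j = b j)
/-- The `grad`-weight of a monomial, where `grad` assigns to each variable a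
multidegree in `ℕ^l`. -/
def gradWt {σ : Type*} {l : ℕ} (grad : σ → (Fin l →₀ ℕ)) (m : σ →₀ ℕ) : Fin l →₀ ℕ :=
  m.sum fun i e => e • grad i

/-- The `grad`-homogeneous component of multidegree `d` of a polynomial. -/
def gradComp {σ : Type*} {l : ℕ} (grad : σ → (Fin l →₀ ℕ)) (d : Fin l →₀ ℕ)
    (f : MvPolynomial σ ℂ) : MvPolynomial σ ℂ :=
  ∑ m ∈ f.support, if gradWt grad m = d then monomial m (coeff m f) else 0

/-- The submodule of `grad`-homogeneous polynomials of multidegree `d`. -/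
def homogSub {σ : Type*} {l : ℕ} (grad : σ → (Fin l →₀ ℕ)) (d : Fin l →₀ ℕ) :
    Submodule ℂ (MvPolynomial σ ℂ) where
  carrier := {f | ∀ m ∈ f.support, gradWt grad m = d}
  add_mem' := by
    intro a b ha hb m hm
    rcases Finset.mem_union.mp (MvPolynomial.support_add hm) with h | h
    · exact ha m h
    · exact hb m h
  zero_mem' := by
    intro m hm
    simp at hm
  smul_mem' := by
    intro c f hf m hm
    exact hf m (MvPolynomial.support_smul hm)

section Aux

lemma exists_lt_max {α : Type*} (lt : α → α → Prop)
    (hTrans : ∀ a b c, lt a b → lt b c → lt a c)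
    (hTotal : ∀ a b, a = b ∨ lt a b ∨ lt b a)
    (s : Finset α) : s.Nonempty → ∃ m ∈ s, ∀ m' ∈ s, m' ≠ m → lt m' m := by
  classical
  induction s using Finset.induction_on with
  | empty => intro h; simp at h
  | @insert a s ha ih =>
    intro _
    rcases s.eq_empty_or_nonempty with rfl | hs'
    · exact ⟨a, by simp, by simp⟩
    · obtain ⟨m, hm, hmax⟩ := ih hs'
      rcases hTotal a m with h | h | h
      · subst h
        refine ⟨a, Finset.mem_insert_self _ _, fun m' hm' hne => ?_⟩
        rcases Finset.mem_insert.mp hm' with rfl | h'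
        · exact absurd rfl hne
        · exact hmax m' h' hne
      · refine ⟨m, Finset.mem_insert_of_mem hm, fun m' hm' hne => ?_⟩
        rcases Finset.mem_insert.mp hm' with rfl | h'
        · exact h
        · exact hmax m' h' hne
      · refine ⟨a, Finset.mem_insert_self _ _, fun m' hm' hne => ?_⟩
        rcases Finset.mem_insert.mp hm' with rfl | h'
        · exact absurd rfl hne
        · by_cases hm'm : m' = m
          · subst hm'm; exact h
          · exact hTrans _ _ _ (hmax m' h' hm'm) h

lemma lt_max_unique {α : Type*} (lt : α → α → Prop)
    (hIrr : ∀ a, ¬ lt a a)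
    (hTrans : ∀ a b c, lt a b → lt b c → lt a c)
    {s : Finset α} {m₁ m₂ : α}
    (h₁ : m₁ ∈ s) (hmax₁ : ∀ m' ∈ s, m' ≠ m₁ → lt m' m₁)
    (h₂ : m₂ ∈ s) (hmax₂ : ∀ m' ∈ s, m' ≠ m₂ → lt m' m₂) : m₁ = m₂ := by
  by_contra hne
  exact hIrr m₁ (hTrans _ _ _ (hmax₂ m₁ h₁ hne) (hmax₁ m₂ h₂ (Ne.symm hne)))

lemma initTerm_zero {σ : Type*} (lt : (σ →₀ ℕ) → (σ →₀ ℕ) → Prop) :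
    initTerm lt (0 : MvPolynomial σ ℂ) = 0 := by
  rw [initTerm, dif_neg]
  rintro ⟨m, hm, -⟩
  simp at hm

lemma initTerm_eq_of_max {σ : Type*} (lt : (σ →₀ ℕ) → (σ →₀ ℕ) → Prop)
    (hIrr : ∀ a, ¬ lt a a)
    (hTrans : ∀ a b c, lt a b → lt b c → lt a c)
    {f : MvPolynomial σ ℂ} {m : σ →₀ ℕ}
    (hm : m ∈ f.support) (hmax : ∀ m' ∈ f.support, m' ≠ m → lt m' m) :
    initTerm lt f = MvPolynomial.monomial m (MvPolynomial.coeff m f) := by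
  have h : ∃ m, m ∈ f.support ∧ ∀ m' ∈ f.support, m' ≠ m → lt m' m := ⟨m, hm, hmax⟩
  rw [initTerm, dif_pos h]
  obtain ⟨hc, hcm⟩ := h.choose_spec
  rw [lt_max_unique lt hIrr hTrans hc hcm hm hmax]

lemma coeff_gradComp {σ : Type*} {l : ℕ} (grad : σ → (Fin l →₀ ℕ)) (d : Fin l →₀ ℕ)
    (f : MvPolynomial σ ℂ) (m : σ →₀ ℕ) :
    MvPolynomial.coeff m (gradComp grad d f) =
      if gradWt grad m = d then MvPolynomial.coeff m f else 0 := by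
  classical
  rw [gradComp, MvPolynomial.coeff_sum]
  have h : ∀ m' ∈ f.support,
      MvPolynomial.coeff m
        (if gradWt grad m' = d then MvPolynomial.monomial m' (MvPolynomial.coeff m' f) else 0)
      = if m' = m then (if gradWt grad m = d then MvPolynomial.coeff m f else 0) else 0 := by
    intro m' _
    rcases eq_or_ne m' m with rfl | hne
    · simp [apply_ite (MvPolynomial.coeff m'), MvPolynomial.coeff_monomial]
    · simp [apply_ite (MvPolynomial.coeff m), MvPolynomial.coeff_monomial, hne]
  rw [Finset.sum_congr rfl h, Finset.sum_ite_eq' f.support m]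
  by_cases h1 : m ∈ f.support
  · rw [if_pos h1]
  · rw [if_neg h1, MvPolynomial.notMem_support_iff.mp h1]
    simp

lemma mem_support_gradComp {σ : Type*} {l : ℕ} (grad : σ → (Fin l →₀ ℕ)) (d : Fin l →₀ ℕ)
    (f : MvPolynomial σ ℂ) (m : σ →₀ ℕ) :
    m ∈ (gradComp grad d f).support ↔ m ∈ f.support ∧ gradWt grad m = d := by
  classical
  rw [MvPolynomial.mem_support_iff, coeff_gradComp, MvPolynomial.mem_support_iff]
  split_ifs with h <;> simp [h]

lemma mem_homogSub {σ : Type*} {l : ℕ} {grad : σ → (Fin l →₀ ℕ)} {d : Fin l →₀ ℕ}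
    {f : MvPolynomial σ ℂ} :
    f ∈ homogSub grad d ↔ ∀ m ∈ f.support, gradWt grad m = d := Iff.rfl

end Aux
/-- For a graded subalgebra `A` with finite-dimensional graded
components and any monomial order, `A` and its initial subalgebra have the same
multivariate Hilbert series, i.e. graded components of equal multidegree have
equal dimension. -/
theorem statement1 {σ : Type*} [Countable σ] {l : ℕ}
    (lt : (σ →₀ ℕ) → (σ →₀ ℕ) → Prop)
    (hIrr : ∀ a, ¬ lt a a)
    (hTrans : ∀ a b c, lt a b → lt b c → lt a c)
    (hTotal : ∀ a b, a = b ∨ lt a b ∨ lt b a)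
    (hCompat : ∀ a b (i : σ), lt a b →
      lt (a + Finsupp.single i 1) (b + Finsupp.single i 1))
    (grad : σ → (Fin l →₀ ℕ))
    (A : Subalgebra ℂ (MvPolynomial σ ℂ))
    (hAhomog : ∀ f ∈ A, ∀ d, gradComp grad d f ∈ A)
    (hAfin : ∀ d, Module.Finite ℂ ↥(Subalgebra.toSubmodule A ⊓ homogSub grad d)) :
    ∀ d : Fin l →₀ ℕ,
      Module.rank ℂ ↥(Subalgebra.toSubmodule A ⊓ homogSub grad d) =
        Module.rank ℂ ↥(initSpan lt A ⊓ homogSub grad d) := by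
  classical
  intro d
  set V : Submodule ℂ (MvPolynomial σ ℂ) := Subalgebra.toSubmodule A ⊓ homogSub grad d with hVdef
  haveI : Module.Finite ℂ V := hAfin d
  -- the set of leading monomials of nonzero elements of the degree-d part of A
  set M : Set (σ →₀ ℕ) :=
    {m | ∃ f, f ∈ V ∧ m ∈ f.support ∧ ∀ m' ∈ f.support, m' ≠ m → lt m' m} with hMdef
  -- each leading monomial of a polynomial in A is the leading monomial of a homogeneous one
  have key : ∀ f ∈ A, ∀ m ∈ f.support, (∀ m' ∈ f.support, m' ≠ m → lt m' m) →
      ∃ g : MvPolynomial σ ℂ, g ∈ A ∧ g ∈ homogSub grad (gradWt grad m) ∧ m ∈ g.support ∧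
        ∀ m' ∈ g.support, m' ≠ m → lt m' m := by
    intro f hf m hm hmax
    refine ⟨gradComp grad (gradWt grad m) f, hAhomog f hf _, ?_, ?_, ?_⟩
    · intro m' hm'
      exact ((mem_support_gradComp grad _ f m').mp hm').2
    · exact (mem_support_gradComp grad _ f m).mpr ⟨hm, rfl⟩
    · intro m' hm' hne
      exact hmax m' ((mem_support_gradComp grad _ f m').mp hm').1 hne
  -- the degree-d part of the initial span is spanned by the monomials in M
  have hW : initSpan lt A ⊓ homogSub grad d
      = Submodule.span ℂ ((fun m => MvPolynomial.monomial m (1 : ℂ)) '' M) := by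
    apply le_antisymm
    · -- every element of the initial span has support consisting of leading monomials
      intro p hp
      obtain ⟨hp1, hp2⟩ := Submodule.mem_inf.mp hp
      have hsupp : ∀ m ∈ p.support, ∃ g : MvPolynomial σ ℂ, g ∈ A ∧
          g ∈ homogSub grad (gradWt grad m) ∧ m ∈ g.support ∧
          ∀ m' ∈ g.support, m' ≠ m → lt m' m := by
        refine Submodule.span_induction ?_ ?_ ?_ ?_ hp1
        · rintro x ⟨f, hfA, rfl⟩ m hm
          by_cases hf0 : f = 0
          · rw [hf0, initTerm_zero] at hm
            simp at hm
          · have hne : f.support.Nonempty :=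
              Finset.nonempty_iff_ne_empty.mpr
                (fun h => hf0 (MvPolynomial.support_eq_empty.mp h))
            obtain ⟨m₀, hm₀, hmax₀⟩ := exists_lt_max lt hTrans hTotal f.support hne
            rw [initTerm_eq_of_max lt hIrr hTrans hm₀ hmax₀] at hm
            have hmm : m = m₀ := by
              have := MvPolynomial.support_monomial_subset hm
              simpa using this
            subst hmm
            exact key f hfA m hm₀ hmax₀
        · intro m hm; simp at hm
        · intro x y hx hy ihx ihy m hm
          rcases Finset.mem_union.mp (MvPolynomial.support_add hm) with h | h
          · exact ihx m h
          · exact ihy m h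
        · intro c x hx ihx m hm
          exact ihx m (MvPolynomial.support_smul hm)
      have hsuppM : ∀ m ∈ p.support, m ∈ M := by
        intro m hm
        obtain ⟨g, hgA, hgH, hgm, hgmax⟩ := hsupp m hm
        have hd : gradWt grad m = d := hp2 m hm
        rw [hd] at hgH
        exact ⟨g, Submodule.mem_inf.mpr ⟨hgA, hgH⟩, hgm, hgmax⟩
      -- p is a linear combination of the monomials in its support
      rw [MvPolynomial.as_sum p]
      refine Submodule.sum_mem _ ?_
      intro m hm
      have h1 : MvPolynomial.monomial m (1 : ℂ) ∈
          Submodule.span ℂ ((fun m => MvPolynomial.monomial m (1 : ℂ)) '' M) :=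
        Submodule.subset_span ⟨m, hsuppM m hm, rfl⟩
      have h2 : MvPolynomial.monomial m (MvPolynomial.coeff m p)
          = (MvPolynomial.coeff m p) • MvPolynomial.monomial m (1 : ℂ) := by
        rw [MvPolynomial.smul_monomial, smul_eq_mul, mul_one]
      rw [h2]
      exact Submodule.smul_mem _ _ h1
    · -- conversely every such monomial lies in the degree-d part of the initial span
      rw [Submodule.span_le]
      rintro x ⟨m, hmM, rfl⟩
      obtain ⟨f, hfV, hmf, hmax⟩ := hmM
      obtain ⟨hfA, hfH⟩ := Submodule.mem_inf.mp hfV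
      have hc : MvPolynomial.coeff m f ≠ 0 := MvPolynomial.mem_support_iff.mp hmf
      have hinit : initTerm lt f = MvPolynomial.monomial m (MvPolynomial.coeff m f) :=
        initTerm_eq_of_max lt hIrr hTrans hmf hmax
      refine Submodule.mem_inf.mpr ⟨?_, ?_⟩
      · show MvPolynomial.monomial m (1 : ℂ) ∈ initSpan lt A
        have h1 : initTerm lt f ∈ initSpan lt A :=
          Submodule.subset_span ⟨f, hfA, rfl⟩
        have h2 : MvPolynomial.monomial m (1 : ℂ)
            = (MvPolynomial.coeff m f)⁻¹ • initTerm lt f := by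
          rw [hinit, MvPolynomial.smul_monomial, smul_eq_mul, inv_mul_cancel₀ hc]
        rw [h2]
        exact Submodule.smul_mem _ _ h1
      · intro m' hm'
        have hmm : m' = m := by
          have := MvPolynomial.support_monomial_subset hm'
          simpa using this
        rw [hmm]
        exact hfH m hmf
  -- the monomial family indexed by M is linearly independent
  have li_mono : LinearIndependent ℂ (fun m : M => MvPolynomial.monomial (m : σ →₀ ℕ) (1 : ℂ)) := by
    have h := (MvPolynomial.basisMonomials σ ℂ).linearIndependent.comp
      ((↑) : M → (σ →₀ ℕ)) Subtype.val_injective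
    have he : (⇑(MvPolynomial.basisMonomials σ ℂ) ∘ ((↑) : M → (σ →₀ ℕ)))
        = fun m : M => MvPolynomial.monomial (m : σ →₀ ℕ) (1 : ℂ) := by
      funext m
      simp [MvPolynomial.coe_basisMonomials]
    rwa [he] at h
  -- rank of the degree-d part of the initial span equals #M
  have hrankW : Module.rank ℂ ↥(initSpan lt A ⊓ homogSub grad d) = Cardinal.mk M := by
    rw [hW, Set.image_eq_range]
    rw [rank_span li_mono]
    exact Cardinal.mk_range_eq _ li_mono.injective
  -- choose a witness polynomial for each leading monomial
  have Fex : ∀ m : M, ∃ f : MvPolynomial σ ℂ, f ∈ V ∧ (m : σ →₀ ℕ) ∈ f.support ∧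
      ∀ m' ∈ f.support, m' ≠ (m : σ →₀ ℕ) → lt m' (m : σ →₀ ℕ) := fun m => m.2
  choose F hFV hFsupp hFmax using Fex
  -- the chosen family is linearly independent
  have li_F : LinearIndependent ℂ F := by
    rw [linearIndependent_iff']
    intro s g hsum i hi
    by_contra hgi
    have hne : (s.filter fun j => g j ≠ 0).Nonempty := ⟨i, Finset.mem_filter.mpr ⟨hi, hgi⟩⟩
    obtain ⟨m₀, hm₀, hmax₀⟩ := exists_lt_max lt hTrans hTotal
      ((s.filter fun j => g j ≠ 0).image ((↑) : M → (σ →₀ ℕ))) (hne.image _)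
    obtain ⟨i₀, hi₀t, hi₀⟩ := Finset.mem_image.mp hm₀
    have hgi₀ : g i₀ ≠ 0 := (Finset.mem_filter.mp hi₀t).2
    have hi₀s : i₀ ∈ s := (Finset.mem_filter.mp hi₀t).1
    have hc : MvPolynomial.coeff m₀ (∑ j ∈ s, g j • F j)
        = g i₀ * MvPolynomial.coeff m₀ (F i₀) := by
      rw [MvPolynomial.coeff_sum]
      rw [Finset.sum_eq_single i₀]
      · rw [MvPolynomial.coeff_smul, smul_eq_mul]
      · intro j hj hne'
        rw [MvPolynomial.coeff_smul, smul_eq_mul]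
        rcases eq_or_ne (g j) 0 with h0 | h0
        · rw [h0, zero_mul]
        · have hjt : j ∈ s.filter fun j => g j ≠ 0 := Finset.mem_filter.mpr ⟨hj, h0⟩
          have hjm₀ : (j : σ →₀ ℕ) ≠ m₀ := by
            intro h
            exact hne' (Subtype.val_injective (h.trans hi₀.symm))
          have hlt : lt (j : σ →₀ ℕ) m₀ :=
            hmax₀ _ (Finset.mem_image_of_mem _ hjt) hjm₀
          have : MvPolynomial.coeff m₀ (F j) = 0 := by
            by_contra hcc
            have hm₀supp : m₀ ∈ (F j).support := MvPolynomial.mem_support_iff.mpr hcc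
            exact hIrr m₀ (hTrans _ _ _ (hFmax j m₀ hm₀supp (fun h => hjm₀ h.symm)) hlt)
          rw [this, mul_zero]
      · intro h; exact absurd hi₀s h
    have hcoeff₀ : MvPolynomial.coeff m₀ (F i₀) ≠ 0 := by
      rw [← hi₀]
      exact MvPolynomial.mem_support_iff.mp (hFsupp i₀)
    rw [hsum] at hc
    simp only [MvPolynomial.coeff_zero] at hc
    exact hgi₀ (by
      rcases mul_eq_zero.mp hc.symm with h | h
      · exact h
      · exact absurd h hcoeff₀)
  -- the witnesses live in V, so #M ≤ rank V
  have li_F' : LinearIndependent ℂ (fun m : M => (⟨F m, hFV m⟩ : V)) := by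
    apply LinearIndependent.of_comp V.subtype
    convert li_F
    rfl
  have hle1 : Cardinal.mk M ≤ Module.rank ℂ V := by
    simpa using li_F'.cardinal_lift_le_rank
  -- M is finite
  have hMfin : Finite M := by
    rw [← Cardinal.lt_aleph0_iff_finite]
    exact lt_of_le_of_lt hle1 (Module.rank_lt_aleph0 ℂ V)
  haveI := hMfin
  haveI : Fintype M := Fintype.ofFinite _
  -- the coefficient map V → (M → ℂ) is injective, so rank V ≤ #M
  let φ : V →ₗ[ℂ] (M → ℂ) :=
    { toFun := fun f m => MvPolynomial.coeff (m : σ →₀ ℕ) (f : MvPolynomial σ ℂ)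
      map_add' := by intro f g; funext m; simp
      map_smul' := by intro c f; funext m; simp }
  have hφinj : Function.Injective φ := by
    rw [← LinearMap.ker_eq_bot]
    rw [LinearMap.ker_eq_bot']
    intro f hf
    by_contra hf0
    have hfne : (f : MvPolynomial σ ℂ) ≠ 0 := by
      intro h
      exact hf0 (Subtype.ext h)
    have hne : (f : MvPolynomial σ ℂ).support.Nonempty :=
      Finset.nonempty_iff_ne_empty.mpr
        (fun h => hfne (MvPolynomial.support_eq_empty.mp h))
    obtain ⟨m, hm, hmax⟩ := exists_lt_max lt hTrans hTotal _ hne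
    have hmM : m ∈ M := ⟨f, f.2, hm, hmax⟩
    have : MvPolynomial.coeff m (f : MvPolynomial σ ℂ) = 0 := congrFun hf ⟨m, hmM⟩
    exact MvPolynomial.mem_support_iff.mp hm this
  have hle2 : Module.rank ℂ V ≤ Cardinal.mk M := by
    have h := LinearMap.rank_le_of_injective φ hφinj
    rw [rank_fun'] at h
    rwa [Cardinal.mk_fintype]
  have hrankV : Module.rank ℂ V = Cardinal.mk M := le_antisymm hle2 hle1
  rw [hrankV, hrankW]
end
end

section
/- Let R = ℂ[x₁, x₂, …] and let < be the degree reverse lexicographic monomial order with respect to the enumeration x₁, x₂, … of the variables. Suppose the subalgebra A ⊂ R is homogeneous with respect to total degree and has a sagbi basis {s₁, s₂, …} with respect to < such that every s_j has total degree at most a fixed integer M. Then there exists a sequence λ = (λ₁, λ₂, …) of real numbers (one for each variable) such that in_λ(A) = in_<(A). -/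
open scoped Classical

noncomputable section

open MvPolynomial

/-- The total-degree-`d` homogeneous component of a polynomial. -/
def totComp (d : ℕ) (f : MvPolynomial ℕ ℂ) : MvPolynomial ℕ ℂ :=
  ∑ m ∈ f.support, if (m.sum fun _ e => e) = d then monomial m (coeff m f) else 0

/-- The `λ`-weight of a monomial: the sum of the weights of its variables
(with multiplicity). -/
def lamWt (lam : ℕ → ℝ) (m : ℕ →₀ ℕ) : ℝ := m.sum fun i e => (e : ℝ) * lam i

/-- The initial part of `f` with respect to the weights `λ`: the sum of the terms of
`f` of maximal `λ`-weight. -/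
def lamInit (lam : ℕ → ℝ) (f : MvPolynomial ℕ ℂ) : MvPolynomial ℕ ℂ :=
  ∑ m ∈ f.support, if (∀ m' ∈ f.support, lamWt lam m' ≤ lamWt lam m)
    then monomial m (coeff m f) else 0

/-- The initial subalgebra of `A` with respect to the weights `λ` (as a
ℂ-submodule): the span of the `λ`-initial parts of elements of `A`. -/
def lamSpan (lam : ℕ → ℝ) (A : Subalgebra ℂ (MvPolynomial ℕ ℂ)) :
    Submodule ℂ (MvPolynomial ℕ ℂ) :=
  Submodule.span ℂ (lamInit lam '' (A : Set (MvPolynomial ℕ ℂ)))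

namespace S2

abbrev Rng := MvPolynomial ℕ ℂ

def mdeg (m : ℕ →₀ ℕ) : ℕ := m.sum fun _ e => e

lemma mdeg_add (a b : ℕ →₀ ℕ) : mdeg (a + b) = mdeg a + mdeg b :=
  Finsupp.sum_add_index' (fun _ => rfl) (fun _ _ _ => rfl)

lemma mdeg_eq_sum (m : ℕ →₀ ℕ) : mdeg m = ∑ i ∈ m.support, m i := rfl

lemma apply_le_mdeg (m : ℕ →₀ ℕ) (i : ℕ) : m i ≤ mdeg m := by
  by_cases h : i ∈ m.support
  · exact mdeg_eq_sum m ▸ Finset.single_le_sum (fun _ _ => Nat.zero_le _) h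
  · simp [Finsupp.notMem_support_iff.1 h]

lemma dlt_def (a b : ℕ →₀ ℕ) : degRevLex (id : ℕ → ℕ) a b ↔
    (mdeg a < mdeg b ∨ (mdeg a = mdeg b ∧ ∃ i, b i < a i ∧ ∀ j, i < j → a j = b j)) :=
  Iff.rfl

lemma dlt_irrefl (a : ℕ →₀ ℕ) : ¬ degRevLex (id : ℕ → ℕ) a a := by
  rintro (h | ⟨-, i, hi, -⟩)
  · exact lt_irrefl _ h
  · exact lt_irrefl _ hi

lemma dlt_trans {a b c : ℕ →₀ ℕ} (h1 : degRevLex (id : ℕ → ℕ) a b)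
    (h2 : degRevLex (id : ℕ → ℕ) b c) : degRevLex (id : ℕ → ℕ) a c := by
  rcases h1 with h1 | ⟨e1, i, hbi, hai⟩
  · rcases h2 with h2 | ⟨e2, -⟩
    · exact Or.inl (h1.trans h2)
    · exact Or.inl (lt_of_lt_of_le h1 (le_of_eq e2))
  · rcases h2 with h2 | ⟨e2, k, hck, hbk⟩
    · exact Or.inl (lt_of_le_of_lt (le_of_eq e1) h2)
    · refine Or.inr ⟨e1.trans e2, ?_⟩
      rcases lt_trichotomy i k with hik | rfl | hki
      · refine ⟨k, ?_, fun j hj => (hai j (hik.trans hj)).trans (hbk j hj)⟩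
        rw [hai k hik]; exact hck
      · exact ⟨i, hck.trans hbi, fun j hj => (hai j hj).trans (hbk j hj)⟩
      · refine ⟨i, ?_, fun j hj => (hai j hj).trans (hbk j (hki.trans hj))⟩
        rw [← hbk i hki]; exact hbi
  
lemma dlt_trichotomy (a b : ℕ →₀ ℕ) :
    a = b ∨ degRevLex (id : ℕ → ℕ) a b ∨ degRevLex (id : ℕ → ℕ) b a := by
  by_cases hab : a = b
  · exact Or.inl hab
  right
  rcases lt_trichotomy (mdeg a) (mdeg b) with h | h | h
  · exact Or.inl (Or.inl h)
  · have hex : ∃ j, a j ≠ b j := by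
      by_contra hc; push_neg at hc
      exact hab (Finsupp.ext hc)
    set S := (a.support ∪ b.support).filter (fun j => a j ≠ b j) with hS
    have hne : S.Nonempty := by
      obtain ⟨j, hj⟩ := hex
      refine ⟨j, Finset.mem_filter.2 ⟨?_, hj⟩⟩
      by_cases hja : a j = 0
      · exact Finset.mem_union_right _ (Finsupp.mem_support_iff.2 (fun h0 => hj (hja.trans h0.symm)))
      · exact Finset.mem_union_left _ (Finsupp.mem_support_iff.2 hja)
    set i := S.max' hne with hi
    have hine : a i ≠ b i := (Finset.mem_filter.1 (S.max'_mem hne)).2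
    have hjeq : ∀ j, i < j → a j = b j := by
      intro j hj
      by_contra hne'
      have hjS : j ∈ S := by
        refine Finset.mem_filter.2 ⟨?_, hne'⟩
        by_cases hja : a j = 0
        · exact Finset.mem_union_right _ (Finsupp.mem_support_iff.2 (fun h0 => hne' (hja.trans h0.symm)))
        · exact Finset.mem_union_left _ (Finsupp.mem_support_iff.2 hja)
      exact absurd (S.le_max' j hjS) (not_le.2 hj)
    rcases lt_or_gt_of_ne hine with h' | h'
    · exact Or.inr (Or.inr ⟨h.symm, i, h', fun j hj => (hjeq j hj).symm⟩)
    · exact Or.inl (Or.inr ⟨h, i, h', hjeq⟩)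
  · exact Or.inr (Or.inl h)

lemma dlt_add_right {a b : ℕ →₀ ℕ} (c : ℕ →₀ ℕ) (h : degRevLex (id : ℕ → ℕ) a b) :
    degRevLex (id : ℕ → ℕ) (a + c) (b + c) := by
  rcases h with h | ⟨e, i, hbi, hj⟩
  · exact Or.inl (show mdeg (a + c) < mdeg (b + c) by have h' : mdeg a < mdeg b := h; rw [mdeg_add, mdeg_add]; omega)
  · refine Or.inr ⟨show mdeg (a + c) = mdeg (b + c) by have e' : mdeg a = mdeg b := e; rw [mdeg_add, mdeg_add, e'], i, ?_, fun j hj' => ?_⟩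
    · simpa using Nat.add_lt_add_right hbi (c i)
    · simp [Finsupp.add_apply, hj j hj']

lemma dlt_mdeg_le {a b : ℕ →₀ ℕ} (h : degRevLex (id : ℕ → ℕ) a b) : mdeg a ≤ mdeg b := by
  rcases h with h | ⟨e, -⟩
  · exact le_of_lt h
  · exact le_of_eq e


def IsMaxM (f : Rng) (m : ℕ →₀ ℕ) : Prop :=
  m ∈ f.support ∧ ∀ m' ∈ f.support, m' ≠ m → degRevLex (id : ℕ → ℕ) m' m

lemma finset_exists_max (s : Finset (ℕ →₀ ℕ)) (hs : s.Nonempty) :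
    ∃ m ∈ s, ∀ m' ∈ s, m' ≠ m → degRevLex (id : ℕ → ℕ) m' m := by
  induction s using Finset.induction_on with
  | empty => exact absurd hs (by simp)
  | @insert a s ha ih =>
    rcases s.eq_empty_or_nonempty with rfl | hsne
    · exact ⟨a, Finset.mem_insert_self _ _, by intro m' hm' hne; simp at hm'; exact absurd hm' hne⟩
    · obtain ⟨m, hm, hmax⟩ := ih hsne
      rcases dlt_trichotomy a m with heq | h | h
      · refine ⟨a, Finset.mem_insert_self _ _, ?_⟩
        intro m' hm' hne
        rcases Finset.mem_insert.1 hm' with rfl | hm's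
        · exact absurd rfl hne
        · have h1 : m' ≠ m := by rw [← heq]; exact hne
          have h2 := hmax m' hm's h1
          rwa [← heq] at h2
      · refine ⟨m, Finset.mem_insert_of_mem hm, ?_⟩
        intro m' hm' hne
        rcases Finset.mem_insert.1 hm' with rfl | hm's
        · exact h
        · exact hmax m' hm's hne
      · refine ⟨a, Finset.mem_insert_self _ _, ?_⟩
        intro m' hm' hne
        rcases Finset.mem_insert.1 hm' with rfl | hm's
        · exact absurd rfl hne
        · by_cases hm'm : m' = m
          · rw [hm'm]; exact h
          · exact dlt_trans (hmax m' hm's hm'm) h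

lemma exists_max {f : Rng} (hf : f ≠ 0) : ∃ m, IsMaxM f m := by
  obtain ⟨m, h1, h2⟩ := finset_exists_max f.support
    (Finset.nonempty_iff_ne_empty.2 (fun h => hf (MvPolynomial.support_eq_empty.1 h)))
  exact ⟨m, h1, h2⟩

lemma max_unique {f : Rng} {m1 m2 : ℕ →₀ ℕ} (h1 : IsMaxM f m1) (h2 : IsMaxM f m2) :
    m1 = m2 := by
  by_contra hne
  exact dlt_irrefl m1 (dlt_trans (h2.2 m1 h1.1 hne) (h1.2 m2 h2.1 (Ne.symm hne)))

lemma initTerm_eq {f : Rng} {m : ℕ →₀ ℕ} (hm : IsMaxM f m) :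
    initTerm (degRevLex id) f = monomial m (coeff m f) := by
  have hex : ∃ m', m' ∈ f.support ∧ ∀ m'' ∈ f.support, m'' ≠ m' → degRevLex (id : ℕ → ℕ) m'' m' :=
    ⟨m, hm.1, hm.2⟩
  rw [initTerm, dif_pos hex]
  have hs := hex.choose_spec
  rw [max_unique ⟨hs.1, hs.2⟩ hm]

lemma initTerm_zero : initTerm (degRevLex id) (0 : Rng) = 0 := by
  rw [initTerm, dif_neg]
  rintro ⟨m, hm, -⟩
  simp at hm

lemma coeff_filterSum {P : (ℕ →₀ ℕ) → Prop} [inst : DecidablePred P] (f : Rng) (m : ℕ →₀ ℕ) :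
    coeff m (∑ m' ∈ f.support, if P m' then monomial m' (coeff m' f) else 0)
      = if P m then coeff m f else 0 := by
  rw [MvPolynomial.coeff_sum]
  by_cases hm : m ∈ f.support
  · rw [Finset.sum_eq_single_of_mem m hm]
    · split_ifs with h
      · simp
      · simp
    · intro b hb hbm
      split_ifs with h
      · simp [coeff_monomial, hbm]
      · simp
  · rw [Finset.sum_eq_zero, eq_comm]
    · split_ifs <;> simp [MvPolynomial.notMem_support_iff.1 hm]
    · intro b hb
      have hbm : b ≠ m := fun h => hm (h ▸ hb)
      split_ifs with h
      · simp [coeff_monomial, hbm]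
      · simp

lemma IsMaxM_mul {f g : Rng} {a b : ℕ →₀ ℕ} (hf : IsMaxM f a) (hg : IsMaxM g b) :
    IsMaxM (f * g) (a + b) ∧ coeff (a + b) (f * g) = coeff a f * coeff b g := by
  have key : ∀ u v : ℕ →₀ ℕ, u ∈ f.support → v ∈ g.support → ¬(u = a ∧ v = b) →
      degRevLex (id : ℕ → ℕ) (u + v) (a + b) := by
    intro u v hu hv hne
    by_cases hua : u = a
    · subst hua
      have hvb : v ≠ b := fun h => hne ⟨rfl, h⟩
      have h2 := dlt_add_right u (hg.2 v hv hvb)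
      rw [add_comm v u, add_comm b u] at h2
      exact h2
    · have h1 : degRevLex (id : ℕ → ℕ) (u + v) (a + v) := dlt_add_right v (hf.2 u hu hua)
      by_cases hvb : v = b
      · subst hvb; exact h1
      · have h2 := dlt_add_right a (hg.2 v hv hvb)
        rw [add_comm v a, add_comm b a] at h2
        exact dlt_trans h1 h2
  have hco : coeff (a + b) (f * g) = coeff a f * coeff b g := by
    rw [MvPolynomial.coeff_mul]
    rw [Finset.sum_eq_single_of_mem (a, b) (Finset.HasAntidiagonal.mem_antidiagonal.2 rfl)]
    intro x hx hxab
    by_cases h1 : coeff x.1 f = 0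
    · simp [h1]
    by_cases h2 : coeff x.2 g = 0
    · simp [h2]
    exfalso
    have hx1 : x.1 ∈ f.support := MvPolynomial.mem_support_iff.2 h1
    have hx2 : x.2 ∈ g.support := MvPolynomial.mem_support_iff.2 h2
    have hne : ¬(x.1 = a ∧ x.2 = b) := by
      intro ⟨e1, e2⟩; exact hxab (Prod.ext e1 e2)
    have := key x.1 x.2 hx1 hx2 hne
    rw [Finset.HasAntidiagonal.mem_antidiagonal.1 hx] at this
    exact dlt_irrefl _ this
  have hmem : (a + b) ∈ (f * g).support := by
    rw [MvPolynomial.mem_support_iff, hco]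
    exact mul_ne_zero (MvPolynomial.mem_support_iff.1 hf.1) (MvPolynomial.mem_support_iff.1 hg.1)
  refine ⟨⟨hmem, ?_⟩, hco⟩
  intro m' hm' hne
  obtain ⟨u, hu, v, hv, rfl⟩ := Finset.mem_add.1 (MvPolynomial.support_mul _ _ hm')
  refine key u v hu hv ?_
  intro ⟨e1, e2⟩
  exact hne (by rw [e1, e2])

lemma initTerm_mul {f g : Rng} (hf : f ≠ 0) (hg : g ≠ 0) :
    initTerm (degRevLex id) (f * g) = initTerm (degRevLex id) f * initTerm (degRevLex id) g := by
  obtain ⟨a, ha⟩ := exists_max hf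
  obtain ⟨b, hb⟩ := exists_max hg
  obtain ⟨hab, hco⟩ := IsMaxM_mul ha hb
  rw [initTerm_eq ha, initTerm_eq hb, initTerm_eq hab, hco, MvPolynomial.monomial_mul]


def Homog (d : ℕ) (f : Rng) : Prop := ∀ m ∈ f.support, mdeg m = d

lemma homog_zero (d : ℕ) : Homog d (0 : Rng) := by intro m hm; simp at hm

lemma homog_one : Homog 0 (1 : Rng) := by
  intro m hm
  have : coeff m (1 : Rng) ≠ 0 := MvPolynomial.mem_support_iff.1 hm
  rw [MvPolynomial.coeff_one] at this
  split_ifs at this with h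
  · rw [← h]; rfl
  · exact absurd rfl this

lemma Homog.mul {d1 d2 : ℕ} {f g : Rng} (hf : Homog d1 f) (hg : Homog d2 g) :
    Homog (d1 + d2) (f * g) := by
  intro m hm
  obtain ⟨u, hu, v, hv, rfl⟩ := Finset.mem_add.1 (MvPolynomial.support_mul _ _ hm)
  rw [mdeg_add, hf u hu, hg v hv]

lemma coeff_totComp (d : ℕ) (f : Rng) (m : ℕ →₀ ℕ) :
    coeff m (totComp d f) = if mdeg m = d then coeff m f else 0 := by
  unfold totComp
  exact coeff_filterSum f m

lemma homog_totComp (d : ℕ) (f : Rng) : Homog d (totComp d f) := by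
  intro m hm
  have := MvPolynomial.mem_support_iff.1 hm
  rw [coeff_totComp] at this
  split_ifs at this with h
  · exact h
  · exact absurd rfl this

lemma supp_totComp (d : ℕ) (f : Rng) : (totComp d f).support ⊆ f.support := by
  intro m hm
  have := MvPolynomial.mem_support_iff.1 hm
  rw [coeff_totComp] at this
  split_ifs at this with h
  · exact MvPolynomial.mem_support_iff.2 this
  · exact absurd rfl this

lemma coeff_lamInit (lam : ℕ → ℝ) (f : Rng) (m : ℕ →₀ ℕ) :
    coeff m (lamInit lam f)
      = if (∀ m' ∈ f.support, lamWt lam m' ≤ lamWt lam m) then coeff m f else 0 := by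
  unfold lamInit
  exact coeff_filterSum f m

lemma lamInit_zero (lam : ℕ → ℝ) : lamInit lam (0 : Rng) = 0 := by
  rw [lamInit]; simp

lemma lamWt_add (lam : ℕ → ℝ) (a b : ℕ →₀ ℕ) :
    lamWt lam (a + b) = lamWt lam a + lamWt lam b := by
  apply Finsupp.sum_add_index' (fun i => by simp) (fun i e1 e2 => by push_cast; ring)

def IsWmax (lam : ℕ → ℝ) (f : Rng) (w : ℝ) : Prop :=
  (∃ m ∈ f.support, lamWt lam m = w) ∧ ∀ m ∈ f.support, lamWt lam m ≤ w

lemma exists_wmax (lam : ℕ → ℝ) {f : Rng} (hf : f ≠ 0) : ∃ w, IsWmax lam f w := by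
  obtain ⟨m, hm, hmax⟩ := Finset.exists_max_image f.support (lamWt lam)
    (Finset.nonempty_iff_ne_empty.2 (fun h => hf (MvPolynomial.support_eq_empty.1 h)))
  exact ⟨lamWt lam m, ⟨m, hm, rfl⟩, hmax⟩

lemma coeff_lamInit_of_wmax {lam : ℕ → ℝ} {f : Rng} {w : ℝ} (h : IsWmax lam f w)
    (m : ℕ →₀ ℕ) :
    coeff m (lamInit lam f) = if lamWt lam m = w then coeff m f else 0 := by
  rw [coeff_lamInit]
  by_cases hm : m ∈ f.support
  · by_cases hw : lamWt lam m = w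
    · rw [if_pos (fun m' hm' => hw ▸ h.2 m' hm'), if_pos hw]
    · rw [if_neg, if_neg hw]
      intro hc
      obtain ⟨m0, hm0, hw0⟩ := h.1
      exact hw (le_antisymm (h.2 m hm) (hw0 ▸ hc m0 hm0))
  · have h0 : coeff m f = 0 := MvPolynomial.notMem_support_iff.1 hm
    rw [h0]; split_ifs <;> rfl

lemma lamInit_ne_zero {lam : ℕ → ℝ} {f : Rng} {w : ℝ} (h : IsWmax lam f w) :
    lamInit lam f ≠ 0 := by
  obtain ⟨m0, hm0, hw0⟩ := h.1
  intro hc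
  have := coeff_lamInit_of_wmax h m0
  rw [hc, if_pos hw0] at this
  exact MvPolynomial.mem_support_iff.1 hm0 this.symm

lemma lamInit_mul {lam : ℕ → ℝ} {f g : Rng} (hf : f ≠ 0) (hg : g ≠ 0) :
    lamInit lam (f * g) = lamInit lam f * lamInit lam g := by
  obtain ⟨w1, h1⟩ := exists_wmax lam hf
  obtain ⟨w2, h2⟩ := exists_wmax lam hg
  have key : ∀ m, coeff m (lamInit lam f * lamInit lam g)
      = if lamWt lam m = w1 + w2 then coeff m (f * g) else 0 := by
    intro m
    by_cases hm : lamWt lam m = w1 + w2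
    · rw [if_pos hm, MvPolynomial.coeff_mul, MvPolynomial.coeff_mul]
      apply Finset.sum_congr rfl
      intro x hx
      have hxm : x.1 + x.2 = m := Finset.HasAntidiagonal.mem_antidiagonal.1 hx
      rw [coeff_lamInit_of_wmax h1, coeff_lamInit_of_wmax h2]
      by_cases c1 : coeff x.1 f = 0
      · rw [c1]; split_ifs <;> ring
      by_cases c2 : coeff x.2 g = 0
      · rw [c2]; split_ifs <;> ring
      have hw1 : lamWt lam x.1 ≤ w1 := h1.2 x.1 (MvPolynomial.mem_support_iff.2 c1)
      have hw2 : lamWt lam x.2 ≤ w2 := h2.2 x.2 (MvPolynomial.mem_support_iff.2 c2)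
      have hsum : lamWt lam x.1 + lamWt lam x.2 = w1 + w2 := by
        rw [← lamWt_add, hxm, hm]
      rw [if_pos (by linarith), if_pos (by linarith)]
    · rw [if_neg hm, MvPolynomial.coeff_mul]
      apply Finset.sum_eq_zero
      intro x hx
      have hxm : x.1 + x.2 = m := Finset.HasAntidiagonal.mem_antidiagonal.1 hx
      rw [coeff_lamInit_of_wmax h1, coeff_lamInit_of_wmax h2]
      by_cases e1 : lamWt lam x.1 = w1
      · by_cases e2 : lamWt lam x.2 = w2
        · exfalso; apply hm; rw [← hxm, lamWt_add, e1, e2]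
        · rw [if_neg e2]; ring
      · rw [if_neg e1]; ring
  have hne : lamInit lam f * lamInit lam g ≠ 0 :=
    mul_ne_zero (lamInit_ne_zero h1) (lamInit_ne_zero h2)
  obtain ⟨m0, hm0⟩ := MvPolynomial.ne_zero_iff.1 hne
  have hk0 := key m0
  rw [hk0] at hm0
  have hwm0 : lamWt lam m0 = w1 + w2 := by
    by_contra hc; rw [if_neg hc] at hm0; exact hm0 rfl
  rw [if_pos hwm0] at hm0
  have hwm : IsWmax lam (f * g) (w1 + w2) := by
    constructor
    · exact ⟨m0, MvPolynomial.mem_support_iff.2 hm0, hwm0⟩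
    · intro m hm
      obtain ⟨u, hu, v, hv, rfl⟩ := Finset.mem_add.1 (MvPolynomial.support_mul _ _ hm)
      rw [lamWt_add]
      exact add_le_add (h1.2 u hu) (h2.2 v hv)
  ext m
  rw [coeff_lamInit_of_wmax hwm, key m]


def lamM (M : ℕ) : ℕ → ℝ := fun i => -((M + 2 : ℝ)) ^ i

def pw (M : ℕ) (m : ℕ →₀ ℕ) : ℝ := ∑ i ∈ m.support, (m i : ℝ) * ((M + 2 : ℝ)) ^ i

lemma lamWt_lamM (M : ℕ) (m : ℕ →₀ ℕ) : lamWt (lamM M) m = -pw M m := by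
  rw [lamWt, pw, Finsupp.sum, ← Finset.sum_neg_distrib]
  exact Finset.sum_congr rfl (fun i _ => by rw [lamM]; ring)

lemma pw_lt {M : ℕ} {a b : ℕ →₀ ℕ} (hdb : mdeg b ≤ M)
    (i : ℕ) (hi : b i < a i) (hj : ∀ j, i < j → a j = b j) :
    pw M b < pw M a := by
  set c : ℝ := (M + 2 : ℝ) with hc
  have hc1 : (1 : ℝ) ≤ c := by rw [hc]; push_cast; linarith [Nat.cast_nonneg (α := ℝ) M]
  have hc0 : (0 : ℝ) < c := lt_of_lt_of_le one_pos hc1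
  set s := a.support ∪ b.support with hs
  have hpwa : pw M a = ∑ j ∈ s, (a j : ℝ) * c ^ j := by
    rw [pw]
    apply Finset.sum_subset (Finset.subset_union_left)
    intro x _ hx
    rw [Finsupp.notMem_support_iff.1 hx]; simp
  have hpwb : pw M b = ∑ j ∈ s, (b j : ℝ) * c ^ j := by
    rw [pw]
    apply Finset.sum_subset (Finset.subset_union_right)
    intro x _ hx
    rw [Finsupp.notMem_support_iff.1 hx]; simp
  have hsplit : pw M a - pw M b = ∑ j ∈ s.filter (fun j => j ≤ i), ((a j : ℝ) - b j) * c ^ j := by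
    rw [hpwa, hpwb, ← Finset.sum_sub_distrib]
    rw [← Finset.sum_filter_add_sum_filter_not s (fun j => j ≤ i)]
    have h2 : ∑ j ∈ s.filter (fun j => ¬ j ≤ i), ((a j : ℝ) * c ^ j - (b j) * c ^ j) = 0 := by
      apply Finset.sum_eq_zero
      intro j hjm
      rw [hj j (not_le.1 (Finset.mem_filter.1 hjm).2)]; ring
    rw [h2, add_zero]
    exact Finset.sum_congr rfl (fun j _ => by ring)
  have hiins : i ∈ s := Finset.mem_union_left _ (Finsupp.mem_support_iff.2 (by omega))
  have hfilter : s.filter (fun j => j ≤ i) = insert i (s.filter (fun j => j < i)) := by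
    ext j
    simp only [Finset.mem_filter, Finset.mem_insert]
    constructor
    · rintro ⟨hjs, hji⟩
      rcases Nat.lt_or_ge j i with h | h
      · exact Or.inr ⟨hjs, h⟩
      · exact Or.inl (le_antisymm hji h)
    · rintro (rfl | ⟨hjs, hji⟩)
      · exact ⟨hiins, le_refl _⟩
      · exact ⟨hjs, le_of_lt hji⟩
  have hnotmem : i ∉ s.filter (fun j => j < i) := by
    simp only [Finset.mem_filter]; rintro ⟨-, h⟩; exact lt_irrefl _ h
  rw [hfilter, Finset.sum_insert hnotmem] at hsplit
  have hbound : ∀ j ∈ s.filter (fun j => j < i), -((b j : ℝ) * c ^ j) ≤ ((a j : ℝ) - b j) * c ^ j := by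
    intro j _
    have : (0:ℝ) ≤ (a j : ℝ) * c ^ j := mul_nonneg (Nat.cast_nonneg _) (le_of_lt (pow_pos hc0 j))
    nlinarith
  have hsum_ge : ∑ j ∈ s.filter (fun j => j < i), ((a j : ℝ) - b j) * c ^ j
      ≥ -∑ j ∈ s.filter (fun j => j < i), (b j : ℝ) * c ^ j := by
    rw [← Finset.sum_neg_distrib]
    exact Finset.sum_le_sum hbound
  have hmain : (1 : ℝ) * c ^ i ≤ ((a i : ℝ) - b i) * c ^ i := by
    apply mul_le_mul_of_nonneg_right _ (le_of_lt (pow_pos hc0 i))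
    have : (b i : ℝ) + 1 ≤ (a i : ℝ) := by exact_mod_cast hi
    linarith
  rcases Nat.eq_zero_or_pos i with rfl | hipos
  · have hempty : s.filter (fun j => j < 0) = ∅ := by
      apply Finset.filter_false_of_mem; intro j _; omega
    rw [hempty, Finset.sum_empty, add_zero] at hsplit
    have : (0:ℝ) < pw M a - pw M b := by
      rw [hsplit]; calc (0:ℝ) < 1 * c ^ 0 := by simp
        _ ≤ _ := hmain
    linarith
  · -- bound the tail sum by M * c^(i-1)
    obtain ⟨i', rfl⟩ : ∃ i', i = i' + 1 := ⟨i - 1, by omega⟩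
    have htail : ∑ j ∈ s.filter (fun j => j < i' + 1), (b j : ℝ) * c ^ j
        ≤ (M : ℝ) * c ^ i' := by
      have h1 : ∀ j ∈ s.filter (fun j => j < i' + 1), (b j : ℝ) * c ^ j ≤ (b j : ℝ) * c ^ i' := by
        intro j hjm
        have hji : j ≤ i' := by
          have := (Finset.mem_filter.1 hjm).2; omega
        exact mul_le_mul_of_nonneg_left (pow_le_pow_right₀ hc1 hji) (Nat.cast_nonneg _)
      calc ∑ j ∈ s.filter (fun j => j < i' + 1), (b j : ℝ) * c ^ j
          ≤ ∑ j ∈ s.filter (fun j => j < i' + 1), (b j : ℝ) * c ^ i' := Finset.sum_le_sum h1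
        _ = (∑ j ∈ s.filter (fun j => j < i' + 1), (b j : ℝ)) * c ^ i' := by
            rw [Finset.sum_mul]
        _ ≤ (M : ℝ) * c ^ i' := by
            apply mul_le_mul_of_nonneg_right _ (le_of_lt (pow_pos hc0 i'))
            have hb1 : ∑ j ∈ s.filter (fun j => j < i' + 1), b j ≤ mdeg b := by
              rw [mdeg_eq_sum]
              calc ∑ j ∈ s.filter (fun j => j < i' + 1), b j
                  ≤ ∑ j ∈ s, b j := Finset.sum_le_sum_of_subset (Finset.filter_subset _ _)
                _ = ∑ j ∈ b.support, b j := by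
                    rw [eq_comm]
                    apply Finset.sum_subset (Finset.subset_union_right)
                    intro x _ hx
                    exact Finsupp.notMem_support_iff.1 hx
            calc (∑ j ∈ s.filter (fun j => j < i' + 1), (b j :ℝ))
                = ((∑ j ∈ s.filter (fun j => j < i' + 1), b j : ℕ) : ℝ) := by push_cast; rfl
              _ ≤ ((mdeg b : ℕ) : ℝ) := by exact_mod_cast hb1
              _ ≤ (M : ℝ) := by exact_mod_cast hdb
    have hcpow : c ^ (i' + 1) = c * c ^ i' := by rw [pow_succ]; ring
    have : (0:ℝ) < pw M a - pw M b := by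
      rw [hsplit]
      have e1 : ((a (i' + 1) : ℝ) - b (i' + 1)) * c ^ (i' + 1) ≥ 1 * c ^ (i' + 1) := hmain
      have e2 : ∑ j ∈ s.filter (fun j => j < i' + 1), ((a j : ℝ) - b j) * c ^ j
          ≥ -((M : ℝ) * c ^ i') := le_trans (neg_le_neg htail) hsum_ge
      have e3 : (1:ℝ) * c ^ (i' + 1) - (M : ℝ) * c ^ i' = 2 * c ^ i' := by
        rw [hcpow, hc]; ring
      have e4 : (0:ℝ) < 2 * c ^ i' := by positivity
      linarith
    linarith
  
lemma lamWt_lt {M : ℕ} {a b : ℕ →₀ ℕ} (hdb : mdeg b ≤ M)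
    (i : ℕ) (hi : b i < a i) (hj : ∀ j, i < j → a j = b j) :
    lamWt (lamM M) a < lamWt (lamM M) b := by
  rw [lamWt_lamM, lamWt_lamM]
  exact neg_lt_neg (pw_lt hdb i hi hj)

lemma lamInit_eq_initTerm {M d : ℕ} {f : Rng} (hf : f ≠ 0) (hd : Homog d f) (hdM : d ≤ M) :
    lamInit (lamM M) f = initTerm (degRevLex id) f := by
  obtain ⟨m, hm⟩ := exists_max hf
  have hw : ∀ m' ∈ f.support, m' ≠ m → lamWt (lamM M) m' < lamWt (lamM M) m := by
    intro m' h1 h2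
    rcases hm.2 m' h1 h2 with h | ⟨-, i, hbi, hj⟩
    · have h' : mdeg m' < mdeg m := h
      rw [hd m' h1, hd m hm.1] at h'
      exact absurd h' (lt_irrefl d)
    · exact lamWt_lt (le_of_eq_of_le (hd m hm.1) hdM) i hbi hj
  rw [initTerm_eq hm]
  ext x
  rw [coeff_lamInit, MvPolynomial.coeff_monomial]
  by_cases hx : x = m
  · subst hx
    rw [if_pos, if_pos rfl]
    intro m' hm'
    by_cases h : m' = x
    · subst h; exact le_refl _
    · exact le_of_lt (hw m' hm' h)
  · rw [if_neg (fun h : m = x => hx h.symm)]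
    by_cases hxs : x ∈ f.support
    · rw [if_neg]
      intro hc
      exact absurd (hc m hm.1) (not_le.2 (hw x hxs hx))
    · rw [MvPolynomial.notMem_support_iff.1 hxs]
      split_ifs <;> rfl

lemma initTerm_totComp_top {f : Rng} (hf : f ≠ 0) :
    totComp (f.totalDegree) f ≠ 0 ∧
      initTerm (degRevLex id) (totComp (f.totalDegree) f) = initTerm (degRevLex id) f := by
  obtain ⟨m, hm⟩ := exists_max hf
  have hdm : mdeg m = f.totalDegree := by
    apply le_antisymm
    · exact Finset.le_sup (f := fun s => s.sum fun _ e => e) hm.1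
    · apply Finset.sup_le
      intro m' hm'
      by_cases h : m' = m
      · subst h; exact le_refl _
      · exact dlt_mdeg_le (hm.2 m' hm' h)
  have hcm : coeff m (totComp (f.totalDegree) f) = coeff m f := by
    rw [coeff_totComp, if_pos hdm]
  have hmem : m ∈ (totComp (f.totalDegree) f).support := by
    rw [MvPolynomial.mem_support_iff, hcm]
    exact MvPolynomial.mem_support_iff.1 hm.1
  have hmax2 : IsMaxM (totComp (f.totalDegree) f) m :=
    ⟨hmem, fun m' hm' hne => hm.2 m' (supp_totComp _ _ hm') hne⟩
  constructor
  · intro hc; rw [hc] at hmem; simp at hmem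
  · rw [initTerm_eq hmax2, initTerm_eq hm, hcm]

lemma initTerm_monomial {m : ℕ →₀ ℕ} {c : ℂ} (hc : c ≠ 0) :
    initTerm (degRevLex id) ((monomial m c : Rng)) = monomial m c := by
  have hmax : IsMaxM (monomial m c : Rng) m := by
    constructor
    · rw [MvPolynomial.mem_support_iff, MvPolynomial.coeff_monomial, if_pos rfl]; exact hc
    · intro m' hm' hne
      rw [MvPolynomial.mem_support_iff, MvPolynomial.coeff_monomial] at hm'
      rw [if_neg (fun h : m = m' => hne h.symm)] at hm'
      exact absurd rfl hm'
  rw [initTerm_eq hmax, MvPolynomial.coeff_monomial, if_pos rfl]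

lemma lamInit_monomial (lam : ℕ → ℝ) {m : ℕ →₀ ℕ} {c : ℂ} (hc : c ≠ 0) :
    lamInit lam ((monomial m c : Rng)) = monomial m c := by
  ext x
  rw [coeff_lamInit, MvPolynomial.coeff_monomial]
  by_cases hx : m = x
  · subst hx
    rw [if_pos, if_pos rfl]
    intro m' hm'
    rw [MvPolynomial.mem_support_iff, MvPolynomial.coeff_monomial] at hm'
    by_cases h : m = m'
    · subst h; exact le_refl _
    · rw [if_neg h] at hm'; exact absurd rfl hm'
  · rw [if_neg hx]
    split_ifs <;> rfl

lemma initTerm_one : initTerm (degRevLex id) (1 : Rng) = 1 := by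
  have h1 : (1 : Rng) = monomial 0 1 := by
    rw [MvPolynomial.monomial_zero', MvPolynomial.C_1]
  rw [h1, initTerm_monomial one_ne_zero]

lemma lamInit_one (lam : ℕ → ℝ) : lamInit lam (1 : Rng) = 1 := by
  have h1 : (1 : Rng) = monomial 0 1 := by
    rw [MvPolynomial.monomial_zero', MvPolynomial.C_1]
  rw [h1, lamInit_monomial lam one_ne_zero]


def topW (lam : ℕ → ℝ) (W : ℝ) (f : Rng) : Rng :=
  ∑ m ∈ f.support, if lamWt lam m = W then monomial m (coeff m f) else 0

def trunc (n : ℕ) (f : Rng) : Rng :=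
  ∑ m ∈ f.support, if (∀ i ∈ m.support, i ≤ n) then monomial m (coeff m f) else 0

lemma coeff_topW (lam : ℕ → ℝ) (W : ℝ) (f : Rng) (m : ℕ →₀ ℕ) :
    coeff m (topW lam W f) = if lamWt lam m = W then coeff m f else 0 := by
  unfold topW; exact coeff_filterSum f m

lemma coeff_trunc (n : ℕ) (f : Rng) (m : ℕ →₀ ℕ) :
    coeff m (trunc n f) = if (∀ i ∈ m.support, i ≤ n) then coeff m f else 0 := by
  unfold trunc; exact coeff_filterSum f m

lemma topW_zero (lam : ℕ → ℝ) (W : ℝ) : topW lam W (0 : Rng) = 0 := by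
  unfold topW; simp

lemma topW_add_smul (lam : ℕ → ℝ) (W : ℝ) (f g : Rng) (c : ℂ) :
    topW lam W (f + c • g) = topW lam W f + c • topW lam W g := by
  ext m
  rw [MvPolynomial.coeff_add, MvPolynomial.coeff_smul, coeff_topW, coeff_topW, coeff_topW,
    MvPolynomial.coeff_add, MvPolynomial.coeff_smul]
  split_ifs <;> simp

lemma trunc_sub_smul (n : ℕ) (f g : Rng) (c : ℂ) :
    trunc n (f - c • g) = trunc n f - c • trunc n g := by
  ext m
  rw [MvPolynomial.coeff_sub, MvPolynomial.coeff_smul, coeff_trunc, coeff_trunc, coeff_trunc,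
    MvPolynomial.coeff_sub, MvPolynomial.coeff_smul]
  split_ifs <;> simp

lemma trunc_eq_self {n : ℕ} {f : Rng} (h : ∀ m ∈ f.support, ∀ i ∈ m.support, i ≤ n) :
    trunc n f = f := by
  ext m
  rw [coeff_trunc]
  by_cases hm : m ∈ f.support
  · rw [if_pos (h m hm)]
  · rw [MvPolynomial.notMem_support_iff.1 hm]; split_ifs <;> rfl

lemma supp_trunc_sub {n : ℕ} {f : Rng} {m : ℕ →₀ ℕ} (hm : m ∈ (trunc n f).support) :
    m ∈ f.support ∧ ∀ i ∈ m.support, i ≤ n := by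
  have := MvPolynomial.mem_support_iff.1 hm
  rw [coeff_trunc] at this
  split_ifs at this with h
  · exact ⟨MvPolynomial.mem_support_iff.2 this, h⟩
  · exact absurd rfl this

lemma coeff_trunc_of_rn {n : ℕ} (f : Rng) {m : ℕ →₀ ℕ} (h : ∀ i ∈ m.support, i ≤ n) :
    coeff m (trunc n f) = coeff m f := by
  rw [coeff_trunc, if_pos h]

lemma dlt_of_not_rn {n : ℕ} {a b : ℕ →₀ ℕ} (hdeg : mdeg b = mdeg a)
    (ha : ∀ i ∈ a.support, i ≤ n) (hb : ¬ ∀ i ∈ b.support, i ≤ n) :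
    degRevLex (id : ℕ → ℕ) b a := by
  push_neg at hb
  obtain ⟨i0, hi0s, hi0⟩ := hb
  have hne : b.support.Nonempty := ⟨i0, hi0s⟩
  set i := b.support.max' hne with hidef
  have hii : n < i := lt_of_lt_of_le hi0 (Finset.le_max' _ _ hi0s)
  have hbi : b i ≠ 0 := Finsupp.mem_support_iff.1 (b.support.max'_mem hne)
  have hai : a i = 0 := by
    by_contra h
    exact absurd (ha i (Finsupp.mem_support_iff.2 h)) (not_le.2 hii)
  have hlt : a i < b i := by omega
  refine Or.inr ⟨hdeg, i, hlt, fun j hj => ?_⟩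
  have hj' : i < j := hj
  have hbj : b j = 0 := by
    by_contra h
    exact absurd (Finset.le_max' _ _ (Finsupp.mem_support_iff.2 h)) (not_le.2 hj')
  have haj : a j = 0 := by
    by_contra h
    have : j ≤ n := ha j (Finsupp.mem_support_iff.2 h)
    omega
  rw [hbj, haj]

lemma max_trunc {n d : ℕ} {f : Rng} (hd : Homog d f) (h0 : trunc n f ≠ 0) :
    ∃ m, IsMaxM (trunc n f) m ∧ IsMaxM f m ∧ (∀ i ∈ m.support, i ≤ n) := by
  obtain ⟨m, hm⟩ := exists_max h0
  obtain ⟨hmf, hmr⟩ := supp_trunc_sub hm.1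
  refine ⟨m, hm, ⟨hmf, ?_⟩, hmr⟩
  intro m' h1 h2
  by_cases hr : ∀ i ∈ m'.support, i ≤ n
  · apply hm.2 m' _ h2
    rw [MvPolynomial.mem_support_iff, coeff_trunc_of_rn f hr]
    exact MvPolynomial.mem_support_iff.1 h1
  · exact dlt_of_not_rn (by rw [hd m' h1, hd m hmf]) hmr hr

lemma strict_wt_of_lamInit_monomial {lam : ℕ → ℝ} {q : Rng} {m₀ : ℕ →₀ ℕ}
    (hq : q ≠ 0) (h : lamInit lam q = monomial m₀ (coeff m₀ q)) (hc : coeff m₀ q ≠ 0) :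
    ∀ m ∈ q.support, m ≠ m₀ → lamWt lam m < lamWt lam m₀ := by
  obtain ⟨w, hw⟩ := exists_wmax lam hq
  obtain ⟨mx, hmx, hwx⟩ := hw.1
  have hcx : coeff mx (lamInit lam q) ≠ 0 := by
    rw [coeff_lamInit_of_wmax hw, if_pos hwx]
    exact MvPolynomial.mem_support_iff.1 hmx
  have hmx0 : mx = m₀ := by
    rw [h, MvPolynomial.coeff_monomial] at hcx
    by_contra he
    rw [if_neg (fun h' : m₀ = mx => he h'.symm)] at hcx
    exact hcx rfl
  rw [hmx0] at hwx
  intro m hm hne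
  have hle : lamWt lam m ≤ w := hw.2 m hm
  rcases lt_or_eq_of_le hle with hlt | heq
  · rw [← hwx] at hlt; exact hlt
  · exfalso
    have : coeff m (lamInit lam q) ≠ 0 := by
      rw [coeff_lamInit_of_wmax hw, if_pos heq]
      exact MvPolynomial.mem_support_iff.1 hm
    rw [h, MvPolynomial.coeff_monomial, if_neg (fun h' : m₀ = m => hne h'.symm)] at this
    exact this rfl

lemma support_span {S : Set Rng} {x : Rng} (hx : x ∈ Submodule.span ℂ S) :
    ∀ m ∈ x.support, ∃ P ∈ S, m ∈ P.support := by
  induction hx using Submodule.span_induction with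
  | mem P hP => exact fun m hm => ⟨P, hP, hm⟩
  | zero => intro m hm; simp at hm
  | add x y hx hy ihx ihy =>
    intro m hm
    rcases Finset.mem_union.1 (MvPolynomial.support_add hm) with h | h
    · exact ihx m h
    · exact ihy m h
  | smul c x hx ihx =>
    intro m hm
    exact ihx m (MvPolynomial.support_smul hm)


lemma trunc_zero (n : ℕ) : trunc n (0 : Rng) = 0 := by unfold trunc; simp

lemma closure_rep {A : Subalgebra ℂ Rng} (M : ℕ) (s : ℕ → Rng)
    (hAhomog : ∀ f ∈ A, ∀ d, totComp d f ∈ A)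
    (hdeg : ∀ j, (s j).totalDegree ≤ M)
    (hsA : ∀ j, s j ∈ A) :
    ∀ P ∈ Submonoid.closure (Set.range fun j => initTerm (degRevLex id) (s j)),
      ∃ q ∈ (A : Set Rng), (∃ d, Homog d q) ∧ initTerm (degRevLex id) q = P ∧
        lamInit (lamM M) q = P := by
  intro P hP
  induction hP using Submonoid.closure_induction with
  | mem x hx =>
    obtain ⟨j, rfl⟩ := hx
    by_cases h0 : s j = 0
    · exact ⟨0, A.zero_mem, ⟨0, homog_zero 0⟩, by dsimp only; rw [h0, initTerm_zero],
        by dsimp only; rw [h0, initTerm_zero, lamInit_zero]⟩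
    · obtain ⟨hne, hinit⟩ := initTerm_totComp_top h0
      refine ⟨totComp (s j).totalDegree (s j), hAhomog _ (hsA j) _,
        ⟨_, homog_totComp _ _⟩, hinit, ?_⟩
      rw [lamInit_eq_initTerm hne (homog_totComp _ _) (hdeg j), hinit]
  | one => exact ⟨1, A.one_mem, ⟨0, homog_one⟩, initTerm_one, lamInit_one _⟩
  | mul x y hxm hym ihx ihy =>
    obtain ⟨q1, hq1A, ⟨d1, hq1h⟩, hq1i, hq1l⟩ := ihx
    obtain ⟨q2, hq2A, ⟨d2, hq2h⟩, hq2i, hq2l⟩ := ihy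
    by_cases h1 : q1 = 0
    · refine ⟨0, A.zero_mem, ⟨0, homog_zero 0⟩, ?_, ?_⟩
      · rw [initTerm_zero, ← hq1i, h1, initTerm_zero, zero_mul]
      · rw [lamInit_zero, ← hq1i, h1, initTerm_zero, zero_mul]
    by_cases h2 : q2 = 0
    · refine ⟨0, A.zero_mem, ⟨0, homog_zero 0⟩, ?_, ?_⟩
      · rw [initTerm_zero, ← hq2i, h2, initTerm_zero, mul_zero]
      · rw [lamInit_zero, ← hq2i, h2, initTerm_zero, mul_zero]
    refine ⟨q1 * q2, A.mul_mem hq1A hq2A, ⟨d1 + d2, hq1h.mul hq2h⟩, ?_, ?_⟩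
    · rw [initTerm_mul h1 h2, hq1i, hq2i]
    · rw [lamInit_mul h1 h2, hq1l, hq2l]

def uB (n d : ℕ) : ℕ →₀ ℕ := ∑ i ∈ Finset.range (n + 1), Finsupp.single i d

lemma uB_apply (n d j : ℕ) : uB n d j = if j ≤ n then d else 0 := by
  rw [uB, Finset.sum_apply']
  rw [Finset.sum_congr rfl (fun i _ => Finsupp.single_apply)]
  rw [Finset.sum_ite_eq']
  simp [Finset.mem_range, Nat.lt_succ_iff]

lemma le_uB {n d : ℕ} {m : ℕ →₀ ℕ} (hd : mdeg m = d) (hr : ∀ i ∈ m.support, i ≤ n) :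
    m ≤ uB n d := by
  rw [Finsupp.le_def]
  intro j
  rw [uB_apply]
  by_cases hj : j ≤ n
  · rw [if_pos hj]; exact hd ▸ apply_le_mdeg m j
  · rw [if_neg hj]
    by_contra h
    push_neg at h
    exact hj (hr j (Finsupp.mem_support_iff.2 (by omega)))

def msr (n d : ℕ) (g : Rng) : ℕ :=
  ((Finset.Iic (uB n d)).filter
    (fun m => ∃ m' ∈ g.support, m = m' ∨ degRevLex (id : ℕ → ℕ) m m')).card

lemma FIN (M : ℕ) (A : Subalgebra ℂ Rng) (B : Submodule ℂ Rng) (G : Set Rng)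
    (hGB : ((Submonoid.closure G : Submonoid Rng) : Set Rng) ⊆ (B : Set Rng))
    (hinit : ∀ f ∈ A, f ≠ 0 → initTerm (degRevLex id) f ∈
      Submodule.span ℂ ((Submonoid.closure G : Submonoid Rng) : Set Rng))
    (hrep : ∀ P ∈ Submonoid.closure G, ∃ q ∈ (A : Set Rng), (∃ d, Homog d q) ∧
      initTerm (degRevLex id) q = P ∧ lamInit (lamM M) q = P)
    (n d : ℕ) :
    ∀ (N : ℕ) (f' : Rng), f' ∈ A → Homog d f' → msr n d (trunc n f') < N →
      ∀ W : ℝ, (∀ m ∈ (trunc n f').support, lamWt (lamM M) m ≤ W) →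
      topW (lamM M) W (trunc n f') ∈ B := by
  intro N
  induction N with
  | zero => intro f' _ _ h; omega
  | succ N ih =>
    intro f' hf'A hf'h hmsr W hW
    by_cases hg0 : trunc n f' = 0
    · rw [hg0, topW_zero]; exact B.zero_mem
    obtain ⟨m₀, hmaxg, hmaxf, hm₀r⟩ := max_trunc hf'h hg0
    have hf'0 : f' ≠ 0 := fun h => hg0 (by rw [h, trunc_zero])
    have hm₀f : m₀ ∈ f'.support := hmaxf.1
    have hIT : initTerm (degRevLex id) f' = monomial m₀ (coeff m₀ f') := initTerm_eq hmaxf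
    have hm₀supp : m₀ ∈ (initTerm (degRevLex id) f').support := by
      rw [hIT, MvPolynomial.mem_support_iff, MvPolynomial.coeff_monomial, if_pos rfl]
      exact MvPolynomial.mem_support_iff.1 hm₀f
    obtain ⟨P, hPcl, hm₀P⟩ := support_span (hinit f' hf'A hf'0) m₀ hm₀supp
    obtain ⟨q, hqA, ⟨dq, hqh⟩, hqi, hql⟩ := hrep P hPcl
    have hq0 : q ≠ 0 := by
      intro h
      rw [h, initTerm_zero] at hqi
      rw [← hqi] at hm₀P
      simp at hm₀P
    obtain ⟨mq, hmq⟩ := exists_max hq0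
    have hqim : initTerm (degRevLex id) q = monomial mq (coeff mq q) := initTerm_eq hmq
    have hmqm₀ : mq = m₀ := by
      rw [← hqi, hqim] at hm₀P
      rw [MvPolynomial.mem_support_iff, MvPolynomial.coeff_monomial] at hm₀P
      by_contra h
      rw [if_neg h] at hm₀P
      exact hm₀P rfl
    rw [hmqm₀] at hmq hqim
    have hP : P = monomial m₀ (coeff m₀ q) := by rw [← hqi, hqim]
    have hcq : coeff m₀ q ≠ 0 := MvPolynomial.mem_support_iff.1 hmq.1
    have hstrict : ∀ m ∈ q.support, m ≠ m₀ → lamWt (lamM M) m < lamWt (lamM M) m₀ :=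
      strict_wt_of_lamInit_monomial hq0 (by rw [hql, hP]) hcq
    have hdq : dq = d := by
      rw [← hqh m₀ hmq.1]
      exact hf'h m₀ hm₀f
    obtain ⟨cc, hccdef⟩ : ∃ cc : ℂ, cc = coeff m₀ (trunc n f') / coeff m₀ q := ⟨_, rfl⟩
    obtain ⟨f'', hf''def⟩ : ∃ f'' : Rng, f'' = f' - cc • q := ⟨_, rfl⟩
    have hf''A : f'' ∈ A := by rw [hf''def]; exact A.sub_mem hf'A (A.smul_mem hqA cc)
    have hsubsupp : f''.support ⊆ f'.support ∪ q.support := by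
      intro m hm
      have h1 : f'' = f' + (-cc) • q := by rw [hf''def, sub_eq_add_neg, neg_smul]
      rcases Finset.mem_union.1 (MvPolynomial.support_add (h1 ▸ hm)) with h | h
      · exact Finset.mem_union_left _ h
      · exact Finset.mem_union_right _ (MvPolynomial.support_smul h)
    have hf''h : Homog d f'' := by
      intro m hm
      rcases Finset.mem_union.1 (hsubsupp hm) with h | h
      · exact hf'h m h
      · rw [hqh m h, hdq]
    have hg' : trunc n f'' = trunc n f' - cc • trunc n q := by
      rw [hf''def, trunc_sub_smul]
    have hcg'm₀ : coeff m₀ (trunc n f'') = 0 := by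
      rw [hg', MvPolynomial.coeff_sub, MvPolynomial.coeff_smul,
        coeff_trunc_of_rn q hm₀r, hccdef]
      rw [smul_eq_mul, div_mul_cancel₀ _ hcq, sub_self]
    have hm₀g' : m₀ ∉ (trunc n f'').support := by
      rw [MvPolynomial.mem_support_iff]
      intro h; exact h hcg'm₀
    have hsupg' : ∀ m ∈ (trunc n f'').support,
        m ≠ m₀ ∧ (m ∈ (trunc n f').support ∨ m ∈ q.support) := by
      intro m hm
      refine ⟨fun h => hm₀g' (h ▸ hm), ?_⟩
      have h1 : trunc n f'' = trunc n f' + (-cc) • trunc n q := by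
        rw [hg', sub_eq_add_neg, neg_smul]
      rcases Finset.mem_union.1 (MvPolynomial.support_add (h1 ▸ hm)) with h | h
      · exact Or.inl h
      · exact Or.inr (supp_trunc_sub (MvPolynomial.support_smul h)).1
    have hdlt : ∀ m ∈ (trunc n f'').support, degRevLex (id : ℕ → ℕ) m m₀ := by
      intro m hm
      obtain ⟨hne, hor⟩ := hsupg' m hm
      rcases hor with h | h
      · exact hmaxg.2 m h hne
      · exact hmq.2 m h hne
    have hm₀Iic : m₀ ∈ Finset.Iic (uB n d) :=
      Finset.mem_Iic.2 (le_uB (hf'h m₀ hm₀f) hm₀r)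
    have hmono : msr n d (trunc n f'') < msr n d (trunc n f') := by
      apply Finset.card_lt_card
      rw [Finset.ssubset_iff_of_subset]
      · refine ⟨m₀, Finset.mem_filter.2 ⟨hm₀Iic, m₀, hmaxg.1, Or.inl rfl⟩, ?_⟩
        intro hc
        obtain ⟨-, m', hm', hor⟩ := Finset.mem_filter.1 hc
        rcases hor with heq | h
        · exact hm₀g' (heq ▸ hm')
        · exact dlt_irrefl m₀ (dlt_trans h (hdlt m' hm'))
      · intro m hm
        rw [Finset.mem_filter] at hm ⊢
        obtain ⟨hIic, m', hm', hor⟩ := hm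
        refine ⟨hIic, m₀, hmaxg.1, Or.inr ?_⟩
        rcases hor with heq | h
        · rw [heq]; exact hdlt m' hm'
        · exact dlt_trans h (hdlt m' hm')
    have hWg' : ∀ m ∈ (trunc n f'').support, lamWt (lamM M) m ≤ W := by
      intro m hm
      obtain ⟨hne, hor⟩ := hsupg' m hm
      rcases hor with h | h
      · exact hW m h
      · exact le_trans (le_of_lt (hstrict m h hne)) (hW m₀ hmaxg.1)
    have hIH : topW (lamM M) W (trunc n f'') ∈ B := by
      apply ih f'' hf''A hf''h _ W hWg'
      omega
    have htq : topW (lamM M) W (trunc n q) ∈ B := by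
      by_cases hWm : lamWt (lamM M) m₀ = W
      · have heq : topW (lamM M) W (trunc n q) = P := by
          rw [hP]
          ext x
          rw [coeff_topW, MvPolynomial.coeff_monomial]
          by_cases hx : x = m₀
          · subst hx
            rw [if_pos hWm, coeff_trunc_of_rn _ hm₀r, if_pos rfl]
          · rw [if_neg (fun h : m₀ = x => hx h.symm)]
            by_cases hxs : x ∈ (trunc n q).support
            · obtain ⟨hxq, -⟩ := supp_trunc_sub hxs
              rw [if_neg]
              intro hc
              have hlt := hstrict x hxq hx
              rw [hc, hWm] at hlt
              exact lt_irrefl _ hlt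
            · rw [MvPolynomial.notMem_support_iff.1 hxs]
              split_ifs <;> rfl
        rw [heq]
        exact hGB hPcl
      · have heq : topW (lamM M) W (trunc n q) = 0 := by
          ext x
          rw [coeff_topW, MvPolynomial.coeff_zero]
          by_cases hxs : x ∈ (trunc n q).support
          · obtain ⟨hxq, -⟩ := supp_trunc_sub hxs
            rw [if_neg]
            rcases eq_or_ne x m₀ with rfl | hne
            · exact hWm
            · intro hc
              have h1 := hstrict x hxq hne
              have h2 := hW m₀ hmaxg.1
              rw [hc] at h1
              exact absurd (lt_of_le_of_lt h2 h1) (lt_irrefl _)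
          · rw [MvPolynomial.notMem_support_iff.1 hxs]
            split_ifs <;> rfl
        rw [heq]
        exact B.zero_mem
    have hassemble : topW (lamM M) W (trunc n f')
        = topW (lamM M) W (trunc n f'') + cc • topW (lamM M) W (trunc n q) := by
      have h1 : trunc n f' = trunc n f'' + cc • trunc n q := by
        rw [hg', sub_add_cancel]
      rw [h1, topW_add_smul]
    rw [hassemble]
    exact B.add_mem hIH (B.smul_mem cc htq)

end S2

/-- If `A ⊆ ℂ[x₁,x₂,…]` is homogeneous with respect to total degree
and has a sagbi basis of total degree at most `M` with respect to the degree reverse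
lexicographic order, then there is a weight sequence `λ` with `in_λ(A) = in_<(A)`. -/
theorem statement2 (A : Subalgebra ℂ (MvPolynomial ℕ ℂ))
    (hAhomog : ∀ f ∈ A, ∀ d, totComp d f ∈ A)
    (M : ℕ) (s : ℕ → MvPolynomial ℕ ℂ)
    (hdeg : ∀ j, (s j).totalDegree ≤ M)
    (hgen : Algebra.adjoin ℂ (Set.range s) = A)
    (hsagbi : Subalgebra.toSubmodule
        (Algebra.adjoin ℂ (Set.range fun j => initTerm (degRevLex id) (s j))) =
      initSpan (degRevLex id) A) :
    ∃ lam : ℕ → ℝ, lamSpan lam A = initSpan (degRevLex id) A := by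
  refine ⟨S2.lamM M, ?_⟩
  have hBspan : initSpan (degRevLex id) A = Submodule.span ℂ
      ((Submonoid.closure (Set.range fun j => initTerm (degRevLex id) (s j)) :
        Submonoid (MvPolynomial ℕ ℂ)) : Set (MvPolynomial ℕ ℂ)) := by
    rw [← hsagbi, Algebra.adjoin_eq_span]
  have hsA : ∀ j, s j ∈ A := fun j => by
    rw [← hgen]; exact Algebra.subset_adjoin (Set.mem_range_self j)
  have hrep := S2.closure_rep M s hAhomog hdeg hsA
  have hinit : ∀ f ∈ A, f ≠ 0 → initTerm (degRevLex id) f ∈ Submodule.span ℂ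
      ((Submonoid.closure (Set.range fun j => initTerm (degRevLex id) (s j)) :
        Submonoid (MvPolynomial ℕ ℂ)) : Set (MvPolynomial ℕ ℂ)) := by
    intro f hf _
    rw [← hBspan]
    exact Submodule.subset_span ⟨f, hf, rfl⟩
  have hGB : ((Submonoid.closure (Set.range fun j => initTerm (degRevLex id) (s j)) :
        Submonoid (MvPolynomial ℕ ℂ)) : Set (MvPolynomial ℕ ℂ))
      ⊆ (initSpan (degRevLex id) A : Set (MvPolynomial ℕ ℂ)) := by
    intro P hP
    rw [hBspan]
    exact Submodule.subset_span hP
  apply le_antisymm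
  · apply Submodule.span_le.mpr
    rintro x ⟨f, hf, rfl⟩
    by_cases hf0 : f = 0
    · rw [hf0, S2.lamInit_zero]
      exact Submodule.zero_mem _
    obtain ⟨w, hw⟩ := S2.exists_wmax (S2.lamM M) hf0
    have hdecomp : lamInit (S2.lamM M) f
        = ∑ e ∈ Finset.range (f.totalDegree + 1), S2.topW (S2.lamM M) w (totComp e f) := by
      ext m
      rw [S2.coeff_lamInit_of_wmax hw, MvPolynomial.coeff_sum]
      have hterm : ∀ e ∈ Finset.range (f.totalDegree + 1),
          coeff m (S2.topW (S2.lamM M) w (totComp e f))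
            = if lamWt (S2.lamM M) m = w then (if S2.mdeg m = e then coeff m f else 0) else 0 := by
        intro e _
        rw [S2.coeff_topW, S2.coeff_totComp]
      rw [Finset.sum_congr rfl hterm]
      by_cases hwm : lamWt (S2.lamM M) m = w
      · simp only [if_pos hwm]
        rw [Finset.sum_ite_eq]
        by_cases hdm : S2.mdeg m ∈ Finset.range (f.totalDegree + 1)
        · rw [if_pos hdm]
        · rw [if_neg hdm]
          have hc0 : coeff m f = 0 := by
            by_contra hc
            apply hdm
            rw [Finset.mem_range, Nat.lt_succ_iff]
            exact Finset.le_sup (f := fun u => u.sum fun _ e => e)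
              (MvPolynomial.mem_support_iff.2 hc)
          rw [hc0]
      · simp only [if_neg hwm, Finset.sum_const_zero]
    rw [hdecomp]
    apply Submodule.sum_mem
    intro e _
    by_cases h0 : totComp e f = 0
    · rw [h0, S2.topW_zero]
      exact Submodule.zero_mem _
    have htr : S2.trunc ((totComp e f).support.sup (fun u => u.support.sup id)) (totComp e f)
        = totComp e f := by
      apply S2.trunc_eq_self
      intro u hu i hi
      calc i = id i := rfl
        _ ≤ u.support.sup id := Finset.le_sup hi
        _ ≤ _ := Finset.le_sup (f := fun u => u.support.sup id) hu
    have hWcond : ∀ m ∈ (S2.trunc ((totComp e f).support.sup (fun u => u.support.sup id))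
        (totComp e f)).support, lamWt (S2.lamM M) m ≤ w := by
      rw [htr]
      intro m hm
      exact hw.2 m (S2.supp_totComp e f hm)
    have hFIN := S2.FIN M A (initSpan (degRevLex id) A) _ hGB hinit hrep
      ((totComp e f).support.sup (fun u => u.support.sup id)) e
      (S2.msr ((totComp e f).support.sup (fun u => u.support.sup id)) e
        (S2.trunc ((totComp e f).support.sup (fun u => u.support.sup id)) (totComp e f)) + 1)
      (totComp e f) (hAhomog f hf e) (S2.homog_totComp e f) (by omega) w hWcond
    rwa [htr] at hFIN
  · rw [hBspan]
    apply Submodule.span_le.mpr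
    intro P hP
    obtain ⟨q, hqA, -, -, hql⟩ := hrep P hP
    exact Submodule.subset_span ⟨q, hqA, hql⟩
end
end

section
/- Let (P,≺) be a finite or countable poset, let P = O ⊔ C be a partition, and let Π_{O,C}(P,≺) be the associated interpolating polytope. Then for every k ∈ ℕ₀ and every integer point u in the k-fold dilation k·Π_{O,C}(P,≺) there exists a unique weakly increasing tuple J₁ ⊆ J₂ ⊆ … ⊆ J_k of finite order ideals of (P,≺) such that u = v_{O,C}(J₁) + v_{O,C}(J₂) + … + v_{O,C}(J_k). -/
open scoped Classical Pointwise

noncomputable section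

/-- The vertex `v_{O,C}(J)` of the interpolating polytope associated with a finite
order ideal `J`: coordinate `1` at `p` if `p ∈ J ∩ O` or `p` is a maximal element of
`J` lying in `C`, and `0` otherwise. -/
def vOC {P : Type*} [PartialOrder P] (O C : Set P) (J : Finset P) : P →₀ ℝ :=
  ∑ p ∈ J, if p ∈ O ∨ (p ∈ C ∧ ∀ q ∈ J, ¬ p < q) then Finsupp.single p 1 else 0

lemma vOC_apply {P : Type*} [PartialOrder P] (O C : Set P) (J : Finset P) (p : P) :
    vOC O C J p = if p ∈ J ∧ (p ∈ O ∨ (p ∈ C ∧ ∀ q ∈ J, ¬ p < q)) then 1 else 0 := by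
  rw [vOC, Finsupp.finset_sum_apply]
  have h : ∀ q ∈ J, ((if q ∈ O ∨ (q ∈ C ∧ ∀ r ∈ J, ¬ q < r) then Finsupp.single q (1:ℝ) else 0) p)
      = if q = p then (if q ∈ O ∨ (q ∈ C ∧ ∀ r ∈ J, ¬ q < r) then (1:ℝ) else 0) else 0 := by
    intro q _
    by_cases hc : q ∈ O ∨ (q ∈ C ∧ ∀ r ∈ J, ¬ q < r) <;>
      simp [hc, Finsupp.single_apply]
  rw [Finset.sum_congr rfl h, Finset.sum_ite_eq' J p]
  by_cases hp : p ∈ J <;> simp [hp]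

lemma fin_count (k a b : ℕ) (hb : b ≤ k) :
    ((Finset.univ : Finset (Fin k)).filter (fun i : Fin k => a ≤ (i:ℕ) ∧ (i:ℕ) < b)).card = b - a := by
  have h1 : ((Finset.univ : Finset (Fin k)).filter (fun i : Fin k => a ≤ (i:ℕ) ∧ (i:ℕ) < b)).card
      = ∑ i : Fin k, (fun n : ℕ => if a ≤ n ∧ n < b then 1 else 0) (i : ℕ) :=
    Finset.card_filter _ _
  rw [h1, Fin.sum_univ_eq_sum_range (fun n : ℕ => if a ≤ n ∧ n < b then 1 else 0) k,
    ← Finset.card_filter]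
  have h2 : (Finset.range k).filter (fun i => a ≤ i ∧ i < b) = Finset.Ico a b := by
    ext i
    simp only [Finset.mem_filter, Finset.mem_range, Finset.mem_Ico]
    exact ⟨fun ⟨_, h1, h2⟩ => ⟨h1, h2⟩, fun ⟨h1, h2⟩ => ⟨lt_of_lt_of_le h2 hb, h1, h2⟩⟩
  rw [h2, Nat.card_Ico]

lemma filter_lt_card_lt {P : Type*} [PartialOrder P] (P' : Finset P) {p q : P}
    (hpq : p < q) (hq : q ∈ P') :
    (P'.filter (fun r => q < r)).card < (P'.filter (fun r => p < r)).card := by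
  apply Finset.card_lt_card
  constructor
  · intro r hr
    simp only [Finset.mem_filter] at hr ⊢
    exact ⟨hr.1, lt_trans hpq hr.2⟩
  · intro hsub
    have hq' : q ∈ P'.filter (fun r => p < r) := by
      simp only [Finset.mem_filter]; exact ⟨hq, hpq⟩
    have := hsub hq'
    simp only [Finset.mem_filter] at this
    exact lt_irrefl q this.2

noncomputable def Yrec {P : Type*} [PartialOrder P] (O : Set P) (P' : Finset P)
    (w : P → ℕ) (p : P) : ℕ :=
  if p ∈ P' then
    if p ∈ O then w p
    else w p + (P'.filter (fun q => p < q)).attach.fold max 0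
      (fun q => Yrec O P' w q.1)
  else 0
termination_by (P'.filter (fun q => p < q)).card
decreasing_by
  have hq := q.2
  simp only [Finset.mem_filter] at hq
  exact filter_lt_card_lt P' hq.2 hq.1

lemma Yrec_notmem {P : Type*} [PartialOrder P] (O : Set P) (P' : Finset P)
    (w : P → ℕ) {p : P} (h : p ∉ P') : Yrec O P' w p = 0 := by
  rw [Yrec]; simp [h]

lemma Yrec_O {P : Type*} [PartialOrder P] (O : Set P) (P' : Finset P)
    (w : P → ℕ) {p : P} (h1 : p ∈ P') (h2 : p ∈ O) : Yrec O P' w p = w p := by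
  rw [Yrec]; simp [h1, h2]

lemma Yrec_C {P : Type*} [PartialOrder P] (O : Set P) (P' : Finset P)
    (w : P → ℕ) {p : P} (h1 : p ∈ P') (h2 : p ∉ O) :
    Yrec O P' w p = w p + (P'.filter (fun q => p < q)).attach.fold max 0
      (fun q => Yrec O P' w q.1) := by
  rw [Yrec]; simp [h1, h2]

lemma YleX {P : Type*} [PartialOrder P] (O : Set P) (P' : Finset P) (w : P → ℕ)
    (u X : P → ℝ) (hw : ∀ p, (w p : ℝ) = u p)
    (hXu : ∀ p, u p ≤ X p) (hX0 : ∀ p, 0 ≤ X p)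
    (hkey : ∀ p, p ∉ O → ∀ q, p < q → u p + X q ≤ X p) :
    ∀ p, (Yrec O P' w p : ℝ) ≤ X p := by
  suffices H : ∀ n (p : P), (P'.filter (fun q => p < q)).card < n → (Yrec O P' w p : ℝ) ≤ X p from
    fun p => H _ p (Nat.lt_succ_self _)
  intro n
  induction n with
  | zero => intro p hn; omega
  | succ n ih =>
    intro p hn
    by_cases h1 : p ∈ P'
    · by_cases h2 : p ∈ O
      · rw [Yrec_O O P' w h1 h2, hw]; exact hXu p
      · rw [Yrec_C O P' w h1 h2]
        set s := (P'.filter (fun q => p < q)).attach with hs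
        set f : {x // x ∈ P'.filter (fun q => p < q)} → ℕ := fun q => Yrec O P' w q.1 with hf
        set M := s.fold max 0 f with hM
        have hMcases := (Finset.le_fold_max (f := f) (b := 0) (s := s) M).mp le_rfl
        rcases hMcases with h | ⟨q, _, hq⟩
        · have hM0 : M = 0 := Nat.le_zero.mp h
          rw [hM0]
          push_cast
          rw [add_zero, hw]
          exact hXu p
        · have hfq : f q ≤ M := ((Finset.fold_max_le (f := f) (b := 0) (s := s) M).mp le_rfl).2
            q (Finset.mem_attach _ _)
          have hMq : M = f q := le_antisymm hq hfq
          have hqmem := q.2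
          simp only [Finset.mem_filter] at hqmem
          have hcard : (P'.filter (fun r => q.1 < r)).card < n := by
            have := filter_lt_card_lt P' hqmem.2 hqmem.1
            omega
          have hY := ih q.1 hcard
          push_cast
          rw [hw, hMq]
          calc u p + (f q : ℝ) ≤ u p + X q.1 := by
                exact add_le_add le_rfl hY
            _ ≤ X p := hkey p h2 q.1 hqmem.2
    · rw [Yrec_notmem O P' w h1]
      simpa using hX0 p

lemma Ymono {P : Type*} [PartialOrder P] (O : Set P) (P' : Finset P) (w : P → ℕ)
    (u X : P → ℝ) (hw : ∀ p, (w p : ℝ) = u p)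
    (hXu : ∀ p, u p ≤ X p) (hX0 : ∀ p, 0 ≤ X p)
    (hkey : ∀ p, p ∉ O → ∀ q, p < q → u p + X q ≤ X p)
    (hXO : ∀ p, p ∈ O → u p = X p)
    (hXmono : ∀ p q : P, p ≤ q → X q ≤ X p)
    (hP' : ∀ a ∈ P', ∀ b, b ≤ a → b ∈ P') :
    ∀ p q : P, p ≤ q → q ∈ P' → Yrec O P' w q ≤ Yrec O P' w p := by
  intro p q hpq hq
  rcases eq_or_lt_of_le hpq with rfl | hlt
  · exact le_rfl
  · have hp : p ∈ P' := hP' q hq p hpq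
    by_cases h2 : p ∈ O
    · rw [Yrec_O O P' w hp h2]
      have h3 : (Yrec O P' w q : ℝ) ≤ X q := YleX O P' w u X hw hXu hX0 hkey q
      have h4 : X q ≤ X p := hXmono p q hpq
      have h5 : (Yrec O P' w q : ℝ) ≤ (w p : ℝ) := by
        rw [hw, hXO p h2]
        exact le_trans h3 h4
      exact_mod_cast h5
    · rw [Yrec_C O P' w hp h2]
      have hqf : q ∈ P'.filter (fun r => p < r) := by
        simp only [Finset.mem_filter]; exact ⟨hq, hlt⟩
      have : Yrec O P' w q ≤ (P'.filter (fun r => p < r)).attach.fold max 0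
          (fun r => Yrec O P' w r.1) := by
        apply (Finset.le_fold_max _).mpr
        exact Or.inr ⟨⟨q, hqf⟩, Finset.mem_attach _ _, le_rfl⟩
      omega

lemma chain_char {P : Type*} [PartialOrder P] {k : ℕ} (Js : Fin k → Finset P)
    (hmono : ∀ i j : Fin k, i ≤ j → Js i ⊆ Js j) (p : P) (i : Fin k) :
    p ∈ Js i ↔ k ≤ (i:ℕ) + (Finset.univ.filter (fun j : Fin k => p ∈ Js j)).card := by
  constructor
  · intro hpi
    have hsub : Finset.univ.filter (fun j : Fin k => (i:ℕ) ≤ (j:ℕ) ∧ (j:ℕ) < k)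
        ⊆ Finset.univ.filter (fun j : Fin k => p ∈ Js j) := by
      intro j hj
      simp only [Finset.mem_filter, Finset.mem_univ, true_and] at hj ⊢
      exact hmono i j (Fin.le_def.mpr hj.1) hpi
    have h1 := Finset.card_le_card hsub
    rw [fin_count k (i:ℕ) k le_rfl] at h1
    have h2 : (i:ℕ) < k := i.isLt
    omega
  · intro hc
    by_contra hpi
    have hsub : Finset.univ.filter (fun j : Fin k => p ∈ Js j)
        ⊆ Finset.univ.filter (fun j : Fin k => (i:ℕ)+1 ≤ (j:ℕ) ∧ (j:ℕ) < k) := by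
      intro j hj
      simp only [Finset.mem_filter, Finset.mem_univ, true_and] at hj ⊢
      refine ⟨?_, j.isLt⟩
      by_contra hji
      exact hpi (hmono j i (Fin.le_def.mpr (by omega)) hj)
    have h1 := Finset.card_le_card hsub
    rw [fin_count k ((i:ℕ)+1) k le_rfl] at h1
    omega

lemma uniq_count {k : ℕ} (A : Fin k → Prop) (yJ yK : ℕ) (hyK : yK ≤ k) (hlt : yJ < yK)
    (hA : ∀ i : Fin k, (i:ℕ) + yJ < k → A i)
    (hcard : (Finset.univ.filter (fun i : Fin k => k ≤ (i:ℕ) + yJ ∧ A i)).card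
           = (Finset.univ.filter (fun i : Fin k => k ≤ (i:ℕ) + yK ∧ A i)).card) : False := by
  have hk : 0 < k := by omega
  set i₀ : Fin k := ⟨k - 1 - yJ, by omega⟩ with hi₀
  have hsub : (Finset.univ.filter (fun i : Fin k => k ≤ (i:ℕ) + yJ ∧ A i))
      ⊆ (Finset.univ.filter (fun i : Fin k => k ≤ (i:ℕ) + yK ∧ A i)) := by
    intro i hi
    simp only [Finset.mem_filter, Finset.mem_univ, true_and] at hi ⊢
    exact ⟨by omega, hi.2⟩
  have heq := Finset.eq_of_subset_of_card_le hsub (le_of_eq hcard.symm)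
  have hval : (i₀ : ℕ) = k - 1 - yJ := rfl
  have h1 : i₀ ∈ Finset.univ.filter (fun i : Fin k => k ≤ (i:ℕ) + yK ∧ A i) := by
    simp only [Finset.mem_filter, Finset.mem_univ, true_and]
    exact ⟨by omega, hA i₀ (by omega)⟩
  rw [← heq] at h1
  simp only [Finset.mem_filter, Finset.mem_univ, true_and] at h1
  omega

lemma uniq_chains {P : Type*} [PartialOrder P] (O C : Set P)
    (hOC : ∀ p : P, p ∉ O ↔ p ∈ C) (k : ℕ) (u : P →₀ ℝ)
    (Js Ks : Fin k → Finset P)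
    (hJid : ∀ i, ∀ a ∈ Js i, ∀ b, b ≤ a → b ∈ Js i)
    (hJmono : ∀ i j : Fin k, i ≤ j → Js i ⊆ Js j)
    (hJsum : u = ∑ i : Fin k, vOC O C (Js i))
    (hKid : ∀ i, ∀ a ∈ Ks i, ∀ b, b ≤ a → b ∈ Ks i)
    (hKmono : ∀ i j : Fin k, i ≤ j → Ks i ⊆ Ks j)
    (hKsum : u = ∑ i : Fin k, vOC O C (Ks i)) :
    Js = Ks := by
  set YJ : P → ℕ := fun p => (Finset.univ.filter (fun i : Fin k => p ∈ Js i)).card with hYJ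
  set YK : P → ℕ := fun p => (Finset.univ.filter (fun i : Fin k => p ∈ Ks i)).card with hYK
  have huJ : ∀ p : P, u p = ((Finset.univ.filter (fun i : Fin k =>
      p ∈ Js i ∧ (p ∈ O ∨ (p ∈ C ∧ ∀ q ∈ Js i, ¬ p < q)))).card : ℝ) := by
    intro p
    rw [hJsum, Finsupp.finset_sum_apply,
      Finset.sum_congr rfl (fun i _ => vOC_apply O C (Js i) p), Finset.sum_boole]
  have huK : ∀ p : P, u p = ((Finset.univ.filter (fun i : Fin k =>
      p ∈ Ks i ∧ (p ∈ O ∨ (p ∈ C ∧ ∀ q ∈ Ks i, ¬ p < q)))).card : ℝ) := by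
    intro p
    rw [hKsum, Finsupp.finset_sum_apply,
      Finset.sum_congr rfl (fun i _ => vOC_apply O C (Ks i) p), Finset.sum_boole]
  have hYJk : ∀ p, YJ p ≤ k := fun p => le_trans (Finset.card_filter_le _ _) (le_of_eq (Finset.card_fin k))
  have hYKk : ∀ p, YK p ≤ k := fun p => le_trans (Finset.card_filter_le _ _) (le_of_eq (Finset.card_fin k))
  have hmain : ∀ p, YJ p = YK p := by
    by_contra hne
    push_neg at hne
    set SF := (Finset.univ.biUnion Js) ∪ (Finset.univ.biUnion Ks) with hSF
    have hsuppJ : ∀ p, YJ p ≠ 0 → p ∈ SF := by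
      intro p h
      obtain ⟨i, hi⟩ := Finset.card_ne_zero.mp h
      simp only [Finset.mem_filter, Finset.mem_univ, true_and] at hi
      exact Finset.mem_union_left _ (Finset.mem_biUnion.mpr ⟨i, Finset.mem_univ i, hi⟩)
    have hsuppK : ∀ p, YK p ≠ 0 → p ∈ SF := by
      intro p h
      obtain ⟨i, hi⟩ := Finset.card_ne_zero.mp h
      simp only [Finset.mem_filter, Finset.mem_univ, true_and] at hi
      exact Finset.mem_union_right _ (Finset.mem_biUnion.mpr ⟨i, Finset.mem_univ i, hi⟩)
    set DF := SF.filter (fun p => YJ p ≠ YK p) with hDF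
    have hDFne : DF.Nonempty := by
      obtain ⟨p₀, hp₀⟩ := hne
      refine ⟨p₀, Finset.mem_filter.mpr ⟨?_, hp₀⟩⟩
      by_cases h : YJ p₀ = 0
      · exact hsuppK p₀ (by omega)
      · exact hsuppJ p₀ h
    obtain ⟨p, hpDF, hpmax⟩ : ∃ p ∈ DF, ∀ x ∈ DF, ¬ p < x := by
      obtain ⟨p, hp⟩ := Finset.exists_maximal hDFne
      exact ⟨p, hp.1, fun x hx hlt => lt_irrefl p (lt_of_lt_of_le hlt (hp.2 hx hlt.le))⟩
    have hpne : YJ p ≠ YK p := (Finset.mem_filter.mp hpDF).2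
    have habove : ∀ q, p < q → YJ q = YK q := by
      intro q hq
      by_contra h
      have hqSF : q ∈ SF := by
        by_cases h0 : YJ q = 0
        · exact hsuppK q (by omega)
        · exact hsuppJ q h0
      exact hpmax q (Finset.mem_filter.mpr ⟨hqSF, h⟩) hq
    apply hpne
    by_cases hpO : p ∈ O
    · have h1 : u p = (YJ p : ℝ) := by
        rw [huJ p, hYJ]
        congr 1
        apply congrArg
        apply Finset.filter_congr
        intro i _
        exact ⟨And.left, fun h => ⟨h, Or.inl hpO⟩⟩
      have h2 : u p = (YK p : ℝ) := by
        rw [huK p, hYK]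
        congr 1
        apply congrArg
        apply Finset.filter_congr
        intro i _
        exact ⟨And.left, fun h => ⟨h, Or.inl hpO⟩⟩
      exact_mod_cast h1 ▸ h2
    · have hpC : p ∈ C := (hOC p).mp hpO
      set A : Fin k → Prop := fun i => ∀ q, p < q → (i:ℕ) + YJ q < k with hA
      have hcondJ : ∀ i : Fin k, (p ∈ Js i ∧ (p ∈ O ∨ (p ∈ C ∧ ∀ q ∈ Js i, ¬ p < q)))
          ↔ (k ≤ (i:ℕ) + YJ p ∧ A i) := by
        intro i
        constructor
        · rintro ⟨h1, h2⟩
          refine ⟨(chain_char Js hJmono p i).mp h1, ?_⟩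
          intro q hq
          rcases h2 with h2 | ⟨_, h2⟩
          · exact absurd h2 hpO
          · by_contra h
            push_neg at h
            exact h2 q ((chain_char Js hJmono q i).mpr h) hq
        · rintro ⟨h1, h2⟩
          refine ⟨(chain_char Js hJmono p i).mpr h1, Or.inr ⟨hpC, ?_⟩⟩
          intro q hq hpq
          have hc' : k ≤ (i:ℕ) + YJ q := (chain_char Js hJmono q i).mp hq
          have := h2 q hpq
          omega
      have hcondK : ∀ i : Fin k, (p ∈ Ks i ∧ (p ∈ O ∨ (p ∈ C ∧ ∀ q ∈ Ks i, ¬ p < q)))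
          ↔ (k ≤ (i:ℕ) + YK p ∧ A i) := by
        intro i
        constructor
        · rintro ⟨h1, h2⟩
          refine ⟨(chain_char Ks hKmono p i).mp h1, ?_⟩
          intro q hq
          rcases h2 with h2 | ⟨_, h2⟩
          · exact absurd h2 hpO
          · by_contra h
            push_neg at h
            rw [habove q hq] at h
            exact h2 q ((chain_char Ks hKmono q i).mpr h) hq
        · rintro ⟨h1, h2⟩
          refine ⟨(chain_char Ks hKmono p i).mpr h1, Or.inr ⟨hpC, ?_⟩⟩
          intro q hq hpq
          have hc' : k ≤ (i:ℕ) + YK q := (chain_char Ks hKmono q i).mp hq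
          have h3 := h2 q hpq
          rw [habove q hpq] at h3
          omega
      have hcards : (Finset.univ.filter (fun i : Fin k => k ≤ (i:ℕ) + YJ p ∧ A i)).card
          = (Finset.univ.filter (fun i : Fin k => k ≤ (i:ℕ) + YK p ∧ A i)).card := by
        have e1 : u p = ((Finset.univ.filter (fun i : Fin k => k ≤ (i:ℕ) + YJ p ∧ A i)).card : ℝ) := by
          rw [huJ p]
          congr 2
          exact Finset.filter_congr (fun i _ => hcondJ i)
        have e2 : u p = ((Finset.univ.filter (fun i : Fin k => k ≤ (i:ℕ) + YK p ∧ A i)).card : ℝ) := by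
          rw [huK p]
          congr 2
          exact Finset.filter_congr (fun i _ => hcondK i)
        exact_mod_cast e1 ▸ e2
      have hYJmono : ∀ q, p < q → YJ q ≤ YJ p := by
        intro q hq
        apply Finset.card_le_card
        apply Finset.monotone_filter_right
        intro i _ hi
        exact hJid i q hi p (le_of_lt hq)
      have hYKmono : ∀ q, p < q → YK q ≤ YK p := by
        intro q hq
        apply Finset.card_le_card
        apply Finset.monotone_filter_right
        intro i _ hi
        exact hKid i q hi p (le_of_lt hq)
      rcases lt_trichotomy (YJ p) (YK p) with h | h | h
      · exact absurd hcards (by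
          intro hc
          exact uniq_count A (YJ p) (YK p) (hYKk p) h
            (fun i hik q hq =>
              lt_of_le_of_lt (Nat.add_le_add_left (hYJmono q hq) _) hik) hc)
      · exact h
      · exact absurd hcards.symm (by
          intro hc
          exact uniq_count A (YK p) (YJ p) (hYJk p) h
            (fun i hik q hq => by
              rw [habove q hq]
              exact lt_of_le_of_lt (Nat.add_le_add_left (hYKmono q hq) _) hik) hc)
  funext i
  ext p
  rw [chain_char Js hJmono p i, chain_char Ks hKmono p i]
  have hm : (Finset.filter (fun j : Fin k => p ∈ Js j) Finset.univ).card
      = (Finset.filter (fun j : Fin k => p ∈ Ks j) Finset.univ).card := hmain p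
  rw [hm]


/-- Every integer point of the `k`-fold dilation of the interpolating
polytope `Π_{O,C}(P,≺)` is the sum of the vertices `v_{O,C}(Jᵢ)` for a unique weakly
increasing `k`-tuple of finite order ideals `J₁ ⊆ … ⊆ J_k`. -/
theorem statement3 {P : Type*} [PartialOrder P] [Countable P]
    (O C : Set P) (hunion : O ∪ C = Set.univ) (hdisj : O ∩ C = ∅)
    (k : ℕ) (u : P →₀ ℝ) (hint : ∀ p : P, ∃ z : ℤ, u p = (z : ℝ))
    (hu : u ∈ (k : ℝ) • (convexHull ℝ
      {x : P →₀ ℝ | ∃ J : Finset P, (∀ a ∈ J, ∀ b, b ≤ a → b ∈ J) ∧ x = vOC O C J})) :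
    ∃! Js : Fin k → Finset P,
      (∀ i, ∀ a ∈ Js i, ∀ b, b ≤ a → b ∈ Js i) ∧
        (∀ i j : Fin k, i ≤ j → Js i ⊆ Js j) ∧
        u = ∑ i : Fin k, vOC O C (Js i) := by
  have hOC : ∀ p : P, p ∉ O ↔ p ∈ C := by
    intro p
    constructor
    · intro h
      have hm : p ∈ O ∪ C := hunion ▸ Set.mem_univ p
      rcases hm with h' | h'
      · exact absurd h' h
      · exact h'
    · intro hC hO
      have : p ∈ O ∩ C := ⟨hO, hC⟩
      rw [hdisj] at this
      exact this
  -- extract a convex representation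
  obtain ⟨wpt, hwpt, hux⟩ := Set.mem_smul_set.mp hu
  rw [convexHull_eq] at hwpt
  obtain ⟨ι, t, wc, z, hw0, hw1, hzS, hcm⟩ := hwpt
  simp only [Set.mem_setOf_eq] at hzS
  choose! Jf hJfid hJfz using hzS
  set μ : ι → ℝ := fun l => (k:ℝ) * wc l with hμ
  have hμ0 : ∀ l ∈ t, 0 ≤ μ l := fun l hl => mul_nonneg (Nat.cast_nonneg k) (hw0 l hl)
  have hμsum : ∑ l ∈ t, μ l = (k:ℝ) := by rw [hμ, ← Finset.mul_sum, hw1, mul_one]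
  have hrep : u = ∑ l ∈ t, μ l • vOC O C (Jf l) := by
    rw [← hux, ← hcm, Finset.centerMass_eq_of_sum_1 t z hw1, Finset.smul_sum]
    apply Finset.sum_congr rfl
    intro l hl
    rw [hJfz l hl, smul_smul]
  have hup : ∀ p, u p = ∑ l ∈ t, μ l * vOC O C (Jf l) p := by
    intro p
    rw [hrep, Finsupp.finset_sum_apply]
    apply Finset.sum_congr rfl
    intro l _
    rw [Finsupp.smul_apply, smul_eq_mul]
  set P' : Finset P := t.biUnion Jf with hP'
  have hP'id : ∀ a ∈ P', ∀ b, b ≤ a → b ∈ P' := by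
    intro a ha b hba
    obtain ⟨l, hl, hal⟩ := Finset.mem_biUnion.mp ha
    exact Finset.mem_biUnion.mpr ⟨l, hl, hJfid l hl a hal b hba⟩
  set X : P → ℝ := fun p => ∑ l ∈ t, μ l * (if p ∈ Jf l then 1 else 0) with hX
  have hv01 : ∀ (J : Finset P) (p : P), (0:ℝ) ≤ vOC O C J p := by
    intro J p
    rw [vOC_apply]
    split_ifs <;> norm_num
  have hvle : ∀ (J : Finset P) (p : P), vOC O C J p ≤ (if p ∈ J then (1:ℝ) else 0) := by
    intro J p
    rw [vOC_apply]
    by_cases hpJ : p ∈ J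
    · simp only [hpJ, if_true, true_and]
      split_ifs <;> norm_num
    · simp [hpJ]
  have hvO : ∀ (J : Finset P) (p : P), p ∈ O → vOC O C J p = (if p ∈ J then (1:ℝ) else 0) := by
    intro J p hpO
    rw [vOC_apply]
    by_cases hpJ : p ∈ J <;> simp [hpJ, hpO]
  have hvkey : ∀ l ∈ t, ∀ p, p ∉ O → ∀ q, p < q →
      vOC O C (Jf l) p + (if q ∈ Jf l then (1:ℝ) else 0) ≤ (if p ∈ Jf l then (1:ℝ) else 0) := by
    intro l hl p hpO q hpq
    by_cases hqJ : q ∈ Jf l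
    · have hpJ : p ∈ Jf l := hJfid l hl q hqJ p (le_of_lt hpq)
      have hz : vOC O C (Jf l) p = 0 := by
        rw [vOC_apply, if_neg]
        rintro ⟨-, h | ⟨-, h⟩⟩
        · exact hpO h
        · exact h q hqJ hpq
      simp [hz, hqJ, hpJ]
    · simp only [if_neg hqJ, add_zero]
      exact hvle (Jf l) p
  have hu0 : ∀ p, 0 ≤ u p := by
    intro p
    rw [hup p]
    exact Finset.sum_nonneg (fun l hl => mul_nonneg (hμ0 l hl) (hv01 _ p))
  have hXu : ∀ p, u p ≤ X p := by
    intro p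
    rw [hup p, hX]
    exact Finset.sum_le_sum fun l hl => mul_le_mul_of_nonneg_left (hvle _ p) (hμ0 l hl)
  have hX0 : ∀ p, 0 ≤ X p := by
    intro p
    rw [hX]
    apply Finset.sum_nonneg
    intro l hl
    apply mul_nonneg (hμ0 l hl)
    split_ifs <;> norm_num
  have hXk : ∀ p, X p ≤ (k:ℝ) := by
    intro p
    rw [hX]
    calc ∑ l ∈ t, μ l * (if p ∈ Jf l then (1:ℝ) else 0) ≤ ∑ l ∈ t, μ l := by
          apply Finset.sum_le_sum
          intro l hl
          apply mul_le_of_le_one_right (hμ0 l hl)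
          split_ifs <;> norm_num
      _ = (k:ℝ) := hμsum
  have hXO : ∀ p, p ∈ O → u p = X p := by
    intro p hpO
    rw [hup p, hX]
    exact Finset.sum_congr rfl fun l _ => by rw [hvO _ p hpO]
  have hXmono : ∀ p q : P, p ≤ q → X q ≤ X p := by
    intro p q hpq
    rw [hX]
    apply Finset.sum_le_sum
    intro l hl
    apply mul_le_mul_of_nonneg_left ?_ (hμ0 l hl)
    by_cases hq : q ∈ Jf l
    · have hp : p ∈ Jf l := hJfid l hl q hq p hpq
      simp [hq, hp]
    · simp only [hq, if_false]
      split_ifs <;> norm_num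
  have hkey : ∀ p, p ∉ O → ∀ q, p < q → u p + X q ≤ X p := by
    intro p hpO q hpq
    rw [hup p]
    have hXq : X q = ∑ l ∈ t, μ l * (if q ∈ Jf l then (1:ℝ) else 0) := rfl
    have hXp : X p = ∑ l ∈ t, μ l * (if p ∈ Jf l then (1:ℝ) else 0) := rfl
    rw [hXq, hXp, ← Finset.sum_add_distrib]
    apply Finset.sum_le_sum
    intro l hl
    rw [← mul_add]
    exact mul_le_mul_of_nonneg_left (hvkey l hl p hpO q hpq) (hμ0 l hl)
  have husupp : ∀ p, p ∉ P' → u p = 0 := by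
    intro p hp
    rw [hup p]
    apply Finset.sum_eq_zero
    intro l hl
    have hpJ : p ∉ Jf l := fun h => hp (Finset.mem_biUnion.mpr ⟨l, hl, h⟩)
    rw [vOC_apply, if_neg (fun h => hpJ h.1), mul_zero]
  set w : P → ℕ := fun p => ⌊u p⌋₊ with hwdef
  have hw : ∀ p, (w p : ℝ) = u p := by
    intro p
    obtain ⟨zz, hz⟩ := hint p
    have hz0 : (0:ℝ) ≤ (zz:ℝ) := hz ▸ hu0 p
    have hz0' : 0 ≤ zz := by exact_mod_cast hz0
    have hnat : u p = ((zz.toNat : ℕ) : ℝ) := by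
      rw [hz]
      exact_mod_cast (Int.toNat_of_nonneg hz0').symm
    rw [hwdef]
    simp only
    rw [hnat, Nat.floor_natCast]
  set Y : P → ℕ := fun p => Yrec O P' w p with hY
  have hYX : ∀ p, (Y p : ℝ) ≤ X p := fun p => YleX O P' w u X hw hXu hX0 hkey p
  have hYk : ∀ p, Y p ≤ k := by
    intro p
    have h := le_trans (hYX p) (hXk p)
    exact_mod_cast h
  have hYmono : ∀ p q : P, p ≤ q → q ∈ P' → Y q ≤ Y p :=
    fun p q => Ymono O P' w u X hw hXu hX0 hkey hXO hXmono hP'id p q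
  set Js : Fin k → Finset P := fun i => P'.filter (fun p => k ≤ (i:ℕ) + Y p) with hJs
  have hJsmem : ∀ (i : Fin k) (p : P), p ∈ Js i ↔ p ∈ P' ∧ k ≤ (i:ℕ) + Y p := by
    intro i p
    rw [hJs]
    simp [Finset.mem_filter]
  have hJsid : ∀ i, ∀ a ∈ Js i, ∀ b, b ≤ a → b ∈ Js i := by
    intro i a ha b hba
    rw [hJsmem] at ha ⊢
    obtain ⟨haP, hak⟩ := ha
    refine ⟨hP'id a haP b hba, ?_⟩
    have := hYmono b a hba haP
    omega
  have hJschain : ∀ i j : Fin k, i ≤ j → Js i ⊆ Js j := by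
    intro i j hij p hp
    rw [hJsmem] at hp ⊢
    have hij' : (i:ℕ) ≤ (j:ℕ) := Fin.le_def.mp hij
    exact ⟨hp.1, by omega⟩
  have hJssum : u = ∑ i : Fin k, vOC O C (Js i) := by
    ext p
    rw [Finsupp.finset_sum_apply,
      Finset.sum_congr rfl (fun i _ => vOC_apply O C (Js i) p)]
    by_cases hpP : p ∈ P'
    · by_cases hpO : p ∈ O
      · have hcong : ∀ i : Fin k, (p ∈ Js i ∧ (p ∈ O ∨ (p ∈ C ∧ ∀ q ∈ Js i, ¬ p < q)))
            ↔ ((k - Y p) ≤ (i:ℕ) ∧ (i:ℕ) < k) := by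
          intro i
          rw [hJsmem]
          constructor
          · rintro ⟨⟨-, h⟩, -⟩
            exact ⟨by omega, i.isLt⟩
          · rintro ⟨h1, -⟩
            have hYpk := hYk p
            exact ⟨⟨hpP, by omega⟩, Or.inl hpO⟩
        rw [Finset.sum_congr rfl (fun i _ => if_congr (hcong i) rfl rfl),
          Finset.sum_boole, fin_count k (k - Y p) k le_rfl]
        have hYpk := hYk p
        have he : k - (k - Y p) = Y p := by omega
        rw [he]
        have hYw : Y p = w p := Yrec_O O P' w hpP hpO
        rw [hYw, hw p]
      · have hpC : p ∈ C := (hOC p).mp hpO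
        set M := (P'.filter (fun q => p < q)).attach.fold max 0 (fun q => Yrec O P' w q.1)
          with hM
        have hYp : Y p = w p + M := by
          rw [hM]
          exact Yrec_C O P' w hpP hpO
        have hMle : ∀ q ∈ P', p < q → Y q ≤ M := by
          intro q hq hpq
          rw [hM]
          apply (Finset.le_fold_max _).mpr
          refine Or.inr ⟨⟨q, ?_⟩, Finset.mem_attach _ _, le_rfl⟩
          simp only [Finset.mem_filter]
          exact ⟨hq, hpq⟩
        have hMcase : M = 0 ∨ ∃ q ∈ P', p < q ∧ M = Y q := by
          rcases (Finset.le_fold_max M).mp hM.le with h | ⟨q, -, hq⟩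
          · exact Or.inl (Nat.le_zero.mp h)
          · have h2 := ((Finset.fold_max_le M).mp hM.ge).2 q (Finset.mem_attach _ _)
            have hqm := q.2
            simp only [Finset.mem_filter] at hqm
            exact Or.inr ⟨q.1, hqm.1, hqm.2, le_antisymm hq h2⟩
        have hcong : ∀ i : Fin k, (p ∈ Js i ∧ (p ∈ O ∨ (p ∈ C ∧ ∀ q ∈ Js i, ¬ p < q)))
            ↔ ((k - Y p) ≤ (i:ℕ) ∧ (i:ℕ) < k - M) := by
          intro i
          constructor
          · rintro ⟨h1, h2⟩
            rw [hJsmem] at h1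
            obtain ⟨-, h1⟩ := h1
            refine ⟨by omega, ?_⟩
            rcases h2 with h2 | ⟨-, h2⟩
            · exact absurd h2 hpO
            rcases hMcase with h0 | ⟨q, hqP, hpq, hMq⟩
            · have hik := i.isLt
              omega
            · have hqJ : q ∉ Js i := fun h => h2 q h hpq
              rw [hJsmem] at hqJ
              push_neg at hqJ
              have h3 := hqJ hqP
              omega
          · rintro ⟨h1, h2⟩
            have hYpk := hYk p
            refine ⟨by rw [hJsmem]; exact ⟨hpP, by omega⟩, Or.inr ⟨hpC, ?_⟩⟩
            intro q hqJ hpq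
            rw [hJsmem] at hqJ
            have h3 := hMle q hqJ.1 hpq
            have h4 := hqJ.2
            omega
        rw [Finset.sum_congr rfl (fun i _ => if_congr (hcong i) rfl rfl),
          Finset.sum_boole, fin_count k (k - Y p) (k - M) (Nat.sub_le k M)]
        have hYpk := hYk p
        have he : (k - M) - (k - Y p) = w p := by omega
        rw [he, hw p]
    · have h0 : ∀ i : Fin k,
          (if (p ∈ Js i ∧ (p ∈ O ∨ (p ∈ C ∧ ∀ q ∈ Js i, ¬ p < q))) then (1:ℝ) else 0) = 0 := by
        intro i
        rw [if_neg]
        rintro ⟨h1, -⟩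
        rw [hJsmem] at h1
        exact hpP h1.1
      rw [Finset.sum_congr rfl (fun i _ => h0 i), Finset.sum_const_zero, husupp p hpP]
  refine ⟨Js, ⟨hJsid, hJschain, hJssum⟩, ?_⟩
  rintro Ks ⟨hKid, hKmono, hKsum⟩
  exact uniq_chains O C hOC k u Ks Js hKid hKmono hKsum hJsid hJschain hJssum
end
end

section
/- Let (P,≺) be a finite or countable poset with a partition P = O ⊔ C. The monomials s^k · y^{v_{O,C}(J₁)+…+v_{O,C}(J_k)}, where J₁ ⊆ … ⊆ J_k ranges over all finite weakly increasing tuples of finite order ideals of (P,≺) (including the empty tuple for k = 0), form a ℂ-vector-space basis of the generalized Hibi ring A_{O,C}(P,≺). -/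
open scoped Classical

noncomputable section

open MvPolynomial

/-- The exponent vector of the generator of the generalized Hibi ring associated with
a finite order ideal `J`: one power of `s` (the variable `none`) and one power of
`y_p` for each `p ∈ J ∩ O` and each maximal element `p` of `J` lying in `C`. -/
def expOC {P : Type*} [PartialOrder P] (O C : Set P) (J : Finset P) : Option P →₀ ℕ :=
  Finsupp.single (none : Option P) 1 +
    ∑ p ∈ J, if p ∈ O ∨ (p ∈ C ∧ ∀ q ∈ J, ¬ p < q)
      then Finsupp.single (some p) 1 else 0

/-- The generator `s · y^{v_{O,C}(J)}` of the generalized Hibi ring. -/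
def hibiGen {P : Type*} [PartialOrder P] (O C : Set P) (J : Finset P) :
    MvPolynomial (Option P) ℂ :=
  monomial (expOC O C J) 1

/-- The generalized Hibi ring `A_{O,C}(P,≺)`: the subalgebra of `ℂ[P][s]` generated by
the monomials `s · y^{v_{O,C}(J)}` for all finite order ideals `J`. -/
def hibiRing {P : Type*} [PartialOrder P] (O C : Set P) :
    Subalgebra ℂ (MvPolynomial (Option P) ℂ) :=
  Algebra.adjoin ℂ
    {f | ∃ J : Finset P, (∀ a ∈ J, ∀ b, b ≤ a → b ∈ J) ∧ f = hibiGen O C J}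

/-- The set of monomials `s^k · y^{v_{O,C}(J₁) + … + v_{O,C}(J_k)}` over all finite
weakly increasing tuples `J₁ ⊆ … ⊆ J_k` of finite order ideals. -/
def hibiMonomials {P : Type*} [PartialOrder P] (O C : Set P) :
    Set (MvPolynomial (Option P) ℂ) :=
  {f | ∃ (k : ℕ) (Js : Fin k → Finset P),
    (∀ i, ∀ a ∈ Js i, ∀ b, b ≤ a → b ∈ Js i) ∧
    (∀ i j : Fin k, i ≤ j → Js i ⊆ Js j) ∧
    f = ∏ i : Fin k, hibiGen O C (Js i)}


section Aux

set_option maxHeartbeats 1000000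

variable {P : Type*} [PartialOrder P] (O C : Set P)

def IsIdl {P : Type*} [PartialOrder P] (J : Finset P) : Prop :=
  ∀ a ∈ J, ∀ b, b ≤ a → b ∈ J

@[reducible] def Mx {P : Type*} [PartialOrder P] (J : Finset P) (p : P) : Prop :=
  p ∈ J ∧ ∀ q ∈ J, ¬ p < q

lemma expOC_none (J : Finset P) : expOC O C J none = 1 := by
  unfold expOC
  rw [Finsupp.add_apply, Finsupp.single_apply, Finsupp.finset_sum_apply]
  have : ∀ q ∈ J, (if q ∈ O ∨ (q ∈ C ∧ ∀ r ∈ J, ¬ q < r)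
      then Finsupp.single (some q) (1:ℕ) else 0) none = 0 := by
    intro q _; split <;> simp
  rw [Finset.sum_congr rfl this]
  simp

lemma expOC_some (J : Finset P) (p : P) :
    expOC O C J (some p)
      = if p ∈ J ∧ (p ∈ O ∨ (p ∈ C ∧ ∀ q ∈ J, ¬ p < q)) then 1 else 0 := by
  unfold expOC
  rw [Finsupp.add_apply, Finsupp.single_apply, Finsupp.finset_sum_apply]
  have : ∀ q ∈ J, (if q ∈ O ∨ (q ∈ C ∧ ∀ r ∈ J, ¬ q < r)
      then Finsupp.single (some q) (1:ℕ) else 0) (some p)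
      = if q = p then (if q ∈ O ∨ (q ∈ C ∧ ∀ r ∈ J, ¬ q < r) then 1 else 0) else 0 := by
    intro q _
    rcases eq_or_ne q p with rfl | hqp
    · simp only [if_pos rfl]; split <;> simp
    · simp only [if_neg hqp]; split <;> simp [Finsupp.single_apply, hqp]
  rw [Finset.sum_congr rfl this, Finset.sum_ite_eq' J p]
  by_cases hp : p ∈ J <;> simp [hp, and_comm]


lemma straighten (hunion : O ∪ C = Set.univ) (hdisj : O ∩ C = ∅)
    {J J' : Finset P} (hJ : IsIdl J) (hJ' : IsIdl J') :
    ∃ K : Finset P, IsIdl K ∧ K ⊆ J ∩ J' ∧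
      expOC O C J + expOC O C J' = expOC O C K + expOC O C (J ∪ J') := by
  set R : Finset P := (J ∩ J').filter
    (fun p => (∀ q ∈ J, ¬ p < q) ∨ (∀ q ∈ J', ¬ p < q) ∨ p ∈ O) with hR
  set K : Finset P := (J ∩ J').filter (fun p => ∃ q ∈ R, p ≤ q) with hKdef
  have hIidl : IsIdl (J ∩ J') := by
    intro a ha b hb
    simp only [Finset.mem_inter] at ha ⊢
    exact ⟨hJ a ha.1 b hb, hJ' a ha.2 b hb⟩
  have hKI : K ⊆ J ∩ J' := Finset.filter_subset _ _
  have hKidl : IsIdl K := by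
    intro a ha b hb
    simp only [hKdef, Finset.mem_filter] at ha ⊢
    obtain ⟨haI, q, hq, haq⟩ := ha
    exact ⟨hIidl a haI b hb, q, hq, le_trans hb haq⟩
  refine ⟨K, hKidl, hKI, ?_⟩
  ext a
  rw [Finsupp.add_apply, Finsupp.add_apply]
  cases a with
  | none => rw [expOC_none, expOC_none, expOC_none, expOC_none]
  | some p =>
    rw [expOC_some, expOC_some, expOC_some, expOC_some]
    have hC : p ∉ O → p ∈ C := by
      intro h
      have := Set.mem_univ p
      rw [← hunion] at this
      exact (Set.mem_union _ _ _).1 this |>.resolve_left h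
    have hnotboth : p ∈ O → p ∉ C := by
      intro h1 h2
      have : p ∈ O ∩ C := ⟨h1, h2⟩
      rw [hdisj] at this; exact this
    by_cases hpO : p ∈ O
    · -- order case
      have hOC := hnotboth hpO
      have hKiff : p ∈ K ↔ p ∈ J ∧ p ∈ J' := by
        constructor
        · intro h; have := hKI h; simpa [Finset.mem_inter] using this
        · intro h
          simp only [hKdef, Finset.mem_filter, Finset.mem_inter]
          refine ⟨⟨h.1, h.2⟩, p, ?_, le_refl p⟩
          simp only [hR, Finset.mem_filter, Finset.mem_inter]
          tauto
      by_cases h1 : p ∈ J <;> by_cases h2 : p ∈ J' <;>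
        simp [h1, h2, hpO, hOC, hKiff, Finset.mem_union]
    · -- chain case
      have hpC := hC hpO
      have fact2 : Mx (J ∪ J') p → p ∈ J → Mx J p := by
        rintro ⟨_, h⟩ hp
        exact ⟨hp, fun q hq => h q (Finset.mem_union_left _ hq)⟩
      have fact2' : Mx (J ∪ J') p → p ∈ J' → Mx J' p := by
        rintro ⟨_, h⟩ hp
        exact ⟨hp, fun q hq => h q (Finset.mem_union_right _ hq)⟩
      have fact1 : Mx J p → Mx J' p → Mx (J ∪ J') p := by
        rintro ⟨h1, h2⟩ ⟨h3, h4⟩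
        refine ⟨Finset.mem_union_left _ h1, fun q hq => ?_⟩
        rcases Finset.mem_union.1 hq with h | h
        exacts [h2 q h, h4 q h]
      have fact3 : Mx J p → p ∉ J' → Mx (J ∪ J') p := by
        rintro ⟨h1, h2⟩ hnp
        refine ⟨Finset.mem_union_left _ h1, fun q hq hlt => ?_⟩
        rcases Finset.mem_union.1 hq with h | h
        · exact h2 q h hlt
        · exact hnp (hJ' q h p hlt.le)
      have fact3' : Mx J' p → p ∉ J → Mx (J ∪ J') p := by
        rintro ⟨h1, h2⟩ hnp
        refine ⟨Finset.mem_union_right _ h1, fun q hq hlt => ?_⟩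
        rcases Finset.mem_union.1 hq with h | h
        · exact hnp (hJ q h p hlt.le)
        · exact h2 q h hlt
      have fact4 : Mx K p ↔ (p ∈ J ∧ p ∈ J') ∧ (Mx J p ∨ Mx J' p) := by
        constructor
        · rintro ⟨hpK, hmax⟩
          have hpI := hKI hpK
          rw [Finset.mem_inter] at hpI
          refine ⟨hpI, ?_⟩
          -- p ∈ K means p ≤ q for some q ∈ R; q ∈ R ⊆ K; maximality forces q = p
          simp only [hKdef, Finset.mem_filter] at hpK
          obtain ⟨_, q, hqR, hpq⟩ := hpK
          have hqK : q ∈ K := by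
            simp only [hKdef, Finset.mem_filter]
            exact ⟨Finset.filter_subset _ _ hqR, q, hqR, le_refl q⟩
          have hqp : q = p := by
            by_contra hne
            exact hmax q hqK (lt_of_le_of_ne hpq (Ne.symm hne))
          subst hqp
          simp only [hR, Finset.mem_filter] at hqR
          rcases hqR.2 with h | h | h
          · exact Or.inl ⟨hpI.1, h⟩
          · exact Or.inr ⟨hpI.2, h⟩
          · exact absurd h hpO
        · rintro ⟨⟨hp1, hp2⟩, hm⟩
          have hpR : p ∈ R := by
            simp only [hR, Finset.mem_filter, Finset.mem_inter]
            rcases hm with ⟨_, h⟩ | ⟨_, h⟩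
            · exact ⟨⟨hp1, hp2⟩, Or.inl h⟩
            · exact ⟨⟨hp1, hp2⟩, Or.inr (Or.inl h)⟩
          have hpK : p ∈ K := by
            simp only [hKdef, Finset.mem_filter, Finset.mem_inter]
            exact ⟨⟨hp1, hp2⟩, p, hpR, le_refl p⟩
          refine ⟨hpK, fun q hq hlt => ?_⟩
          have hqI := hKI hq
          rw [Finset.mem_inter] at hqI
          rcases hm with ⟨_, h⟩ | ⟨_, h⟩
          · exact h q hqI.1 hlt
          · exact h q hqI.2 hlt
      -- now the arithmetic case analysis
      have hiff : ∀ X : Finset P,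
          (p ∈ X ∧ (p ∈ O ∨ (p ∈ C ∧ ∀ q ∈ X, ¬ p < q))) ↔ Mx X p := by
        intro X
        constructor
        · rintro ⟨h, hc⟩
          exact ⟨h, ((hc.resolve_left hpO).2)⟩
        · rintro ⟨h, hm⟩
          exact ⟨h, Or.inr ⟨hpC, hm⟩⟩
      have hiJ := hiff J
      have hiJ' := hiff J'
      have hiU := hiff (J ∪ J')
      have hiK := hiff K
      rw [if_congr hiJ rfl rfl, if_congr hiJ' rfl rfl, if_congr hiK rfl rfl,
        if_congr hiU rfl rfl]
      by_cases m1 : Mx J p <;> by_cases m2 : Mx J' p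
      · have hU : Mx (J ∪ J') p := fact1 m1 m2
        have hK : Mx K p := fact4.2 ⟨⟨m1.1, m2.1⟩, Or.inl m1⟩
        rw [if_pos m1, if_pos m2, if_pos hK, if_pos hU]
      · by_cases h2 : p ∈ J'
        · have hK : Mx K p := fact4.2 ⟨⟨m1.1, h2⟩, Or.inl m1⟩
          have hU : ¬ Mx (J ∪ J') p := fun h => m2 (fact2' h h2)
          rw [if_pos m1, if_neg m2, if_pos hK, if_neg hU]
        · have hK : ¬ Mx K p := fun h => h2 (fact4.1 h).1.2
          have hU : Mx (J ∪ J') p := fact3 m1 h2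
          rw [if_pos m1, if_neg m2, if_neg hK, if_pos hU]
      · by_cases h1 : p ∈ J
        · have hK : Mx K p := fact4.2 ⟨⟨h1, m2.1⟩, Or.inr m2⟩
          have hU : ¬ Mx (J ∪ J') p := fun h => m1 (fact2 h h1)
          rw [if_neg m1, if_pos m2, if_pos hK, if_neg hU]
        · have hK : ¬ Mx K p := fun h => h1 (fact4.1 h).1.1
          have hU : Mx (J ∪ J') p := fact3' m2 h1
          rw [if_neg m1, if_pos m2, if_neg hK, if_pos hU]
      · have hK : ¬ Mx K p := fun h => (fact4.1 h).2.elim m1 m2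
        have hU : ¬ Mx (J ∪ J') p := fun h => by
          rcases Finset.mem_union.1 h.1 with h' | h'
          exacts [m1 (fact2 h h'), m2 (fact2' h h')]
        rw [if_neg m1, if_neg m2, if_neg hK, if_neg hU]


lemma isIdl_union {J J' : Finset P} (hJ : IsIdl J) (hJ' : IsIdl J') : IsIdl (J ∪ J') := by
  intro a ha b hb
  rcases Finset.mem_union.1 ha with h | h
  · exact Finset.mem_union_left _ (hJ a h b hb)
  · exact Finset.mem_union_right _ (hJ' a h b hb)

lemma insertChain (hunion : O ∪ C = Set.univ) (hdisj : O ∩ C = ∅) :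
    ∀ L : List (Finset P), (∀ X ∈ L, IsIdl X) →
      List.Chain' (fun a b => b ⊆ a) L → ∀ J : Finset P, IsIdl J →
      ∃ M : List (Finset P), (∀ X ∈ M, IsIdl X) ∧
        List.Chain' (fun a b => b ⊆ a) M ∧
        (M.map (expOC O C)).sum = expOC O C J + (L.map (expOC O C)).sum ∧
        ∀ X ∈ M, X ⊆ J ∪ L.headD ∅ := by
  intro L
  induction L with
  | nil =>
    intro _ _ J hJ
    refine ⟨[J], ?_, ?_, ?_, ?_⟩
    · intro X hX; rw [List.mem_singleton] at hX; subst hX; exact hJ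
    · simp [List.Chain']
    · simp
    · intro X hX; rw [List.mem_singleton] at hX; subst hX
      simp
  | cons T rest ih =>
    intro hidl hchain J hJ
    have hT : IsIdl T := hidl T List.mem_cons_self
    obtain ⟨K, hKidl, hKsub, hstr⟩ := straighten O C hunion hdisj hJ hT
    have hrestchain : List.Chain' (fun a b => b ⊆ a) rest := hchain.tail
    have hrestidl : ∀ X ∈ rest, IsIdl X := fun X hX => hidl X (List.mem_cons_of_mem _ hX)
    obtain ⟨M', hM'idl, hM'chain, hM'sum, hM'bound⟩ := ih hrestidl hrestchain K hKidl
    have hheadT : rest.headD ∅ ⊆ T := by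
      cases rest with
      | nil => simp
      | cons r t => exact (List.isChain_cons_cons.1 hchain).1
    have hKT : K ⊆ T := fun x hx => (Finset.mem_inter.1 (hKsub hx)).2
    have hM'T : ∀ X ∈ M', X ⊆ T := fun X hX =>
      subset_trans (hM'bound X hX) (Finset.union_subset hKT hheadT)
    refine ⟨(J ∪ T) :: M', ?_, ?_, ?_, ?_⟩
    · intro X hX
      rcases List.mem_cons.1 hX with rfl | h
      · exact isIdl_union hJ hT
      · exact hM'idl X h
    · rw [List.Chain', List.isChain_cons]
      refine ⟨fun b hb => ?_, hM'chain⟩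
      have : b ∈ M' := by
        cases M' with
        | nil => simp at hb
        | cons a l => simp at hb; subst hb; exact List.mem_cons_self
      exact subset_trans (hM'T b this) Finset.subset_union_right
    · rw [List.map_cons, List.sum_cons, hM'sum, List.map_cons, List.sum_cons,
        ← add_assoc, add_comm (expOC O C (J ∪ T)) (expOC O C K), ← hstr, add_assoc]
    · intro X hX
      rcases List.mem_cons.1 hX with rfl | h
      · simp
      · have hx : X ⊆ J ∪ T := subset_trans (hM'T X h) Finset.subset_union_right
        simpa using hx

lemma sortAll (hunion : O ∪ C = Set.univ) (hdisj : O ∩ C = ∅) :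
    ∀ L : List (Finset P), (∀ X ∈ L, IsIdl X) →
      ∃ M : List (Finset P), (∀ X ∈ M, IsIdl X) ∧
        List.Chain' (fun a b => b ⊆ a) M ∧
        (M.map (expOC O C)).sum = (L.map (expOC O C)).sum := by
  intro L
  induction L with
  | nil => exact fun _ => ⟨[], by simp, by simp [List.Chain'], by simp⟩
  | cons J rest ih =>
    intro hidl
    obtain ⟨M₀, hM₀idl, hM₀chain, hM₀sum⟩ :=
      ih (fun X hX => hidl X (List.mem_cons_of_mem _ hX))
    obtain ⟨M, hMidl, hMchain, hMsum, _⟩ :=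
      insertChain O C hunion hdisj M₀ hM₀idl hM₀chain J (hidl J List.mem_cons_self)
    exact ⟨M, hMidl, hMchain, by rw [hMsum, hM₀sum]; simp⟩

lemma sum_fin_get {α β : Type*} [AddCommMonoid β] (f : α → β) :
    ∀ l : List α, (∑ i : Fin l.length, f (l.get i)) = (l.map f).sum := by
  intro l
  induction l with
  | nil => simp
  | cons a t ih => rw [List.map_cons, List.sum_cons, ← ih]; simp [Fin.sum_univ_succ]

lemma prod_monomial {ι σ : Type*} (s : Finset ι) (f : ι → (σ →₀ ℕ)) :
    (∏ i ∈ s, (MvPolynomial.monomial (f i) (1 : ℂ))) = MvPolynomial.monomial (∑ i ∈ s, f i) 1 := by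
  classical
  induction s using Finset.induction_on with
  | empty => simp
  | insert a s hx ih =>
    rw [Finset.prod_insert hx, Finset.sum_insert hx, ih, MvPolynomial.monomial_mul, one_mul]

end Aux

/-- The monomials `s^k · y^{v_{O,C}(J₁)+…+v_{O,C}(J_k)}`, over all
finite weakly increasing tuples of finite order ideals, form a ℂ-basis of the
generalized Hibi ring `A_{O,C}(P,≺)`. -/
theorem statement4 {P : Type*} [PartialOrder P] [Countable P]
    (O C : Set P) (hunion : O ∪ C = Set.univ) (hdisj : O ∩ C = ∅) :
    LinearIndependent ℂ
        (fun f : hibiMonomials O C => (f : MvPolynomial (Option P) ℂ)) ∧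
      Submodule.span ℂ (hibiMonomials O C) =
        Subalgebra.toSubmodule (hibiRing O C) := by
  classical
  set S : Set (MvPolynomial (Option P) ℂ) :=
    {f | ∃ J : Finset P, (∀ a ∈ J, ∀ b, b ≤ a → b ∈ J) ∧ f = hibiGen O C J} with hS
  -- every hibi monomial is a monomial with coefficient 1
  have hprod : ∀ (k : ℕ) (Js : Fin k → Finset P),
      (∏ i : Fin k, hibiGen O C (Js i))
        = monomial (∑ i : Fin k, expOC O C (Js i)) (1 : ℂ) := by
    intro k Js
    simpa [hibiGen] using prod_monomial (Finset.univ : Finset (Fin k)) (fun i => expOC O C (Js i))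
  -- membership of chain-list monomials in hibiMonomials
  have hchain_mem : ∀ M : List (Finset P), (∀ X ∈ M, IsIdl X) →
      List.Chain' (fun a b => b ⊆ a) M →
      (monomial ((M.map (expOC O C)).sum) (1 : ℂ)) ∈ hibiMonomials O C := by
    intro M hMidl hMchain
    set L : List (Finset P) := M.reverse with hL
    have hLchain : List.Chain' (· ⊆ ·) L := by
      rw [hL, List.Chain', List.isChain_reverse]
      exact hMchain
    have hLpair : ∀ i j : Fin L.length, i < j → L.get i ⊆ L.get j := by
      have := List.isChain_iff_pairwise.1 hLchain
      exact List.pairwise_iff_get.1 this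
    refine ⟨L.length, fun i => L.get i, ?_, ?_, ?_⟩
    · intro i
      have hmem : L.get i ∈ M.reverse := L.get_mem i
      exact hMidl _ (List.mem_reverse.mp hmem)
    · intro i j hij
      rcases eq_or_lt_of_le hij with rfl | h
      · exact subset_rfl
      · exact hLpair i j h
    · rw [hprod, sum_fin_get (expOC O C) L, hL, List.map_reverse, List.sum_reverse]
  -- every element of the closure of S is such a monomial over a list of ideals
  have hclosure : ∀ x ∈ Submonoid.closure S,
      ∃ Ls : List (Finset P), (∀ X ∈ Ls, IsIdl X) ∧
        x = monomial ((Ls.map (expOC O C)).sum) (1 : ℂ) := by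
    intro x hx
    induction hx using Submonoid.closure_induction with
    | mem x hxS =>
      obtain ⟨J, hJ, rfl⟩ := hxS
      refine ⟨[J], ?_, ?_⟩
      · intro X hX; rw [List.mem_singleton] at hX; subst hX; exact hJ
      · simp [hibiGen]
    | one => exact ⟨[], by simp, by simp [MvPolynomial.monomial_zero']⟩
    | mul x y hxc hyc ihx ihy =>
      obtain ⟨L1, hL1, rfl⟩ := ihx
      obtain ⟨L2, hL2, rfl⟩ := ihy
      refine ⟨L1 ++ L2, ?_, ?_⟩
      · intro X hX
        rcases List.mem_append.1 hX with h | h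
        exacts [hL1 X h, hL2 X h]
      · rw [List.map_append, List.sum_append, MvPolynomial.monomial_mul, one_mul]
  -- closure of S is contained in hibiMonomials
  have hclosure_sub : (Submonoid.closure S : Set (MvPolynomial (Option P) ℂ))
      ⊆ hibiMonomials O C := by
    intro x hx
    obtain ⟨Ls, hLs, rfl⟩ := hclosure x hx
    obtain ⟨M, hMidl, hMchain, hMsum⟩ := sortAll O C hunion hdisj Ls hLs
    rw [← hMsum]
    exact hchain_mem M hMidl hMchain
  -- hibiMonomials is contained in the closure of S
  have hmono_sub : hibiMonomials O C ⊆ (Submonoid.closure S : Set (MvPolynomial (Option P) ℂ)) := by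
    rintro f ⟨k, Js, hidl, _, rfl⟩
    refine Submonoid.prod_mem _ (fun i _ => ?_)
    exact Submonoid.subset_closure ⟨Js i, hidl i, rfl⟩
  constructor
  · -- linear independence
    have h1 := (MvPolynomial.basisMonomials (Option P) ℂ).linearIndependent
    rw [MvPolynomial.coe_basisMonomials] at h1
    have h2 := (linearIndepOn_id_range_iff h1.injective).2 h1
    have hsub : hibiMonomials O C ⊆
        Set.range (fun u : Option P →₀ ℕ => (monomial u (1 : ℂ))) := by
      rintro f ⟨k, Js, _, _, rfl⟩
      exact ⟨∑ i : Fin k, expOC O C (Js i), (hprod k Js).symm⟩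
    exact h2.mono hsub
  · -- span equality
    rw [hibiRing, Algebra.adjoin_eq_span]
    exact le_antisymm (Submodule.span_mono hmono_sub) (Submodule.span_mono hclosure_sub)
end
end

section
/- Fix integers 1 ≤ p < n. The map φ_pbw is an isomorphism of posets from (𝒥_pbw, ≺_pbw), the set of PBW tuples with the order ⪯_pbw, to the set 𝒥(Q) of order ideals of the poset (Q,≺) ordered by inclusion. -/
open scoped Classical

noncomputable section

open MvPolynomial

/-- The Plücker minor `D_I`: the determinant of the `p×p` matrix whose `j`-th column
is the `α j`-th column of the generic `p×n` matrix of variables `z_{i,j}`. -/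
def Dmin (p n : ℕ) (α : Fin p → Fin n) : MvPolynomial (Fin p × Fin n) ℂ :=
  (Matrix.of fun i j : Fin p => (X (i, α j) : MvPolynomial (Fin p × Fin n) ℂ)).det

/-- The Plücker algebra `𝒫`: the subalgebra generated by all minors `D_I`. -/
def Pluecker (p n : ℕ) : Subalgebra ℂ (MvPolynomial (Fin p × Fin n) ℂ) :=
  Algebra.adjoin ℂ (Set.range (Dmin p n))

/-- `α` is a PBW tuple (0-indexed version): the entries are pairwise distinct, entries
`< p` stand at the position equal to their value, and entries `≥ p` appear in
decreasing order. -/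
def IsPBW (p n : ℕ) (α : Fin p → Fin n) : Prop :=
  Function.Injective α ∧ (∀ j : Fin p, (α j : ℕ) < p → (α j : ℕ) = (j : ℕ)) ∧
    ∀ j k : Fin p, p ≤ (α k : ℕ) → (α k : ℕ) < (α j : ℕ) → j < k

/-- The position of the variable `z_{i,j}` in the PBW ordering of the variables: first
by row, then cyclically within the `i`-th row starting with `z_{i,i}`. -/
def rankPBW (p n : ℕ) (x : Fin p × Fin n) : ℕ :=
  (x.1 : ℕ) * n + ((x.2 : ℕ) + n - (x.1 : ℕ)) % n
/-- The poset `Q`: elements `q_{i,j}` with `1 ≤ i ≤ p` and `p+1 ≤ j ≤ n`. -/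
abbrev Qfin (p n : ℕ) := {x : ℕ × ℕ // 1 ≤ x.1 ∧ x.1 ≤ p ∧ p + 1 ≤ x.2 ∧ x.2 ≤ n}

/-- The order on `Q`: `q_{i₁,j₁} ⪯ q_{i₂,j₂}` iff `i₁ ≤ i₂` and `j₁ ≤ j₂`. -/
def qleF (p n : ℕ) (a b : Qfin p n) : Prop :=
  a.val.1 ≤ b.val.1 ∧ a.val.2 ≤ b.val.2

/-- The order ideal `φ_pbw(I)` of `Q`: for a PBW tuple `α` it is the order ideal
generated by the antichain `L = {q_{j,α_j} : α_j > p}` (i.e. the unique order ideal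
whose set of maximal elements is `L`). -/
def phiPBWset (p n : ℕ) (α : Fin p → Fin n) : Set (Qfin p n) :=
  {q | ∃ j : Fin p, p ≤ (α j : ℕ) ∧ q.val.1 ≤ (j : ℕ) + 1 ∧ q.val.2 ≤ (α j : ℕ) + 1}

/-- The order `⪯_pbw` on PBW tuples: `I ⪯_pbw I'` iff for every `k` there is `l ≥ k`
with `α'_l ≥ α_k`. -/
def pbwLeFin (p n : ℕ) (α α' : Fin p → Fin n) : Prop :=
  ∀ a : Fin p, ∃ b : Fin p, a ≤ b ∧ (α a : ℕ) ≤ (α' b : ℕ)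

namespace S7Aux

/-- Sup of columns present in row `a+1` of a set `S ⊆ Q`, joined with `p`. -/
def rowSup (p n : ℕ) (S : Set (Qfin p n)) (a : ℕ) : ℕ :=
  p ⊔ (Finset.Icc (p + 1) n).sup
    (fun j => if ∃ q : Qfin p n, q ∈ S ∧ q.val = (a + 1, j) then j else 0)

lemma p_le_rowSup (p n : ℕ) (S : Set (Qfin p n)) (a : ℕ) : p ≤ rowSup p n S a :=
  le_sup_left

lemma le_rowSup {p n : ℕ} {S : Set (Qfin p n)} {a j : ℕ} (q : Qfin p n) (hq : q ∈ S)
    (hv : q.val = (a + 1, j)) : j ≤ rowSup p n S a := by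
  have hb := q.property
  rw [hv] at hb
  have hmem : j ∈ Finset.Icc (p + 1) n := Finset.mem_Icc.mpr ⟨hb.2.2.1, hb.2.2.2⟩
  have he : (if ∃ q : Qfin p n, q ∈ S ∧ q.val = (a + 1, j) then j else 0) = j :=
    if_pos ⟨q, hq, hv⟩
  have h1 := Finset.le_sup
    (f := fun j => if ∃ q : Qfin p n, q ∈ S ∧ q.val = (a + 1, j) then j else 0) hmem
  rw [he] at h1
  exact le_trans h1 le_sup_right

lemma rowSup_le_n {p n : ℕ} (hpn : p < n) (S : Set (Qfin p n)) (a : ℕ) :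
    rowSup p n S a ≤ n := by
  refine sup_le (le_of_lt hpn) (Finset.sup_le fun j hj => ?_)
  split
  · exact (Finset.mem_Icc.mp hj).2
  · exact Nat.zero_le n

lemma rowSup_attained {p n : ℕ} {S : Set (Qfin p n)} {a : ℕ} (hpn : p < n)
    (h : p < rowSup p n S a) :
    ∃ q : Qfin p n, q ∈ S ∧ q.val = (a + 1, rowSup p n S a) := by
  set f : ℕ → ℕ := fun j => if ∃ q : Qfin p n, q ∈ S ∧ q.val = (a + 1, j) then j else 0 with hf
  have hne : (Finset.Icc (p + 1) n).Nonempty := ⟨p + 1, Finset.mem_Icc.mpr ⟨le_rfl, hpn⟩⟩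
  have ht : rowSup p n S a = (Finset.Icc (p + 1) n).sup f := by
    have h2 : rowSup p n S a = p ⊔ (Finset.Icc (p + 1) n).sup f := rfl
    rw [h2] at h ⊢
    omega
  obtain ⟨j, hj, hje⟩ := Finset.exists_mem_eq_sup (Finset.Icc (p + 1) n) hne f
  rw [ht, hje]
  have hpos : 0 < f j := by rw [← hje, ← ht]; omega
  have hcond : ∃ q : Qfin p n, q ∈ S ∧ q.val = (a + 1, j) := by
    by_contra hc
    simp only [hf, if_neg hc] at hpos
    exact lt_irrefl 0 hpos
  have hfj : f j = j := if_pos hcond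
  rw [hfj]
  exact hcond

lemma rowSup_anti {p n : ℕ} {S : Set (Qfin p n)}
    (hS : ∀ a ∈ S, ∀ b, qleF p n b a → b ∈ S) {a b : ℕ} (hab : a ≤ b) :
    rowSup p n S b ≤ rowSup p n S a := by
  refine sup_le (p_le_rowSup p n S a) (Finset.sup_le fun j hj => ?_)
  split
  · rename_i hc
    obtain ⟨q, hq, hv⟩ := hc
    have hbnd := q.property
    rw [hv] at hbnd
    have hq' : (⟨(a + 1, j), ⟨by omega, by omega, hbnd.2.2.1, hbnd.2.2.2⟩⟩ : Qfin p n) ∈ S := by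
      refine hS q hq _ ⟨?_, ?_⟩
      · rw [hv]; exact Nat.succ_le_succ hab
      · rw [hv]
    exact le_rowSup _ hq' rfl
  · exact Nat.zero_le _

lemma rowSup_of_p_le {p n : ℕ} (S : Set (Qfin p n)) {a : ℕ} (ha : p ≤ a) :
    rowSup p n S a = p := by
  refine le_antisymm (sup_le le_rfl (Finset.sup_le fun j hj => ?_)) (p_le_rowSup p n S a)
  split
  · rename_i hc
    obtain ⟨q, hq, hv⟩ := hc
    have hbnd := q.property
    rw [hv] at hbnd
    omega
  · exact Nat.zero_le _

/-- Sup of `α jj + 1` over positions `jj ≥ a` carrying big values, joined with `p`. -/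
def Fsup (p n : ℕ) (α : Fin p → Fin n) (a : ℕ) : ℕ :=
  p ⊔ (Finset.univ.filter (fun jj : Fin p => a ≤ (jj : ℕ) ∧ p ≤ ((α jj) : ℕ))).sup
    (fun jj => ((α jj) : ℕ) + 1)

lemma p_le_Fsup (p n : ℕ) (α : Fin p → Fin n) (a : ℕ) : p ≤ Fsup p n α a := le_sup_left

lemma Fsup_le_n {p n : ℕ} (hpn : p < n) (α : Fin p → Fin n) (a : ℕ) :
    Fsup p n α a ≤ n := by
  refine sup_le (le_of_lt hpn) (Finset.sup_le fun jj _ => ?_)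
  exact (α jj).isLt

lemma le_Fsup {p n : ℕ} {α : Fin p → Fin n} {a : ℕ} (jj : Fin p) (h1 : a ≤ (jj : ℕ))
    (h2 : p ≤ ((α jj) : ℕ)) : ((α jj) : ℕ) + 1 ≤ Fsup p n α a := by
  have hmem : jj ∈ Finset.univ.filter (fun jj : Fin p => a ≤ (jj : ℕ) ∧ p ≤ ((α jj) : ℕ)) := by
    simp [h1, h2]
  exact le_trans (Finset.le_sup (f := fun jj : Fin p => ((α jj) : ℕ) + 1) hmem) le_sup_right

lemma mem_phi_iff {p n : ℕ} (α : Fin p → Fin n) (q : Qfin p n) :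
    q ∈ phiPBWset p n α ↔ q.val.2 ≤ Fsup p n α (q.val.1 - 1) := by
  have hb := q.property
  constructor
  · rintro ⟨jj, hbig, h1, h2⟩
    exact le_trans h2 (le_Fsup jj (by omega) hbig)
  · intro h
    set s := Finset.univ.filter
      (fun jj : Fin p => q.val.1 - 1 ≤ (jj : ℕ) ∧ p ≤ ((α jj) : ℕ)) with hs
    set f : Fin p → ℕ := fun jj => ((α jj) : ℕ) + 1 with hf
    have hq2 : p + 1 ≤ q.val.2 := hb.2.2.1
    have hts : q.val.2 ≤ s.sup f := by
      have he : Fsup p n α (q.val.1 - 1) = p ⊔ s.sup f := rfl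
      rw [he] at h
      omega
    have hne : s.Nonempty := by
      rcases Finset.eq_empty_or_nonempty s with he | hne
      · rw [he] at hts; simp at hts; omega
      · exact hne
    obtain ⟨jj, hjj, hje⟩ := Finset.exists_mem_eq_sup s hne f
    simp only [hs, Finset.mem_filter, Finset.mem_univ, true_and] at hjj
    rw [hje] at hts
    exact ⟨jj, hjj.2, by omega, hts⟩

lemma Fsup_anti {p n : ℕ} (α : Fin p → Fin n) {a b : ℕ} (hab : a ≤ b) :
    Fsup p n α b ≤ Fsup p n α a := by
  refine sup_le (p_le_Fsup p n α a) (Finset.sup_le fun jj hjj => ?_)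
  simp only [Finset.mem_filter, Finset.mem_univ, true_and] at hjj
  exact le_Fsup jj (le_trans hab hjj.1) hjj.2

lemma Fsup_big {p n : ℕ} {α : Fin p → Fin n} (hα : IsPBW p n α) (a : Fin p)
    (ha : p ≤ ((α a) : ℕ)) : Fsup p n α (a : ℕ) = ((α a) : ℕ) + 1 := by
  refine le_antisymm (sup_le (by omega) (Finset.sup_le fun jj hjj => ?_))
    (le_Fsup a le_rfl ha)
  simp only [Finset.mem_filter, Finset.mem_univ, true_and] at hjj
  have : ((α jj) : ℕ) ≤ ((α a) : ℕ) := by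
    by_contra hc
    push_neg at hc
    have := hα.2.2 jj a ha hc
    rw [Fin.lt_def] at this
    omega
  omega

lemma Fsup_succ_big {p n : ℕ} {α : Fin p → Fin n} (hα : IsPBW p n α) (a : Fin p)
    (ha : p ≤ ((α a) : ℕ)) : Fsup p n α ((a : ℕ) + 1) ≤ ((α a) : ℕ) := by
  refine sup_le ha (Finset.sup_le fun jj hjj => ?_)
  simp only [Finset.mem_filter, Finset.mem_univ, true_and] at hjj
  have hne : jj ≠ a := by
    intro he
    rw [he] at hjj
    omega
  have : ((α jj) : ℕ) < ((α a) : ℕ) := by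
    rcases lt_trichotomy ((α jj) : ℕ) ((α a) : ℕ) with h | h | h
    · exact h
    · exact absurd (hα.1 (Fin.ext h)) hne
    · have := hα.2.2 jj a ha h
      rw [Fin.lt_def] at this
      omega
  omega

lemma Fsup_small {p n : ℕ} {α : Fin p → Fin n} (hα : IsPBW p n α) (a : Fin p)
    (ha : ((α a) : ℕ) < p) : Fsup p n α ((a : ℕ) + 1) = Fsup p n α (a : ℕ) := by
  refine le_antisymm (Fsup_anti α (by omega)) ?_
  refine sup_le (p_le_Fsup p n α _) (Finset.sup_le fun jj hjj => ?_)
  simp only [Finset.mem_filter, Finset.mem_univ, true_and] at hjj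
  have hne : jj ≠ a := by
    intro he
    rw [he] at hjj
    omega
  have h1 : (a : ℕ) + 1 ≤ (jj : ℕ) := by
    have hv : (jj : ℕ) ≠ (a : ℕ) := fun he => hne (Fin.ext he)
    omega
  exact le_Fsup jj h1 hjj.2


lemma Fsup_of_p_le {p n : ℕ} (α : Fin p → Fin n) {a : ℕ} (ha : p ≤ a) :
    Fsup p n α a = p := by
  refine le_antisymm (sup_le le_rfl (Finset.sup_le fun jj hjj => ?_)) le_sup_left
  simp only [Finset.mem_filter, Finset.mem_univ, true_and] at hjj
  have := jj.isLt
  omega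

lemma Fsup_le_of_phi_subset {p n : ℕ} (hpn : p < n) {α α' : Fin p → Fin n}
    (hsub : phiPBWset p n α ⊆ phiPBWset p n α') {a : ℕ} (ha : a < p) :
    Fsup p n α a ≤ Fsup p n α' a := by
  rcases Nat.lt_or_ge p (Fsup p n α a) with h | h
  · have hle : Fsup p n α a ≤ n := Fsup_le_n hpn α a
    set j := Fsup p n α a with hj
    set q : Qfin p n := ⟨(a + 1, j), ⟨by omega, by omega, by omega, hle⟩⟩ with hqd
    have hq : q ∈ phiPBWset p n α := by
      rw [mem_phi_iff]
      show j ≤ Fsup p n α (a + 1 - 1)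
      rw [Nat.add_sub_cancel]
    have hq' := hsub hq
    rw [mem_phi_iff] at hq'
    have : q.val.1 - 1 = a := by simp [hqd]
    rw [this] at hq'
    exact hq'
  · exact le_trans h (p_le_Fsup p n α' a)

lemma big_iff_Fsup {p n : ℕ} {α : Fin p → Fin n} (hα : IsPBW p n α) (a : Fin p) :
    p ≤ ((α a) : ℕ) ↔ Fsup p n α ((a : ℕ) + 1) < Fsup p n α (a : ℕ) := by
  constructor
  · intro h
    have h1 := Fsup_succ_big hα a h
    have h2 := Fsup_big hα a h
    omega
  · intro h
    by_contra hc
    push_neg at hc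
    rw [Fsup_small hα a hc] at h
    exact lt_irrefl _ h

lemma pbw_eq_of_Fsup_eq {p n : ℕ} {α α' : Fin p → Fin n} (hα : IsPBW p n α)
    (hα' : IsPBW p n α') (h : ∀ a : ℕ, Fsup p n α a = Fsup p n α' a) : α = α' := by
  funext a
  apply Fin.ext
  have hiff : p ≤ ((α a) : ℕ) ↔ p ≤ ((α' a) : ℕ) := by
    rw [big_iff_Fsup hα a, big_iff_Fsup hα' a, h, h]
  by_cases hb : p ≤ ((α a) : ℕ)
  · have hb' := hiff.mp hb
    have := (Fsup_big hα a hb).symm.trans ((h (a : ℕ)).trans (Fsup_big hα' a hb'))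
    omega
  · push_neg at hb
    have hb' : ((α' a) : ℕ) < p := by
      by_contra hc
      push_neg at hc
      exact absurd (hiff.mpr hc) (by omega)
    rw [hα.2.1 a hb, hα'.2.1 a hb']

/-- The PBW tuple built from an order ideal. -/
def idealTuple (p n : ℕ) (hpn : p < n) (S : Set (Qfin p n)) : Fin p → Fin n := fun a =>
  if h : rowSup p n S ((a : ℕ) + 1) < rowSup p n S (a : ℕ) then
    ⟨rowSup p n S (a : ℕ) - 1, by
      have h1 := rowSup_le_n hpn S (a : ℕ)
      have h2 := p_le_rowSup p n S ((a : ℕ) + 1)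
      omega⟩
  else ⟨(a : ℕ), lt_trans a.isLt hpn⟩

lemma idealTuple_pos {p n : ℕ} (hpn : p < n) (S : Set (Qfin p n)) (a : Fin p)
    (h : rowSup p n S ((a : ℕ) + 1) < rowSup p n S (a : ℕ)) :
    ((idealTuple p n hpn S a) : ℕ) = rowSup p n S (a : ℕ) - 1 := by
  rw [idealTuple, dif_pos h]

lemma idealTuple_neg {p n : ℕ} (hpn : p < n) (S : Set (Qfin p n)) (a : Fin p)
    (h : ¬ rowSup p n S ((a : ℕ) + 1) < rowSup p n S (a : ℕ)) :
    ((idealTuple p n hpn S a) : ℕ) = (a : ℕ) := by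
  rw [idealTuple, dif_neg h]

lemma idealTuple_big {p n : ℕ} (hpn : p < n) (S : Set (Qfin p n)) (a : Fin p)
    (h : rowSup p n S ((a : ℕ) + 1) < rowSup p n S (a : ℕ)) :
    p ≤ ((idealTuple p n hpn S a) : ℕ) := by
  rw [idealTuple_pos hpn S a h]
  have h2 := p_le_rowSup p n S ((a : ℕ) + 1)
  omega

lemma idealTuple_isPBW {p n : ℕ} (hpn : p < n) {S : Set (Qfin p n)}
    (hS : ∀ a ∈ S, ∀ b, qleF p n b a → b ∈ S) : IsPBW p n (idealTuple p n hpn S) := by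
  refine ⟨?_, ?_, ?_⟩
  · intro a b hab
    by_cases ha : rowSup p n S ((a : ℕ) + 1) < rowSup p n S (a : ℕ) <;>
      by_cases hb : rowSup p n S ((b : ℕ) + 1) < rowSup p n S (b : ℕ)
    · -- both corners
      apply Fin.ext
      by_contra hne
      have hv : ((idealTuple p n hpn S a) : ℕ) = ((idealTuple p n hpn S b) : ℕ) := by rw [hab]
      rw [idealTuple_pos hpn S a ha, idealTuple_pos hpn S b hb] at hv
      rcases Nat.lt_or_ge (a : ℕ) (b : ℕ) with hlt | hge
      · have h1 : rowSup p n S ((b : ℕ)) ≤ rowSup p n S ((a : ℕ) + 1) := rowSup_anti hS hlt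
        omega
      · have hlt : (b : ℕ) < (a : ℕ) := by
          rcases Nat.lt_or_ge (b : ℕ) (a : ℕ) with h | h
          · exact h
          · omega
        have h1 : rowSup p n S ((a : ℕ)) ≤ rowSup p n S ((b : ℕ) + 1) := rowSup_anti hS hlt
        omega
    · have h1 := idealTuple_big hpn S a ha
      have h2 : ((idealTuple p n hpn S b) : ℕ) < p := by
        rw [idealTuple_neg hpn S b hb]; exact b.isLt
      rw [hab] at h1
      omega
    · have h1 := idealTuple_big hpn S b hb
      have h2 : ((idealTuple p n hpn S a) : ℕ) < p := by
        rw [idealTuple_neg hpn S a ha]; exact a.isLt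
      rw [hab] at h2
      omega
    · apply Fin.ext
      have h1 := idealTuple_neg hpn S a ha
      have h2 := idealTuple_neg hpn S b hb
      have hv : ((idealTuple p n hpn S a) : ℕ) = ((idealTuple p n hpn S b) : ℕ) := by rw [hab]
      omega
  · intro a hsmall
    by_cases ha : rowSup p n S ((a : ℕ) + 1) < rowSup p n S (a : ℕ)
    · exact absurd (idealTuple_big hpn S a ha) (by omega)
    · exact idealTuple_neg hpn S a ha
  · intro j k hk hlt
    by_cases hkc : rowSup p n S ((k : ℕ) + 1) < rowSup p n S (k : ℕ)
    swap
    · rw [idealTuple_neg hpn S k hkc] at hk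
      exact absurd hk (by have := k.isLt; omega)
    by_cases hjc : rowSup p n S ((j : ℕ) + 1) < rowSup p n S (j : ℕ)
    swap
    · rw [idealTuple_neg hpn S j hjc] at hlt
      have := j.isLt
      omega
    rw [idealTuple_pos hpn S k hkc] at hk hlt
    rw [idealTuple_pos hpn S j hjc] at hlt
    rw [Fin.lt_def]
    by_contra hc
    push_neg at hc
    rcases Nat.lt_or_ge (k : ℕ) (j : ℕ) with h | h
    · have h1 : rowSup p n S ((j : ℕ)) ≤ rowSup p n S ((k : ℕ) + 1) := rowSup_anti hS h
      have h2 := p_le_rowSup p n S ((j : ℕ) + 1)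
      have h3 := p_le_rowSup p n S ((k : ℕ) + 1)
      omega
    · have : (j : ℕ) = (k : ℕ) := by omega
      rw [this] at hlt
      omega

lemma phi_idealTuple {p n : ℕ} (hp : 1 ≤ p) (hpn : p < n) {S : Set (Qfin p n)}
    (hS : ∀ a ∈ S, ∀ b, qleF p n b a → b ∈ S) :
    phiPBWset p n (idealTuple p n hpn S) = S := by
  ext q
  obtain ⟨⟨i, j⟩, hq1, hq2, hq3, hq4⟩ := q
  simp only [phiPBWset, Set.mem_setOf_eq]
  constructor
  · rintro ⟨jj, hbig, h1, h2⟩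
    have hjjc : rowSup p n S ((jj : ℕ) + 1) < rowSup p n S (jj : ℕ) := by
      by_contra hc
      rw [idealTuple_neg hpn S jj hc] at hbig
      exact absurd hbig (by have := jj.isLt; omega)
    rw [idealTuple_pos hpn S jj hjjc] at hbig h2
    have h3 : j ≤ rowSup p n S (jj : ℕ) := by
      have := p_le_rowSup p n S ((jj : ℕ) + 1)
      omega
    have h4 : rowSup p n S ((jj : ℕ)) ≤ rowSup p n S (i - 1) := rowSup_anti hS (by omega)
    have h5 : p < rowSup p n S (i - 1) := by omega
    obtain ⟨q', hq', hv'⟩ := rowSup_attained hpn h5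
    have hi : i - 1 + 1 = i := by omega
    rw [hi] at hv'
    refine hS q' hq' _ ⟨?_, ?_⟩
    · rw [hv']
    · rw [hv']
      exact le_trans h3 h4
  · intro hq
    set A := (Finset.range p).filter
      (fun a => i - 1 ≤ a ∧ j ≤ rowSup p n S a) with hA
    have hiA : i - 1 ∈ A := by
      rw [hA, Finset.mem_filter, Finset.mem_range]
      refine ⟨by omega, le_rfl, ?_⟩
      have hi : i - 1 + 1 = i := by omega
      exact le_rowSup _ hq (by rw [hi])
    set a := A.max' ⟨_, hiA⟩ with ha
    have haA := A.max'_mem ⟨_, hiA⟩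
    rw [← ha] at haA
    rw [hA, Finset.mem_filter, Finset.mem_range] at haA
    obtain ⟨hap, hia, hja⟩ := haA
    have hnext : rowSup p n S (a + 1) < j := by
      rcases Nat.lt_or_ge (a + 1) p with h | h
      · by_contra hc
        push_neg at hc
        have hmem : a + 1 ∈ A := by
          rw [hA, Finset.mem_filter, Finset.mem_range]
          exact ⟨h, by omega, hc⟩
        have := A.le_max' (a + 1) hmem
        rw [← ha] at this
        omega
      · rw [rowSup_of_p_le S h]
        omega
    set aF : Fin p := ⟨a, hap⟩ with haF
    have hcorner : rowSup p n S ((aF : ℕ) + 1) < rowSup p n S (aF : ℕ) := by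
      show rowSup p n S (a + 1) < rowSup p n S a
      omega
    refine ⟨aF, idealTuple_big hpn S aF hcorner, ?_, ?_⟩
    · show i ≤ a + 1
      omega
    · rw [idealTuple_pos hpn S aF hcorner]
      show j ≤ rowSup p n S a - 1 + 1
      have := p_le_rowSup p n S a
      omega

end S7Aux

/-- `φ_pbw` is an isomorphism of posets from the set of PBW tuples
with the order `⪯_pbw` onto the set of order ideals of `(Q,≺)` ordered by
inclusion. -/
theorem statement7 (p n : ℕ) (hp : 1 ≤ p) (hpn : p < n) :
    (∀ α : Fin p → Fin n, IsPBW p n α →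
        ∀ a ∈ phiPBWset p n α, ∀ b, qleF p n b a → b ∈ phiPBWset p n α) ∧
      (∀ α α' : Fin p → Fin n, IsPBW p n α → IsPBW p n α' →
        phiPBWset p n α = phiPBWset p n α' → α = α') ∧
      (∀ S : Set (Qfin p n), (∀ a ∈ S, ∀ b, qleF p n b a → b ∈ S) →
        ∃ α : Fin p → Fin n, IsPBW p n α ∧ phiPBWset p n α = S) ∧
      (∀ α α' : Fin p → Fin n, IsPBW p n α → IsPBW p n α' →
        (pbwLeFin p n α α' ↔ phiPBWset p n α ⊆ phiPBWset p n α')) := by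
  refine ⟨?_, ?_, ?_, ?_⟩
  · rintro α - a ⟨jj, h1, h2, h3⟩ b hb
    exact ⟨jj, h1, le_trans hb.1 h2, le_trans hb.2 h3⟩
  · intro α α' hα hα' h
    refine S7Aux.pbw_eq_of_Fsup_eq hα hα' fun a => ?_
    rcases Nat.lt_or_ge a p with ha | ha
    · exact le_antisymm (S7Aux.Fsup_le_of_phi_subset hpn h.subset ha)
        (S7Aux.Fsup_le_of_phi_subset hpn h.symm.subset ha)
    · rw [S7Aux.Fsup_of_p_le α ha, S7Aux.Fsup_of_p_le α' ha]
  · intro S hS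
    exact ⟨S7Aux.idealTuple p n hpn S, S7Aux.idealTuple_isPBW hpn hS,
      S7Aux.phi_idealTuple hp hpn hS⟩
  · intro α α' hα hα'
    constructor
    · rintro hle q ⟨jj, h1, h2, h3⟩
      obtain ⟨b, hab, hv⟩ := hle jj
      rw [Fin.le_def] at hab
      exact ⟨b, le_trans h1 hv, by omega, by omega⟩
    · intro hsub a
      by_cases hbig : p ≤ ((α a) : ℕ)
      · have hq : (⟨((a : ℕ) + 1, ((α a) : ℕ) + 1),
            ⟨by omega, by have := a.isLt; omega, by omega, (α a).isLt⟩⟩ : Qfin p n) ∈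
            phiPBWset p n α := ⟨a, hbig, le_rfl, le_rfl⟩
        obtain ⟨jj, h1, h2, h3⟩ := hsub hq
        have h2' : (a : ℕ) + 1 ≤ (jj : ℕ) + 1 := h2
        have h3' : ((α a) : ℕ) + 1 ≤ ((α' jj) : ℕ) + 1 := h3
        exact ⟨jj, by rw [Fin.le_def]; omega, by omega⟩
      · push_neg at hbig
        refine ⟨a, le_rfl, ?_⟩
        rw [hα.2.1 a hbig]
        by_cases h' : ((α' a) : ℕ) < p
        · rw [hα'.2.1 a h']
        · push_neg at h'
          have := a.isLt
          omega
end
end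

section
/- Fix integers 1 ≤ p < n. The map φ_ss is a bijection from the set Ĩ_ss of pairs I^{(k)} (I a strictly increasing p-tuple in [1,n], k ∈ ℕ₀) to the set 𝒥(Q̃) of finite order ideals of the poset (Q̃,≺). -/
open scoped Classical

noncomputable section

open MvPolynomial

/-- The poset `Q̃`: elements `q_{i,j}` with `i ≥ 1`, `j ≥ p+1` and `j − i ∈ [0, n−1]`. -/
abbrev Qt (p n : ℕ) :=
  {x : ℕ × ℕ // 1 ≤ x.1 ∧ p + 1 ≤ x.2 ∧ x.1 ≤ x.2 ∧ x.2 + 1 ≤ x.1 + n}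

/-- The order relation of `Q̃` on raw pairs: `(i₁,j₁) ⪯ (i₂,j₂)` iff
(i) `i₁ ≤ i₂` and `j₁ ≤ j₂`, or (ii) `i₁ + p ≤ i₂`, or (iii) `j₁ + n − p ≤ j₂`. -/
def qleN (p n : ℕ) (a b : ℕ × ℕ) : Prop :=
  (a.1 ≤ b.1 ∧ a.2 ≤ b.2) ∨ a.1 + p ≤ b.1 ∨ a.2 + (n - p) ≤ b.2

/-- The order `⪯` on `Q̃`. -/
def qleT (p n : ℕ) (a b : Qt p n) : Prop := qleN p n a.val b.val

/-- The order ideal `φ_ss(I^{(k)}) ⊆ Q̃`: all `q_{i,j}` with `i ≤ k` and, for each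
`i ∈ [k+1, k+p]`, those `q_{i,j}` with `j ≤ i + α_{p+1−(i−k)} − 1`. -/
def phiSS (p n : ℕ) (α : Fin p → Fin n) (k : ℕ) : Set (Qt p n) :=
  {q | q.val.1 ≤ k ∨ ∃ t : Fin p, q.val.1 = k + 1 + (t : ℕ) ∧
    q.val.2 ≤ q.val.1 + (α ⟨p - 1 - (t : ℕ), by have := t.isLt; omega⟩ : ℕ)}

lemma sm_gap {p n : ℕ} {α : Fin p → Fin n} (hα : StrictMono α) :
    ∀ (b : ℕ) (hb : b < p) (a : ℕ) (ha : a < p), a ≤ b →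
      (α ⟨a, ha⟩ : ℕ) + (b - a) ≤ (α ⟨b, hb⟩ : ℕ) := by
  intro b
  induction b with
  | zero =>
    intro hb a ha hab
    have : a = 0 := by omega
    subst this
    simp
  | succ m ih =>
    intro hb a ha hab
    rcases Nat.lt_or_ge a (m + 1) with h | h
    · have hm : m < p := by omega
      have h1 := ih hm a ha (by omega)
      have h2 : α ⟨m, hm⟩ < α ⟨m + 1, hb⟩ := hα (by simp [Fin.lt_def])
      have h2' : (α ⟨m, hm⟩ : ℕ) < (α ⟨m+1, hb⟩ : ℕ) := h2
      omega
    · have : a = m + 1 := by omega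
      subst this
      simp

lemma sm_lower {p n : ℕ} {α : Fin p → Fin n} (hα : StrictMono α)
    (a : ℕ) (ha : a < p) : a ≤ (α ⟨a, ha⟩ : ℕ) := by
  have := sm_gap hα a ha 0 (by omega) (by omega)
  omega

lemma sm_upper {p n : ℕ} {α : Fin p → Fin n} (hα : StrictMono α) (hp : 1 ≤ p)
    (a : ℕ) (ha : a < p) : (α ⟨a, ha⟩ : ℕ) + (p - 1 - a) < n := by
  have h1 := sm_gap hα (p - 1) (by omega) a ha (by omega)
  have h2 : (α ⟨p - 1, by omega⟩ : ℕ) < n := (α _).isLt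
  omega

lemma phiSS_part1 (p n : ℕ) (hp : 1 ≤ p) (hpn : p < n)
    (α : Fin p → Fin n) (k : ℕ) (hα : StrictMono α) :
    (phiSS p n α k).Finite ∧
      (∀ a ∈ phiSS p n α k, ∀ b, qleT p n b a → b ∈ phiSS p n α k) := by
  constructor
  · apply Set.Finite.subset (Set.Finite.preimage
      (Subtype.val_injective.injOn)
      (((Set.finite_Iic (k + p)).prod (Set.finite_Iic (k + p + n)))))
    rintro ⟨⟨i, j⟩, hi, hj, hij, hjn⟩ hq
    rcases hq with h | ⟨t, ht, hle⟩
    · try dsimp only at h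
      constructor <;> simp <;> omega
    · simp only [Set.mem_preimage, Set.mem_prod, Set.mem_Iic] at *
      try dsimp only at ht hle ⊢
      have := t.isLt
      constructor <;> omega
  · rintro ⟨⟨i₂, j₂⟩, hi₂, hj₂, hij₂, hjn₂⟩ ha ⟨⟨i₁, j₁⟩, hi₁, hj₁, hij₁, hjn₁⟩ hle
    simp only [phiSS, qleT, qleN, Set.mem_setOf_eq] at ha hle ⊢
    try dsimp only at ha hle ⊢
    rcases hle with ⟨h1, h2⟩ | h | h
    -- case (i)
    · rcases ha with hk | ⟨t₂, ht₂, hb₂⟩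
      · left; omega
      · by_cases hik : i₁ ≤ k
        · left; exact hik
        · right
          have htlt₂ := t₂.isLt
          refine ⟨⟨i₁ - k - 1, by omega⟩, by try dsimp only; omega, ?_⟩
          try dsimp only
          have hg := sm_gap hα (p - 1 - (i₁ - k - 1)) (by omega)
            (p - 1 - (t₂ : ℕ)) (by omega) (by omega)
          omega
    -- case (ii)
    · rcases ha with hk | ⟨t₂, ht₂, hb₂⟩
      · left; omega
      · left; have := t₂.isLt; omega
    -- case (iii)
    · rcases ha with hk | ⟨t₂, ht₂, hb₂⟩
      · by_cases hik : i₁ ≤ k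
        · left; exact hik
        · right
          refine ⟨⟨i₁ - k - 1, by omega⟩, by try dsimp only; omega, ?_⟩
          try dsimp only
          have hlo := sm_lower hα (p - 1 - (i₁ - k - 1)) (by omega)
          omega
      · by_cases hik : i₁ ≤ k
        · left; exact hik
        · right
          have htlt₂ := t₂.isLt
          have hup := sm_upper hα hp (p - 1 - (t₂ : ℕ)) (by omega)
          refine ⟨⟨i₁ - k - 1, by omega⟩, by try dsimp only; omega, ?_⟩
          try dsimp only
          have hlo := sm_lower hα (p - 1 - (i₁ - k - 1)) (by omega)
          omega

lemma phiSS_k_le (p n : ℕ) (hp : 1 ≤ p) (hpn : p < n) (α α' : Fin p → Fin n) (k k' : ℕ)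
    (h : phiSS p n α k = phiSS p n α' k') : k ≤ k' := by
  by_contra hlt
  push_neg at hlt
  have hq : (⟨(k' + p + 1, k' + p + 1), by omega⟩ : Qt p n) ∈ phiSS p n α k := by
    simp only [phiSS, Set.mem_setOf_eq]
    try dsimp only
    by_cases hc : k' + p + 1 ≤ k
    · exact Or.inl hc
    · exact Or.inr ⟨⟨k' + p - k, by omega⟩, by try dsimp only; omega, by try dsimp only; omega⟩
  rw [h] at hq
  rcases hq with h1 | ⟨t, ht, -⟩
  · try dsimp only at h1; omega
  · try dsimp only at ht; have := t.isLt; omega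

lemma phiSS_alpha_le (p n : ℕ) (hp : 1 ≤ p) (hpn : p < n) (α α' : Fin p → Fin n) (k : ℕ)
    (hα : StrictMono α) (hα' : StrictMono α')
    (h : phiSS p n α k = phiSS p n α' k) : ∀ s : Fin p, (α' s : ℕ) ≤ (α s : ℕ) := by
  intro s
  have hsp := s.isLt
  by_cases hb : (α' s : ℕ) ≤ (s : ℕ)
  · have hlo := sm_lower hα (s : ℕ) s.isLt
    rw [Fin.eta] at hlo
    omega
  · push_neg at hb
    have hv' := (α' s).isLt
    have hidx : ∀ (hh : p - 1 - (p - 1 - (s : ℕ)) < p),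
        (⟨p - 1 - (p - 1 - (s : ℕ)), hh⟩ : Fin p) = s := by
      intro hh; apply Fin.ext; try dsimp only; omega
    have hq : (⟨(k + p - (s : ℕ), k + p - (s : ℕ) + (α' s : ℕ)), by omega⟩ : Qt p n)
        ∈ phiSS p n α' k := by
      simp only [phiSS, Set.mem_setOf_eq]
      try dsimp only
      refine Or.inr ⟨⟨p - 1 - (s : ℕ), by omega⟩, by try dsimp only; omega, ?_⟩
      try dsimp only
      rw [hidx]
    rw [← h] at hq
    rcases hq with h1 | ⟨t, ht, hbnd⟩
    · try dsimp only at h1; omega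
    · try dsimp only at ht hbnd
      have htlt := t.isLt
      have ht2 : t = ⟨p - 1 - (s : ℕ), by omega⟩ := by apply Fin.ext; try dsimp only; omega
      rw [ht2] at hbnd
      try dsimp only at hbnd
      rw [hidx] at hbnd
      omega

lemma phiSS_part2 (p n : ℕ) (hp : 1 ≤ p) (hpn : p < n) (α α' : Fin p → Fin n) (k k' : ℕ)
    (hα : StrictMono α) (hα' : StrictMono α')
    (h : phiSS p n α k = phiSS p n α' k') : α = α' ∧ k = k' := by
  have hk : k = k' := le_antisymm (phiSS_k_le p n hp hpn α α' k k' h)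
    (phiSS_k_le p n hp hpn α' α k' k h.symm)
  subst hk
  have h1 := phiSS_alpha_le p n hp hpn α α' k hα hα' h
  have h2 := phiSS_alpha_le p n hp hpn α' α k hα' hα h.symm
  exact ⟨funext fun s => Fin.ext (le_antisymm (h2 s) (h1 s)), rfl⟩

lemma nat_sm_adj (p : ℕ) (f : ℕ → ℕ) (h : ∀ s, s + 1 < p → f s < f (s + 1)) :
    ∀ b, b < p → ∀ a, a < b → f a < f b := by
  intro b
  induction b with
  | zero => intro _ a ha; omega
  | succ m ih =>
    intro hb a ha
    rcases Nat.lt_or_ge a m with h' | h'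
    · exact lt_trans (ih (by omega) a h') (h m hb)
    · have haeq : a = m := by omega
      rw [haeq]
      exact h m hb

lemma phiSS_part3 (p n : ℕ) (hp : 1 ≤ p) (hpn : p < n) (S : Set (Qt p n))
    (hfin : S.Finite) (hideal : ∀ a ∈ S, ∀ b, qleT p n b a → b ∈ S) :
    ∃ (α : Fin p → Fin n) (k : ℕ), StrictMono α ∧ phiSS p n α k = S := by
  rcases S.eq_empty_or_nonempty with hne | hne
  · subst hne
    refine ⟨fun s => ⟨(s : ℕ), lt_trans s.isLt hpn⟩, 0, ?_, ?_⟩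
    · intro a b hab; exact hab
    · apply Set.eq_empty_iff_forall_notMem.mpr
      rintro ⟨⟨i, j⟩, hc⟩ hmem
      obtain ⟨h1, h2, h3, h4⟩ := hc
      rcases hmem with h | ⟨t, ht, hb⟩
      · try dsimp only at h; omega
      · have := t.isLt
        try dsimp only at ht hb
        omega
  · have hTne : hfin.toFinset.Nonempty := by
      obtain ⟨x, hx⟩ := hne; exact ⟨x, hfin.mem_toFinset.mpr hx⟩
    set T := hfin.toFinset with hT
    have hmemT : ∀ q : Qt p n, q ∈ T ↔ q ∈ S := fun q => hfin.mem_toFinset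
    set M := (T.image (fun q => q.val.1)).max' (hTne.image _) with hMdef
    set k := M - p with hkdef
    have hM1 : ∀ q ∈ S, q.val.1 ≤ M := by
      intro q hq
      rw [hMdef]
      exact Finset.le_max' (T.image (fun r => r.val.1)) (q.val.1)
        (Finset.mem_image_of_mem _ ((hmemT q).mpr hq))
    have hMmem : ∃ q ∈ S, q.val.1 = M := by
      have h := Finset.max'_mem (T.image (fun q => q.val.1)) (hTne.image _)
      rw [Finset.mem_image] at h
      obtain ⟨q, hqT, hq1⟩ := h
      rw [hMdef]
      exact ⟨q, (hmemT q).mp hqT, hq1⟩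
    have hMp : 1 ≤ M := by
      obtain ⟨q, hq, h1⟩ := hMmem
      have := q.2.1
      omega
    have hrow : ∀ i, 1 ≤ i → i ≤ M → ∃ q ∈ S, q.val.1 = i ∧ q.val.2 = max i (p + 1) := by
      intro i h1 h2
      obtain ⟨⟨⟨a2, b2⟩, hc2⟩, hqM, hqM1⟩ := hMmem
      have hcc2 := hc2
      obtain ⟨d1, d2, d3, d4⟩ := hcc2
      try dsimp only at hqM1 d1 d2 d3 d4
      refine ⟨⟨(i, max i (p + 1)), by omega⟩, ?_, rfl, rfl⟩
      apply hideal _ hqM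
      simp only [qleT, qleN]
      try dsimp only
      omega
    have hm : ∃ m : ℕ → ℕ, (∀ q ∈ S, q.val.2 ≤ m q.val.1) ∧
        (∀ i, 1 ≤ i → i ≤ M → ∃ q ∈ S, q.val = (i, m i)) := by
      refine ⟨fun i => (T.filter (fun q => q.val.1 = i)).sup (fun q => q.val.2), ?_, ?_⟩
      · intro q hq
        show q.val.2 ≤ (T.filter (fun r => r.val.1 = q.val.1)).sup (fun r => r.val.2)
        exact Finset.le_sup (f := fun r : Qt p n => r.val.2)
          (Finset.mem_filter.mpr ⟨(hmemT q).mpr hq, rfl⟩)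
      · intro i h1 h2
        obtain ⟨qr, hqrS, hqr1, hqr2⟩ := hrow i h1 h2
        have hfil : (T.filter (fun q => q.val.1 = i)).Nonempty :=
          ⟨qr, Finset.mem_filter.mpr ⟨(hmemT _).mpr hqrS, hqr1⟩⟩
        obtain ⟨q, hq, hq2⟩ := Finset.exists_mem_eq_sup _ hfil (fun q => q.val.2)
        rw [Finset.mem_filter] at hq
        exact ⟨q, (hmemT q).mp hq.1, by rw [Prod.ext_iff]; exact ⟨hq.2, hq2.symm⟩⟩
    obtain ⟨m, hm_le, hm_mem⟩ := hm
    have hbound : ∀ i, 1 ≤ i → i ≤ M → i ≤ m i ∧ p + 1 ≤ m i ∧ m i + 1 ≤ i + n := by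
      intro i h1 h2
      obtain ⟨q, hqS, hqv⟩ := hm_mem i h1 h2
      have hq2 := q.2
      rw [hqv] at hq2
      try dsimp only at hq2
      exact ⟨hq2.2.2.1, hq2.2.1, hq2.2.2.2⟩
    have hA : ∀ i, k + 2 ≤ i → i ≤ M → m i + 2 ≤ i + n := by
      intro i h1 h2
      by_contra hcon
      push_neg at hcon
      obtain ⟨q, hqS, hqv⟩ := hm_mem i (by omega) h2
      have hb := hbound i (by omega) h2
      have hbS : (⟨(i + p - 1, i + p - 1), by omega⟩ : Qt p n) ∈ S := by
        apply hideal q hqS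
        simp only [qleT, qleN]
        rw [hqv]
        try dsimp only
        omega
      have hle := hM1 _ hbS
      try dsimp only at hle
      omega
    have hB : ∀ i, k + 2 ≤ i → i ≤ M → m i ≤ m (i - 1) := by
      intro i h1 h2
      obtain ⟨q, hqS, hqv⟩ := hm_mem i (by omega) h2
      have hb := hbound i (by omega) h2
      have hA' := hA i h1 h2
      have hbS : (⟨(i - 1, m i), by omega⟩ : Qt p n) ∈ S := by
        apply hideal q hqS
        simp only [qleT, qleN]
        rw [hqv]
        try dsimp only
        omega
      have hle := hm_le _ hbS
      try dsimp only at hle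
      exact hle
    set f : ℕ → ℕ := fun s => if k + p - s ≤ M then m (k + p - s) - (k + p - s) else s
      with hfdef
    have hfn : ∀ s, s < p → f s < n := by
      intro s hs
      rw [hfdef]
      try dsimp only
      split_ifs with h1
      · have hb := hbound (k + p - s) (by omega) h1
        omega
      · omega
    have hadj : ∀ s, s + 1 < p → f s < f (s + 1) := by
      intro s hs
      rw [hfdef]
      try dsimp only
      split_ifs with h1 h2 h2
      · have hb := hbound (k + p - s) (by omega) h1
        have hBi := hB (k + p - s) (by omega) h1
        have hb' := hbound (k + p - (s + 1)) (by omega) h2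
        have heq : k + p - s - 1 = k + p - (s + 1) := by omega
        rw [heq] at hBi
        omega
      · omega
      · have hb' := hbound (k + p - (s + 1)) (by omega) h2
        omega
      · omega
    refine ⟨fun s => ⟨f (s : ℕ), hfn _ s.isLt⟩, k, ?_, ?_⟩
    · intro a b hab
      have h := nat_sm_adj p f hadj (b : ℕ) b.isLt (a : ℕ) hab
      simp only [Fin.lt_def]
      exact h
    · ext q
      obtain ⟨⟨i, j⟩, hc⟩ := q
      have hcc := hc
      obtain ⟨c1, c2, c3, c4⟩ := hcc
      simp only [phiSS, Set.mem_setOf_eq]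
      try dsimp only
      constructor
      · rintro (h | ⟨t, ht, hb⟩)
        · obtain ⟨⟨⟨a2, b2⟩, hc2⟩, hqM, hqM1⟩ := hMmem
          have hcc2 := hc2
          obtain ⟨d1, d2, d3, d4⟩ := hcc2
          try dsimp only at hqM1 d1 d2 d3 d4
          apply hideal _ hqM
          simp only [qleT, qleN]
          try dsimp only
          omega
        · have htlt := t.isLt
          rw [hfdef] at hb
          try dsimp only at hb
          have hieq : k + p - (p - 1 - (t : ℕ)) = i := by omega
          rw [hieq] at hb
          split_ifs at hb with hiM
          · have hbd := hbound i (by omega) hiM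
            obtain ⟨q', hq'S, hq'v⟩ := hm_mem i (by omega) hiM
            apply hideal q' hq'S
            simp only [qleT, qleN]
            rw [hq'v]
            try dsimp only
            omega
          · exfalso
            omega
      · intro hqS
        have hiM := hM1 _ hqS
        try dsimp only at hiM
        by_cases hik : i ≤ k
        · exact Or.inl hik
        · refine Or.inr ⟨⟨i - k - 1, by omega⟩, by try dsimp only; omega, ?_⟩
          try dsimp only
          rw [hfdef]
          try dsimp only
          have hieq : k + p - (p - 1 - (i - k - 1)) = i := by omega
          rw [hieq, if_pos hiM]
          have hbd := hbound i (by omega) hiM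
          have hle := hm_le _ hqS
          try dsimp only at hle
          omega

/-- The map `φ_ss` is a bijection from the set `Ĩ_ss` of pairs
`I^{(k)}` (with `I` a strictly increasing `p`-tuple in `[1,n]` and `k ∈ ℕ₀`) onto the
set `𝒥(Q̃)` of finite order ideals of `(Q̃,≺)`. -/
theorem statement11 (p n : ℕ) (hp : 1 ≤ p) (hpn : p < n) :
    (∀ (α : Fin p → Fin n) (k : ℕ), StrictMono α →
        (phiSS p n α k).Finite ∧
          (∀ a ∈ phiSS p n α k, ∀ b, qleT p n b a → b ∈ phiSS p n α k)) ∧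
      (∀ (α α' : Fin p → Fin n) (k k' : ℕ), StrictMono α → StrictMono α' →
        phiSS p n α k = phiSS p n α' k' → α = α' ∧ k = k') ∧
      (∀ S : Set (Qt p n), S.Finite → (∀ a ∈ S, ∀ b, qleT p n b a → b ∈ S) →
        ∃ (α : Fin p → Fin n) (k : ℕ), StrictMono α ∧ phiSS p n α k = S) :=
  ⟨fun α k hα => phiSS_part1 p n hp hpn α k hα,
    fun α α' k k' hα hα' h => phiSS_part2 p n hp hpn α α' k k' hα hα' h,
    fun S hfin hid => phiSS_part3 p n hp hpn S hfin hid⟩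
end
end

section
/- Fix integers 1 ≤ p < n. The map φ_ss is an isomorphism of posets from (Ĩ_ss, ≺_ss) to the set 𝒥(Q̃) of finite order ideals of (Q̃,≺) ordered by inclusion. -/
open scoped Classical

noncomputable section

open MvPolynomial

/-- The order `⪯_ss` on `Ĩ_ss`: `I^{(k)} ⪯_ss I'^{(k')}` iff `k ≤ k'` and
`α_i ≤ α'_{i'}` for all `i, i' ∈ [1,p]` with `i' − i = k' − k`. -/
def ssLe (p n : ℕ) (α : Fin p → Fin n) (k : ℕ) (α' : Fin p → Fin n) (k' : ℕ) : Prop :=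
  k ≤ k' ∧ ∀ a b : Fin p, (b : ℕ) + k = (a : ℕ) + k' → (α a : ℕ) ≤ (α' b : ℕ)

namespace S13

variable {p n : ℕ}

def ext (p n : ℕ) (α : Fin p → Fin n) : ℕ → ℕ :=
  fun s => if h : s < p then (α ⟨s, h⟩ : ℕ) else 0

lemma ext_eval (α : Fin p → Fin n) {s : ℕ} (h : s < p) :
    ext p n α s = (α ⟨s, h⟩ : ℕ) := dif_pos h

lemma smono_add {α : Fin p → Fin n} (hα : StrictMono α) (d : ℕ) :
    ∀ (a b : Fin p), (a : ℕ) + d = (b : ℕ) → (α a : ℕ) + d ≤ (α b : ℕ) := by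
  induction d with
  | zero =>
    intro a b h
    have : a = b := Fin.ext (by omega)
    subst this; omega
  | succ d ih =>
    intro a b h
    have hb' : (a : ℕ) + d < p := by have := b.isLt; omega
    have h1 := ih a ⟨(a : ℕ) + d, hb'⟩ rfl
    have h2 : α ⟨(a : ℕ) + d, hb'⟩ < α b := hα (by simp [Fin.lt_def]; omega)
    have h3 := Fin.lt_def.mp h2
    omega

lemma fin_lb {α : Fin p → Fin n} (hα : StrictMono α) (a : Fin p) : (a : ℕ) ≤ (α a : ℕ) := by
  have h0 : (0 : ℕ) < p := a.pos
  have := smono_add hα (a : ℕ) ⟨0, h0⟩ a (by simp)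
  omega

lemma fin_ub {α : Fin p → Fin n} (hα : StrictMono α) (a : Fin p) :
    (α a : ℕ) + p ≤ n + (a : ℕ) := by
  have h0 : p - 1 < p := by have := a.pos; omega
  have := smono_add hα (p - 1 - (a : ℕ)) a ⟨p - 1, h0⟩ (by simp; omega)
  have := (α ⟨p - 1, h0⟩).isLt
  have := a.isLt
  omega

lemma ext_lb {α : Fin p → Fin n} (hα : StrictMono α) {s : ℕ} (hs : s < p) :
    s ≤ ext p n α s := by
  rw [ext_eval α hs]; simpa using fin_lb hα ⟨s, hs⟩

lemma ext_ub {α : Fin p → Fin n} (hα : StrictMono α) {s : ℕ} (hs : s < p) :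
    ext p n α s + p ≤ n + s := by
  rw [ext_eval α hs]; simpa using fin_ub hα ⟨s, hs⟩

lemma ext_mono {α : Fin p → Fin n} (hα : StrictMono α) {s s' : ℕ} (h : s ≤ s') (h' : s' < p) :
    ext p n α s + (s' - s) ≤ ext p n α s' := by
  have hs : s < p := by omega
  rw [ext_eval α hs, ext_eval α h']
  exact smono_add hα (s' - s) ⟨s, hs⟩ ⟨s', h'⟩ (by simp; omega)

lemma mem_phiSS_iff (α : Fin p → Fin n) (k : ℕ) (q : Qt p n) :
    q ∈ phiSS p n α k ↔ q.val.1 ≤ k ∨ (k < q.val.1 ∧ q.val.1 ≤ k + p ∧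
      q.val.2 ≤ q.val.1 + ext p n α (p - 1 - (q.val.1 - (k + 1)))) := by
  simp only [phiSS, Set.mem_setOf_eq]
  constructor
  · rintro (h | ⟨t, ht, hj⟩)
    · exact Or.inl h
    · right
      have hlt := t.isLt
      have h1 : p - 1 - (q.val.1 - (k + 1)) = p - 1 - (t : ℕ) := by omega
      have h2 : p - 1 - (t : ℕ) < p := by omega
      refine ⟨by omega, by omega, ?_⟩
      rw [h1, ext_eval α h2]
      exact hj
  · rintro (h | ⟨h1, h2, h3⟩)
    · exact Or.inl h
    · right
      have h4 : q.val.1 - (k + 1) < p := by omega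
      refine ⟨⟨q.val.1 - (k + 1), h4⟩, by simp; omega, ?_⟩
      rw [ext_eval α (show p - 1 - (q.val.1 - (k + 1)) < p by omega)] at h3
      exact h3


lemma part1 (hp : 1 ≤ p) (hpn : p < n) (α : Fin p → Fin n) (k : ℕ) (hα : StrictMono α) :
    (phiSS p n α k).Finite ∧
      (∀ a ∈ phiSS p n α k, ∀ b, qleT p n b a → b ∈ phiSS p n α k) := by
  constructor
  · apply Set.Finite.subset (Set.Finite.preimage (Subtype.val_injective.injOn)
      (((Set.finite_Iic (k + p)).prod (Set.finite_Iic (k + p + n)))))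
    intro q hq
    rw [mem_phiSS_iff] at hq
    obtain ⟨h1, h2, h3, h4⟩ := q.2
    simp only [Set.mem_preimage, Set.mem_prod, Set.mem_Iic]
    omega
  · intro a ha b hba
    rw [mem_phiSS_iff] at ha ⊢
    obtain ⟨ha1, ha2, ha3, ha4⟩ := a.2
    obtain ⟨hb1, hb2, hb3, hb4⟩ := b.2
    unfold qleT qleN at hba
    by_cases hbk : b.val.1 ≤ k
    · exact Or.inl hbk
    right
    push_neg at hbk
    have hblep : b.val.1 ≤ k + p := by
      rcases ha with h | ⟨h1, h2, h3⟩
      · rcases hba with ⟨h4, h5⟩ | h4 | h4 <;> omega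
      · have hub := ext_ub hα (show p - 1 - (a.val.1 - (k + 1)) < p by omega)
        rcases hba with ⟨h4, h5⟩ | h4 | h4 <;> omega
    have hsbp : p - 1 - (b.val.1 - (k + 1)) < p := by omega
    refine ⟨hbk, hblep, ?_⟩
    have hlb := ext_lb hα hsbp
    rcases ha with h | ⟨h1, h2, h3⟩
    · rcases hba with ⟨h4, h5⟩ | h4 | h4 <;> omega
    · have hsap : p - 1 - (a.val.1 - (k + 1)) < p := by omega
      have hub := ext_ub hα hsap
      rcases hba with ⟨h4, h5⟩ | h4 | h4
      · have hm := ext_mono hα (show p - 1 - (a.val.1 - (k + 1)) ≤ p - 1 - (b.val.1 - (k + 1))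
          by omega) hsbp
        omega
      · omega
      · omega


def mk' (i j : ℕ) (h : 1 ≤ i ∧ p + 1 ≤ j ∧ i ≤ j ∧ j + 1 ≤ i + n) : Qt p n := ⟨(i, j), h⟩

lemma mem_mk' (α : Fin p → Fin n) (k i j : ℕ) (h : 1 ≤ i ∧ p + 1 ≤ j ∧ i ≤ j ∧ j + 1 ≤ i + n) :
    mk' i j h ∈ phiSS p n α k ↔
      i ≤ k ∨ (k < i ∧ i ≤ k + p ∧ j ≤ i + ext p n α (p - 1 - (i - (k + 1)))) := by
  simpa [mk'] using mem_phiSS_iff α k (mk' i j h)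

lemma k_le_k (hp : 1 ≤ p) (hpn : p < n) (α α' : Fin p → Fin n) (k k' : ℕ)
    (hsub : phiSS p n α k ⊆ phiSS p n α' k') : k ≤ k' := by
  by_contra hlt
  push_neg at hlt
  have hq : mk' (k + p) (k + p) (by omega) ∈ phiSS p n α k := by
    rw [mem_mk']
    exact Or.inr ⟨by omega, by omega, by omega⟩
  have := hsub hq
  rw [mem_mk'] at this
  omega

lemma ss_of_subset (hp : 1 ≤ p) (hpn : p < n) {α α' : Fin p → Fin n} {k k' : ℕ}
    (hα : StrictMono α) (hα' : StrictMono α')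
    (hsub : phiSS p n α k ⊆ phiSS p n α' k') (hk : k ≤ k') :
    ∀ a b : Fin p, (b : ℕ) + k = (a : ℕ) + k' → (α a : ℕ) ≤ (α' b : ℕ) := by
  intro a b hab
  have hap := a.isLt
  have hbp := b.isLt
  have han := (α a).isLt
  have hba' := fin_lb hα' b
  by_cases hemp : p + 1 ≤ k + 1 + (p - 1 - (a : ℕ)) + (α a : ℕ)
  · have hq : mk' (k + 1 + (p - 1 - (a : ℕ))) (k + 1 + (p - 1 - (a : ℕ)) + (α a : ℕ))
        (by omega) ∈ phiSS p n α k := by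
      rw [mem_mk']
      refine Or.inr ⟨by omega, by omega, ?_⟩
      have hidx : p - 1 - (k + 1 + (p - 1 - (a : ℕ)) - (k + 1)) = (a : ℕ) := by omega
      rw [hidx, ext_eval α a.isLt]
    have := hsub hq
    rw [mem_mk'] at this
    rcases this with h | ⟨h1, h2, h3⟩
    · omega
    · have hidx : p - 1 - (k + 1 + (p - 1 - (a : ℕ)) - (k' + 1)) = (b : ℕ) := by omega
      rw [hidx, ext_eval α' b.isLt] at h3
      simp only [Fin.eta] at h3
      omega
  · omega

lemma subset_of_ss (hp : 1 ≤ p) (hpn : p < n) {α α' : Fin p → Fin n} {k k' : ℕ}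
    (hα : StrictMono α) (hα' : StrictMono α') (hk : k ≤ k')
    (hss : ∀ a b : Fin p, (b : ℕ) + k = (a : ℕ) + k' → (α a : ℕ) ≤ (α' b : ℕ)) :
    phiSS p n α k ⊆ phiSS p n α' k' := by
  intro q hq
  rw [mem_phiSS_iff] at hq ⊢
  obtain ⟨hq1, hq2, hq3, hq4⟩ := q.2
  rcases hq with h | ⟨h1, h2, h3⟩
  · left; omega
  · by_cases hik : q.val.1 ≤ k'
    · left; exact hik
    · push_neg at hik
      refine Or.inr ⟨hik, by omega, ?_⟩
      have ha : p - 1 - (q.val.1 - (k + 1)) < p := by omega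
      have hb : p - 1 - (q.val.1 - (k' + 1)) < p := by omega
      have hle := hss ⟨_, ha⟩ ⟨_, hb⟩ (by simp; omega)
      rw [ext_eval α' hb]
      rw [ext_eval α ha] at h3
      omega


lemma part3 (hp : 1 ≤ p) (hpn : p < n) (S : Set (Qt p n)) (hS : S.Finite)
    (hIdeal : ∀ a ∈ S, ∀ b, qleT p n b a → b ∈ S) :
    ∃ (α : Fin p → Fin n) (k : ℕ), StrictMono α ∧ phiSS p n α k = S := by
  classical
  set F := hS.toFinset with hF
  set M := F.sup (fun q => q.val.1) with hM
  set c : ℕ → ℕ := fun i => F.sup (fun q => if q.val.1 = i then q.val.2 else 0) with hc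
  have hmemF : ∀ q : Qt p n, q ∈ F ↔ q ∈ S := fun q => hS.mem_toFinset
  have hle_M : ∀ q ∈ S, q.val.1 ≤ M := by
    intro q hq
    exact Finset.le_sup (f := fun q : Qt p n => q.val.1) ((hmemF q).mpr hq)
  have hle_c : ∀ q ∈ S, q.val.2 ≤ c q.val.1 := by
    intro q hq
    have := Finset.le_sup (f := fun r : Qt p n => if r.val.1 = q.val.1 then r.val.2 else 0)
      ((hmemF q).mpr hq)
    simpa [hc] using this
  have hwit : ∀ i, c i ≠ 0 → ∃ q ∈ S, q.val.1 = i ∧ q.val.2 = c i := by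
    intro i hne
    have hFne : F.Nonempty := by
      by_contra h
      rw [Finset.not_nonempty_iff_eq_empty] at h
      rw [hc, h] at hne
      simp at hne
    obtain ⟨q, hqF, hq⟩ := Finset.exists_mem_eq_sup F hFne
      (fun r : Qt p n => if r.val.1 = i then r.val.2 else 0)
    simp only [hc] at hne ⊢
    by_cases h1 : q.val.1 = i
    · exact ⟨q, (hmemF q).mp hqF, h1, by rw [hq, if_pos h1]⟩
    · rw [hq, if_neg h1] at hne
      exact absurd rfl hne
  have hMwit : 1 ≤ M → ∃ q ∈ S, q.val.1 = M := by
    intro h1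
    have hFne : F.Nonempty := by
      by_contra h
      rw [Finset.not_nonempty_iff_eq_empty] at h
      rw [hM, h] at h1
      simp at h1
    obtain ⟨q, hqF, hq⟩ := Finset.exists_mem_eq_sup F hFne (fun q : Qt p n => q.val.1)
    exact ⟨q, (hmemF q).mp hqF, hq.symm⟩
  have hcol : ∀ i, 1 ≤ i → i ≤ M → c i ≠ 0 := by
    intro i h1 h2
    obtain ⟨qM, hqM, hqM1⟩ := hMwit (by omega)
    obtain ⟨m1, m2, m3, m4⟩ := qM.2
    have hb : mk' i (max i (p + 1)) (by omega) ∈ S := by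
      apply hIdeal qM hqM
      unfold qleT qleN mk'
      left
      dsimp only
      omega
    have := hle_c _ hb
    simp only [mk'] at this
    omega
  have hczero : ∀ i, M < i → c i = 0 := by
    intro i hi
    rw [hc]
    rw [← Nat.le_zero]
    apply Finset.sup_le
    intro q hqF
    have := hle_M q ((hmemF q).mp hqF)
    rw [if_neg (by omega)]
  have hcbound : ∀ i, c i ≠ 0 → p + 1 ≤ c i ∧ i ≤ c i ∧ c i + 1 ≤ i + n ∧ 1 ≤ i ∧ i ≤ M := by
    intro i h
    obtain ⟨q, hq, h1, h2⟩ := hwit i h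
    have hb := q.2
    have := hle_M q hq
    rw [h1, h2] at hb
    omega
  set k := M - p with hk
  have hnotfull : ∀ t, 1 ≤ t → c (k + 1 + t) ≠ 0 → c (k + 1 + t) + 2 ≤ k + 1 + t + n := by
    intro t ht hne
    by_contra hfull
    push_neg at hfull
    obtain ⟨q, hq, h1, h2⟩ := hwit _ hne
    have hb := q.2
    rw [h1, h2] at hb
    have hbS : mk' (k + p + t) (k + p + t) (by omega) ∈ S := by
      apply hIdeal q hq
      unfold qleT qleN mk'
      right; right
      dsimp only
      omega
    have := hle_M _ hbS
    simp only [mk'] at this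
    omega
  set β : ℕ → ℕ := fun t => if c (k + 1 + t) ≠ 0 then c (k + 1 + t) - (k + 1 + t) else p - 1 - t
    with hβ
  have hstep : ∀ t, t + 1 < p → β (t + 1) < β t := by
    intro t ht
    by_cases h1 : c (k + 1 + t) ≠ 0
    · by_cases h2 : c (k + 1 + (t + 1)) ≠ 0
      · have hb1 := hcbound _ h1
        have hb2 := hcbound _ h2
        have hnf := hnotfull (t + 1) (by omega) h2
        have hbS : mk' (k + 1 + t) (c (k + 1 + (t + 1))) (by omega) ∈ S := by
          obtain ⟨q, hq, e1, e2⟩ := hwit _ h2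
          apply hIdeal q hq
          unfold qleT qleN mk'
          left
          dsimp only
          omega
        have hle := hle_c _ hbS
        simp only [mk'] at hle
        simp only [hβ]
        rw [if_pos h1, if_pos h2]
        omega
      · have hb1 := hcbound _ h1
        have hgt : M < k + 1 + (t + 1) := by
          by_contra hle'
          push_neg at hle'
          exact h2 (hcol _ (by omega) hle')
        simp only [hβ]
        rw [if_pos h1, if_neg h2]
        omega
    · have hgt : M < k + 1 + t := by
        by_contra hle'
        push_neg at hle'
        exact h1 (hcol _ (by omega) hle')
      have h2 : ¬ c (k + 1 + (t + 1)) ≠ 0 := by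
        simp only [ne_eq, not_not]
        exact hczero _ (by omega)
      simp only [hβ]
      rw [if_neg h1, if_neg h2]
      omega
  have hdec : ∀ d t, t + d < p → β (t + d) + d ≤ β t := by
    intro d
    induction d with
    | zero => intro t ht; simp
    | succ d ih =>
      intro t ht
      have h1 := ih t (by omega)
      have h2 := hstep (t + d) (by omega)
      have h3 : t + (d + 1) = t + d + 1 := by omega
      rw [h3]
      omega
  have hβub : ∀ t, t < p → β t < n := by
    intro t ht
    by_cases h1 : c (k + 1 + t) ≠ 0
    · have hb1 := hcbound _ h1
      simp only [hβ]
      rw [if_pos h1]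
      omega
    · simp only [hβ]
      rw [if_neg h1]
      omega
  refine ⟨fun s => ⟨β (p - 1 - (s : ℕ)), hβub _ (by have := s.isLt; omega)⟩, k, ?_, ?_⟩
  · intro s s' hss
    have hs := s.isLt
    have hs' := s'.isLt
    have hss' := Fin.lt_def.mp hss
    rw [Fin.lt_def]
    have := hdec ((s' : ℕ) - (s : ℕ)) (p - 1 - (s' : ℕ)) (by omega)
    have heq : p - 1 - (s' : ℕ) + ((s' : ℕ) - (s : ℕ)) = p - 1 - (s : ℕ) := by omega
    rw [heq] at this
    simpa using (by omega : β (p - 1 - (s : ℕ)) < β (p - 1 - (s' : ℕ)))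
  · have hext : ∀ t, t < p →
        ext p n (fun s => ⟨β (p - 1 - (s : ℕ)), hβub _ (by have := s.isLt; omega)⟩) (p - 1 - t)
          = β t := by
      intro t ht
      rw [ext_eval _ (show p - 1 - t < p by omega)]
      have : p - 1 - (p - 1 - t) = t := by omega
      simp only [this]
    ext q
    rw [mem_phiSS_iff]
    obtain ⟨hq1, hq2, hq3, hq4⟩ := q.2
    constructor
    · rintro (h | ⟨h1, h2, h3⟩)
      · have hk1 : 1 ≤ k := by omega
        obtain ⟨w, hw, hw1⟩ := hMwit (by omega)
        apply hIdeal w hw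
        unfold qleT qleN
        right; left
        omega
      · have ht : q.val.1 - (k + 1) < p := by omega
        rw [hext _ ht] at h3
        by_cases hne : c (k + 1 + (q.val.1 - (k + 1))) ≠ 0
        · obtain ⟨w, hw, e1, e2⟩ := hwit _ hne
          apply hIdeal w hw
          unfold qleT qleN
          left
          constructor
          · omega
          · simp only [hβ] at h3
            rw [if_pos hne] at h3
            have hb := hcbound _ hne
            omega
        · exfalso
          have hgt : M < k + 1 + (q.val.1 - (k + 1)) := by
            by_contra hle'
            push_neg at hle'
            exact hne (hcol _ (by omega) hle')
          simp only [hβ] at h3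
          rw [if_neg hne] at h3
          omega
    · intro hq
      have hqM := hle_M q hq
      have hqc := hle_c q hq
      by_cases hik : q.val.1 ≤ k
      · exact Or.inl hik
      · push_neg at hik
        right
        have ht : q.val.1 - (k + 1) < p := by omega
        refine ⟨hik, by omega, ?_⟩
        rw [hext _ ht]
        have hne : c (k + 1 + (q.val.1 - (k + 1))) ≠ 0 := by
          have : k + 1 + (q.val.1 - (k + 1)) = q.val.1 := by omega
          rw [this]
          omega
        have hb := hcbound _ hne
        simp only [hβ]
        rw [if_pos hne]
        have : k + 1 + (q.val.1 - (k + 1)) = q.val.1 := by omega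
        rw [this] at hb ⊢
        omega

end S13


/-- The map `φ_ss` is an isomorphism of posets from `(Ĩ_ss, ⪯_ss)`
onto the set `𝒥(Q̃)` of finite order ideals of `(Q̃,≺)` ordered by inclusion. -/
theorem statement13 (p n : ℕ) (hp : 1 ≤ p) (hpn : p < n) :
    (∀ (α : Fin p → Fin n) (k : ℕ), StrictMono α →
        (phiSS p n α k).Finite ∧
          (∀ a ∈ phiSS p n α k, ∀ b, qleT p n b a → b ∈ phiSS p n α k)) ∧
      (∀ (α α' : Fin p → Fin n) (k k' : ℕ), StrictMono α → StrictMono α' →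
        phiSS p n α k = phiSS p n α' k' → α = α' ∧ k = k') ∧
      (∀ S : Set (Qt p n), S.Finite → (∀ a ∈ S, ∀ b, qleT p n b a → b ∈ S) →
        ∃ (α : Fin p → Fin n) (k : ℕ), StrictMono α ∧ phiSS p n α k = S) ∧
      (∀ (α α' : Fin p → Fin n) (k k' : ℕ), StrictMono α → StrictMono α' →
        (ssLe p n α k α' k' ↔ phiSS p n α k ⊆ phiSS p n α' k')) := by
  refine ⟨fun α k hα => S13.part1 hp hpn α k hα, ?_, S13.part3 hp hpn, ?_⟩
  · intro α α' k k' hα hα' heq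
    have hk1 := S13.k_le_k hp hpn α α' k k' heq.subset
    have hk2 := S13.k_le_k hp hpn α' α k' k heq.symm.subset
    have hkk : k = k' := le_antisymm hk1 hk2
    subst hkk
    refine ⟨funext fun a => Fin.ext (le_antisymm ?_ ?_), rfl⟩
    · exact S13.ss_of_subset hp hpn hα hα' heq.subset le_rfl a a rfl
    · exact S13.ss_of_subset hp hpn hα' hα heq.symm.subset le_rfl a a rfl
  · intro α α' k k' hα hα'
    constructor
    · rintro ⟨hk, hss⟩
      exact S13.subset_of_ss hp hpn hα hα' hk hss
    · intro hsub
      have hk := S13.k_le_k hp hpn α α' k k' hsub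
      exact ⟨hk, S13.ss_of_subset hp hpn hα hα' hsub hk⟩
end
end
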